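/- arXiv:1408.5122 — 6 statements merged into one kernel-verified Lean document; each statement's English description precedes it below -/
import Mathlib

section
/- Let (S^n, q^n) be a sequence of finite sets with nonnegative voting rates such that |S^n| → ∞ and sup_n qmax^n < ∞, and suppose there is a constant C such that for each n there exists a stationary distribution π^n for (S^n, q^n) with (max_x π^n(x))/(min_x π^n(x)) ≤ C. Let 𝟏 denote the all-ones configuration. Then lim_{α→∞} liminf_{n→∞} ‖μ^{n,𝟏}_{(1/2)log|S^n| − α} − μ^n_∞‖_TV = 1. -/
open scoped BigOperators

/-- The generator of a spin system on `{0,1}^V` given flip rates `r η x`. -/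
noncomputable def genOfRate {V : Type} [Fintype V] [DecidableEq V]
    (r : (V → Bool) → V → ℝ) : Matrix (V → Bool) (V → Bool) ℝ :=
  fun η ξ =>
    (∑ x, if ξ = Function.update η x (!η x) then r η x else 0)
      - (if ξ = η then ∑ x, r η x else 0)

/-- Flip rate of the noisy voter model with voting rates `q`. -/
noncomputable def voterRate {V : Type} [Fintype V] [DecidableEq V]
    (q : V → V → ℝ) (η : V → Bool) (x : V) : ℝ :=
  1 / 2 + ∑ y ∈ Finset.univ.filter (fun y => y ≠ x), q x y * (if η y ≠ η x then 1 else 0)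

/-- Generator of the noisy voter model. -/
noncomputable def voterGen {V : Type} [Fintype V] [DecidableEq V]
    (q : V → V → ℝ) : Matrix (V → Bool) (V → Bool) ℝ :=
  genOfRate (voterRate q)

/-- Transition semigroup `P^t = exp (t Q)` of the noisy voter model. -/
noncomputable def voterP {V : Type} [Fintype V] [DecidableEq V]
    (q : V → V → ℝ) (t : ℝ) : Matrix (V → Bool) (V → Bool) ℝ :=
  NormedSpace.exp (t • voterGen q)

/-- Total variation distance between two vectors on a finite set. -/
noncomputable def tvDist {Ω : Type} [Fintype Ω] (m1 m2 : Ω → ℝ) : ℝ :=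
  (1 / 2) * ∑ s, |m1 s - m2 s|

/-- `π` is a stationary distribution for the continuous-time Markov chain `(S, q)`. -/
def IsStationaryChain {V : Type} [Fintype V] [DecidableEq V]
    (q : V → V → ℝ) (π : V → ℝ) : Prop :=
  (∀ x, 0 ≤ π x) ∧ (∑ x, π x = 1) ∧
    ∀ y, ∑ x ∈ Finset.univ.filter (fun x => x ≠ y), π x * q x y
        = π y * ∑ z ∈ Finset.univ.filter (fun z => z ≠ y), q y z

/-- `μ` is a stationary distribution for the noisy voter model with rates `q`. -/
def IsStationaryNVM {V : Type} [Fintype V] [DecidableEq V]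
    (q : V → V → ℝ) (μ : (V → Bool) → ℝ) : Prop :=
  (∀ η, 0 ≤ μ η) ∧ (∑ η, μ η = 1) ∧ ∀ ξ, ∑ η, μ η * voterGen q η ξ = 0

section Comb
variable {V : Type} [Fintype V] [DecidableEq V]

def bsgn (b : Bool) : ℝ := if b then 1 else -1

noncomputable def Wfun (π : V → ℝ) (η : V → Bool) : ℝ := ∑ x, π x * bsgn (η x)

lemma bsgn_sq (b : Bool) : bsgn b * bsgn b = 1 := by cases b <;> simp [bsgn]

lemma bsgn_not (b : Bool) : bsgn (!b) = - bsgn b := by cases b <;> simp [bsgn]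

lemma ind_eq (a b : Bool) : (if (a ≠ b) then (1:ℝ) else 0) = (1 - bsgn a * bsgn b)/2 := by
  cases a <;> cases b <;> norm_num [bsgn]

lemma genOfRate_mulVec (r : (V → Bool) → V → ℝ) (f : (V → Bool) → ℝ) (η : V → Bool) :
    (genOfRate r).mulVec f η = ∑ x, r η x * (f (Function.update η x (!η x)) - f η) := by
  unfold genOfRate Matrix.mulVec dotProduct
  simp only [sub_mul, ite_mul, zero_mul, Finset.sum_sub_distrib, Finset.sum_mul]
  rw [Finset.sum_comm]
  simp only [Finset.sum_ite_eq', Finset.mem_univ, if_true]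
  simp [mul_sub, Finset.sum_sub_distrib]

lemma voterRate_eq (q : V → V → ℝ) (hqdiag : ∀ x, q x x = 0) (η : V → Bool) (x : V) :
    voterRate q η x = 1/2 + ∑ y, q x y * ((1 - bsgn (η x) * bsgn (η y))/2) := by
  unfold voterRate
  congr 1
  rw [Finset.sum_filter]
  refine Finset.sum_congr rfl fun y _ => ?_
  by_cases h : y = x
  · subst h; simp [hqdiag, bsgn_sq]
  · simp only [h, if_true, ne_eq, not_false_iff]
    rw [ind_eq]
    ring

lemma voterRate_nonneg (q : V → V → ℝ) (hq : ∀ x y, 0 ≤ q x y) (η : V → Bool) (x : V) :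
    0 ≤ voterRate q η x := by
  unfold voterRate
  have : (0:ℝ) ≤ ∑ y ∈ Finset.univ.filter (fun y => y ≠ x), q x y * (if η y ≠ η x then 1 else 0) :=
    Finset.sum_nonneg fun y _ => mul_nonneg (hq x y) (by positivity)
  linarith

lemma voterRate_le (q : V → V → ℝ) (hq : ∀ x y, 0 ≤ q x y) (M : ℝ)
    (hM : ∀ x, ∑ y ∈ Finset.univ.filter (fun y => y ≠ x), q x y ≤ M) (η : V → Bool) (x : V) :
    voterRate q η x ≤ 1/2 + M := by
  unfold voterRate
  have : ∑ y ∈ Finset.univ.filter (fun y => y ≠ x), q x y * (if η y ≠ η x then 1 else 0)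
      ≤ ∑ y ∈ Finset.univ.filter (fun y => y ≠ x), q x y := by
    refine Finset.sum_le_sum fun y _ => ?_
    by_cases h : η y ≠ η x <;> simp [h, hq x y]
  linarith [hM x]

end Comb

section Comb2
variable {V : Type} [Fintype V] [DecidableEq V]

lemma stationary_full (q : V → V → ℝ) (π : V → ℝ) (hqdiag : ∀ x, q x x = 0)
    (hst : ∀ y, ∑ x ∈ Finset.univ.filter (fun x => x ≠ y), π x * q x y
        = π y * ∑ z ∈ Finset.univ.filter (fun z => z ≠ y), q y z) (y : V) :
    ∑ x, π x * q x y = π y * ∑ z, q y z := by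
  have h1 : ∑ x, π x * q x y = ∑ x ∈ Finset.univ.filter (fun x => x ≠ y), π x * q x y := by
    rw [Finset.sum_filter]
    refine Finset.sum_congr rfl fun x _ => ?_
    by_cases h : x = y
    · subst h; simp [hqdiag]
    · simp [h]
  have h2 : ∑ z, q y z = ∑ z ∈ Finset.univ.filter (fun z => z ≠ y), q y z := by
    rw [Finset.sum_filter]
    refine Finset.sum_congr rfl fun z _ => ?_
    by_cases h : z = y
    · subst h; simp [hqdiag]
    · simp [h]
  rw [h1, h2, hst y]

lemma sum_rate_W (q : V → V → ℝ) (π : V → ℝ) (hqdiag : ∀ x, q x x = 0)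
    (hstf : ∀ y, ∑ x, π x * q x y = π y * ∑ z, q y z) (η : V → Bool) :
    ∑ x, voterRate q η x * (π x * bsgn (η x)) = Wfun π η / 2 := by
  have key : ∀ x y, q x y * ((1 - bsgn (η x) * bsgn (η y))/2) * (π x * bsgn (η x))
      = (π x * q x y * bsgn (η x) - π x * q x y * bsgn (η y))/2 := by
    intro x y
    have h := bsgn_sq (η x)
    linear_combination (-(π x * q x y * bsgn (η y))/2) * h
  calc ∑ x, voterRate q η x * (π x * bsgn (η x))
      = ∑ x, ((π x * bsgn (η x))/2
          + ∑ y, (π x * q x y * bsgn (η x) - π x * q x y * bsgn (η y))/2) := by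
        refine Finset.sum_congr rfl fun x _ => ?_
        rw [voterRate_eq q hqdiag, add_mul, Finset.sum_mul]
        congr 1
        · ring
        · exact Finset.sum_congr rfl fun y _ => key x y
    _ = Wfun π η / 2 := by
        rw [Finset.sum_add_distrib]
        have hA : ∑ x, ∑ y, (π x * q x y * bsgn (η x) - π x * q x y * bsgn (η y))/2 = 0 := by
          simp only [sub_div, Finset.sum_sub_distrib]
          have hB : ∑ x : V, ∑ y : V, π x * q x y * bsgn (η y) / 2
              = ∑ x : V, ∑ y : V, π x * q x y * bsgn (η x) / 2 := by
            rw [Finset.sum_comm]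
            refine Finset.sum_congr rfl fun y _ => ?_
            have : ∑ x : V, π x * q x y * bsgn (η y) / 2
                = (∑ x : V, π x * q x y) * bsgn (η y) / 2 := by
              rw [Finset.sum_mul, Finset.sum_div]
            rw [this, hstf y, Finset.mul_sum, Finset.sum_mul, Finset.sum_div]
          rw [hB, sub_self]
        rw [hA, add_zero, Wfun, Finset.sum_div]

lemma Wfun_update (π : V → ℝ) (η : V → Bool) (x : V) :
    Wfun π (Function.update η x (!η x)) = Wfun π η - 2 * π x * bsgn (η x) := by
  unfold Wfun
  have h : ∀ y, π y * bsgn (Function.update η x (!η x) y)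
      = π y * bsgn (η y) - (if y = x then 2 * π x * bsgn (η x) else 0) := by
    intro y; by_cases h : y = x
    · subst h; rw [Function.update_self, bsgn_not, if_pos rfl]; ring
    · simp [Function.update_of_ne h, h]
  rw [Finset.sum_congr rfl fun y _ => h y, Finset.sum_sub_distrib]
  simp

lemma voterGen_mulVec_W (q : V → V → ℝ) (π : V → ℝ) (hqdiag : ∀ x, q x x = 0)
    (hstf : ∀ y, ∑ x, π x * q x y = π y * ∑ z, q y z) :
    (voterGen q).mulVec (Wfun π) = fun η => -(Wfun π η) := by
  funext η
  rw [voterGen, genOfRate_mulVec]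
  have : ∀ x : V, voterRate q η x * (Wfun π (Function.update η x (!η x)) - Wfun π η)
      = (-2) * (voterRate q η x * (π x * bsgn (η x))) := by
    intro x; rw [Wfun_update]; ring
  rw [Finset.sum_congr rfl fun x _ => this x, ← Finset.mul_sum, sum_rate_W q π hqdiag hstf]
  ring

lemma voterGen_mulVec_one (q : V → V → ℝ) :
    (voterGen q).mulVec (fun _ => (1:ℝ)) = 0 := by
  funext η
  rw [voterGen, genOfRate_mulVec]
  simp

lemma voterGen_mulVec_Wsq (q : V → V → ℝ) (π : V → ℝ) (hqdiag : ∀ x, q x x = 0)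
    (hstf : ∀ y, ∑ x, π x * q x y = π y * ∑ z, q y z) (η : V → Bool) :
    (voterGen q).mulVec (fun ξ => (Wfun π ξ)^2) η
      = -2 * (Wfun π η)^2 + 4 * ∑ x, (π x)^2 * voterRate q η x := by
  rw [voterGen, genOfRate_mulVec]
  have : ∀ x : V, voterRate q η x * ((Wfun π (Function.update η x (!η x)))^2 - (Wfun π η)^2)
      = (-4 * Wfun π η) * (voterRate q η x * (π x * bsgn (η x)))
        + 4 * ((π x)^2 * voterRate q η x) := by
    intro x
    rw [Wfun_update]
    have h := bsgn_sq (η x)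
    linear_combination (4 * voterRate q η x * (π x)^2) * h
  rw [Finset.sum_congr rfl fun x _ => this x, Finset.sum_add_distrib, ← Finset.mul_sum,
    ← Finset.mul_sum, sum_rate_W q π hqdiag hstf]
  ring

end Comb2

section Exp
variable {ι : Type} [Fintype ι] [DecidableEq ι]

/-- mulVec against a fixed vector, as a linear map in the matrix. -/
noncomputable def mulVecLM (f : ι → ℝ) : Matrix ι ι ℝ →ₗ[ℝ] (ι → ℝ) where
  toFun := fun M => M.mulVec f
  map_add' := fun M N => Matrix.add_mulVec M N f
  map_smul' := fun a M => Matrix.smul_mulVec a M f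

lemma exp_mulVec_eigen (A : Matrix ι ι ℝ) (f : ι → ℝ) (c : ℝ)
    (h : A.mulVec f = c • f) :
    (NormedSpace.exp A).mulVec f = Real.exp c • f := by
  letI : SeminormedRing (Matrix ι ι ℝ) := Matrix.linftyOpSemiNormedRing
  letI : NormedRing (Matrix ι ι ℝ) := Matrix.linftyOpNormedRing
  letI : NormedAlgebra ℝ (Matrix ι ι ℝ) := Matrix.linftyOpNormedAlgebra
  have hpow : ∀ n : ℕ, (A ^ n).mulVec f = (c ^ n) • f := by
    intro n
    induction n with
    | zero => simp [Matrix.one_mulVec]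
    | succ n ih =>
      rw [pow_succ, ← Matrix.mulVec_mulVec, h, Matrix.mulVec_smul, ih, pow_succ,
        smul_smul, mul_comm]
  let L : Matrix ι ι ℝ →L[ℝ] (ι → ℝ) := LinearMap.toContinuousLinearMap (mulVecLM f)
  have hLdef : ∀ M : Matrix ι ι ℝ, L M = M.mulVec f := fun M => rfl
  have hexp : NormedSpace.exp A = ∑' n : ℕ, (((n.factorial : ℝ))⁻¹) • A ^ n := by
    rw [NormedSpace.exp_eq_tsum (𝕂 := ℝ)]
  have hsum : Summable (fun n : ℕ => (((n.factorial : ℝ))⁻¹) • A ^ n) :=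
    NormedSpace.expSeries_summable' (𝕂 := ℝ) A
  have key : (NormedSpace.exp A).mulVec f = ∑' n : ℕ, (((n.factorial : ℝ))⁻¹ * c ^ n) • f := by
    rw [← hLdef, hexp, L.map_tsum hsum]
    congr 1
    funext n
    rw [hLdef ((((n.factorial : ℝ))⁻¹) • A ^ n), Matrix.smul_mulVec, hpow, smul_smul]
  rw [key]
  have hsum2 : Summable (fun n : ℕ => ((n.factorial : ℝ))⁻¹ * c ^ n) := by
    have := NormedSpace.expSeries_summable' (𝕂 := ℝ) (𝔸 := ℝ) c
    simpa [smul_eq_mul] using this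
  rw [Summable.tsum_smul_const hsum2]
  congr 1
  have : Real.exp c = NormedSpace.exp c := by rw [Real.exp_eq_exp_ℝ]
  rw [this, NormedSpace.exp_eq_tsum (𝕂 := ℝ)]
  simp [smul_eq_mul]

/-- Entrywise nonnegativity of the exponential of an entrywise-nonnegative matrix. -/
lemma exp_entry_nonneg (A : Matrix ι ι ℝ) (h : ∀ i j, 0 ≤ A i j) (i j : ι) :
    0 ≤ NormedSpace.exp A i j := by
  letI : SeminormedRing (Matrix ι ι ℝ) := Matrix.linftyOpSemiNormedRing
  letI : NormedRing (Matrix ι ι ℝ) := Matrix.linftyOpNormedRing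
  letI : NormedAlgebra ℝ (Matrix ι ι ℝ) := Matrix.linftyOpNormedAlgebra
  have hpow : ∀ n : ℕ, ∀ i j, 0 ≤ (A ^ n) i j := by
    intro n
    induction n with
    | zero => intro i j; rw [pow_zero]; by_cases hij : i = j <;> simp [Matrix.one_apply, hij]
    | succ n ih =>
      intro i j
      rw [pow_succ, Matrix.mul_apply]
      exact Finset.sum_nonneg fun k _ => mul_nonneg (ih i k) (h k j)
  let E : Matrix ι ι ℝ →ₗ[ℝ] ℝ :=
    { toFun := fun M => M i j
      map_add' := fun M N => rfl
      map_smul' := fun a M => rfl }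
  let L : Matrix ι ι ℝ →L[ℝ] ℝ := LinearMap.toContinuousLinearMap E
  have hLdef : ∀ M : Matrix ι ι ℝ, L M = M i j := fun M => rfl
  have hsum : Summable (fun n : ℕ => ((n.factorial : ℝ))⁻¹ • A ^ n) :=
    NormedSpace.expSeries_summable' (𝕂 := ℝ) A
  have hexp : NormedSpace.exp A = ∑' n : ℕ, ((n.factorial : ℝ))⁻¹ • A ^ n := by
    rw [NormedSpace.exp_eq_tsum (𝕂 := ℝ)]
  have key : NormedSpace.exp A i j = ∑' n : ℕ, ((n.factorial : ℝ))⁻¹ * (A ^ n) i j := by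
    show L (NormedSpace.exp A) = _
    rw [hexp, L.map_tsum hsum]
    congr 1
  rw [key]
  exact tsum_nonneg fun n => mul_nonneg (by positivity) (hpow n i j)

/-- Entrywise nonnegativity of `exp A` when the off-diagonal entries of `A` are nonnegative. -/
lemma exp_entry_nonneg_of_offdiag (A : Matrix ι ι ℝ) (h : ∀ i j, i ≠ j → 0 ≤ A i j) (i j : ι) :
    0 ≤ NormedSpace.exp A i j := by
  set c : ℝ := ∑ k, |A k k| with hc
  have hcabs : ∀ k, |A k k| ≤ c :=
    fun k => Finset.single_le_sum (f := fun k => |A k k|) (fun k _ => abs_nonneg _)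
      (Finset.mem_univ k)
  set B : Matrix ι ι ℝ := A + c • (1 : Matrix ι ι ℝ) with hB
  have hBnn : ∀ i j, 0 ≤ B i j := by
    intro i j
    by_cases hij : i = j
    · subst hij
      have : B i i = A i i + c := by simp [hB, Matrix.one_apply]
      rw [this]
      have := hcabs i
      have := neg_abs_le (A i i)
      linarith
    · have : B i j = A i j := by simp [hB, Matrix.one_apply, hij]
      rw [this]
      exact h i j hij
  have hA : A = (-c) • (1 : Matrix ι ι ℝ) + B := by
    rw [hB, neg_smul]; abel
  have hcomm : Commute ((-c) • (1 : Matrix ι ι ℝ)) B := (Commute.one_left B).smul_left (-c)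
  have hsplit : NormedSpace.exp A
      = NormedSpace.exp ((-c) • (1 : Matrix ι ι ℝ)) * NormedSpace.exp B := by
    rw [hA]
    exact Matrix.exp_add_of_commute _ _ hcomm
  have hscal : NormedSpace.exp ((-c) • (1 : Matrix ι ι ℝ))
      = Real.exp (-c) • (1 : Matrix ι ι ℝ) := by
    letI : SeminormedRing (Matrix ι ι ℝ) := Matrix.linftyOpSemiNormedRing
    letI : NormedRing (Matrix ι ι ℝ) := Matrix.linftyOpNormedRing
    letI : NormedAlgebra ℝ (Matrix ι ι ℝ) := Matrix.linftyOpNormedAlgebra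
    have h1 : (-c) • (1 : Matrix ι ι ℝ) = algebraMap ℝ (Matrix ι ι ℝ) (-c) :=
      (Algebra.algebraMap_eq_smul_one (-c)).symm
    rw [h1]
    erw [← NormedSpace.algebraMap_exp_comm (𝕂 := ℝ) (𝔸 := Matrix ι ι ℝ)]
    rw [Real.exp_eq_exp_ℝ,
      Algebra.algebraMap_eq_smul_one]
  rw [hsplit, hscal, Matrix.smul_mul, Matrix.one_mul, Matrix.smul_apply]
  exact mul_nonneg (Real.exp_nonneg _) (exp_entry_nonneg B hBnn i j)

/-- Derivative in `t` of `(exp (t • A) *ᵥ F) i`. -/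
lemma hasDerivAt_exp_mulVec (A : Matrix ι ι ℝ) (F : ι → ℝ) (i : ι) (t : ℝ) :
    HasDerivAt (fun s : ℝ => ((NormedSpace.exp (s • A)).mulVec F) i)
      (((NormedSpace.exp (t • A)).mulVec (A.mulVec F)) i) t := by
  letI : SeminormedRing (Matrix ι ι ℝ) := Matrix.linftyOpSemiNormedRing
  letI : NormedRing (Matrix ι ι ℝ) := Matrix.linftyOpNormedRing
  letI : NormedAlgebra ℝ (Matrix ι ι ℝ) := Matrix.linftyOpNormedAlgebra
  have hd : HasDerivAt (fun u : ℝ => NormedSpace.exp (u • A))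
      (NormedSpace.exp (t • A) * A) t := hasDerivAt_exp_smul_const A t
  let E : Matrix ι ι ℝ →ₗ[ℝ] ℝ :=
    { toFun := fun M => (M.mulVec F) i
      map_add' := fun M N => by
        change ((M + N).mulVec F) i = (M.mulVec F) i + (N.mulVec F) i
        rw [Matrix.add_mulVec]; rfl
      map_smul' := fun a M => by
        change ((a • M).mulVec F) i = a • ((M.mulVec F) i)
        rw [Matrix.smul_mulVec]; rfl }
  let L : Matrix ι ι ℝ →L[ℝ] ℝ := LinearMap.toContinuousLinearMap E
  have := L.hasFDerivAt.comp_hasDerivAt t hd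
  have heq : L (NormedSpace.exp (t • A) * A)
      = ((NormedSpace.exp (t • A)).mulVec (A.mulVec F)) i := by
    show (((NormedSpace.exp (t • A)) * A).mulVec F) i = _
    rw [← Matrix.mulVec_mulVec]
  erw [heq] at this
  exact this

end Exp



section Helpers
variable {Ω : Type} [Fintype Ω] [DecidableEq Ω]

lemma tv_lower (m1 m2 : Ω → ℝ) (h : ∑ s, m1 s = ∑ s, m2 s) (A : Finset Ω) :
    (∑ s ∈ A, m1 s) - (∑ s ∈ A, m2 s) ≤ tvDist m1 m2 := by
  have hsplit : ∑ s ∈ A, (m1 s - m2 s) + ∑ s ∈ Aᶜ, (m1 s - m2 s) = 0 := by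
    rw [Finset.sum_add_sum_compl, Finset.sum_sub_distrib, h, sub_self]
  have h1 : ∑ s ∈ A, (m1 s - m2 s) ≤ ∑ s ∈ A, |m1 s - m2 s| :=
    Finset.sum_le_sum fun s _ => le_abs_self _
  have h2 : -∑ s ∈ Aᶜ, (m1 s - m2 s) ≤ ∑ s ∈ Aᶜ, |m1 s - m2 s| := by
    rw [← Finset.sum_neg_distrib]
    exact Finset.sum_le_sum fun s _ => neg_le_abs _
  have h3 : (∑ s ∈ A, |m1 s - m2 s|) + ∑ s ∈ Aᶜ, |m1 s - m2 s| = ∑ s, |m1 s - m2 s| :=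
    Finset.sum_add_sum_compl A _
  have h4 : ∑ s ∈ A, (m1 s - m2 s) = (∑ s ∈ A, m1 s) - ∑ s ∈ A, m2 s :=
    Finset.sum_sub_distrib _ _
  unfold tvDist
  linarith
lemma tv_le_one (m1 m2 : Ω → ℝ) (h1 : ∀ s, 0 ≤ m1 s) (h2 : ∀ s, 0 ≤ m2 s)
    (hs1 : ∑ s, m1 s = 1) (hs2 : ∑ s, m2 s = 1) : tvDist m1 m2 ≤ 1 := by
  unfold tvDist
  have : ∑ s, |m1 s - m2 s| ≤ ∑ s, (m1 s + m2 s) := by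
    refine Finset.sum_le_sum fun s _ => ?_
    have := abs_sub (m1 s) (m2 s)
    rw [abs_of_nonneg (h1 s), abs_of_nonneg (h2 s)] at *
    exact abs_sub_le_iff.mpr ⟨by linarith [h2 s], by linarith [h1 s]⟩
  rw [Finset.sum_add_distrib, hs1, hs2] at this
  linarith
end Helpers

lemma ode_bound (g gder : ℝ → ℝ) (T K : ℝ) (hT : 0 ≤ T) (hK : 0 ≤ K)
    (hg : ∀ t ∈ Set.Icc (0:ℝ) T, HasDerivAt g (gder t) t)
    (hle : ∀ t ∈ Set.Icc (0:ℝ) T, gder t ≤ -2 * g t + K) :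
    g T ≤ Real.exp (-(2*T)) * g 0 + K/2 := by
  set ψ : ℝ → ℝ := fun t => (K/2) * Real.exp (2*t) - Real.exp (2*t) * g t with hψdef
  have he : ∀ t : ℝ, HasDerivAt (fun t => Real.exp (2*t)) (2 * Real.exp (2*t)) t := by
    intro t
    have h2t : HasDerivAt (fun t : ℝ => 2*t) 2 t := by
      simpa using (hasDerivAt_id t).const_mul (2:ℝ)
    simpa [mul_comm] using h2t.exp
  have hψd : ∀ t ∈ Set.Icc (0:ℝ) T, HasDerivAt ψ
      ((K/2) * (2 * Real.exp (2*t)) - (2 * Real.exp (2*t) * g t + Real.exp (2*t) * gder t)) t := by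
    intro t ht
    exact ((he t).const_mul (K/2)).sub ((he t).mul (hg t ht))
  have hmono : MonotoneOn ψ (Set.Icc 0 T) := by
    refine monotoneOn_of_hasDerivWithinAt_nonneg (convex_Icc 0 T)
      (fun t ht => ((hψd t ht).continuousAt.continuousWithinAt))
      (fun t ht => ((hψd t (interior_subset ht)).hasDerivWithinAt)) ?_
    intro t ht
    have ht' : t ∈ Set.Icc (0:ℝ) T := interior_subset ht
    have h1 := hle t ht'
    have h2 : (0:ℝ) < Real.exp (2*t) := Real.exp_pos _
    nlinarith
  have hend : ψ 0 ≤ ψ T := hmono (Set.left_mem_Icc.mpr hT) (Set.right_mem_Icc.mpr hT) hT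
  have hE : (0:ℝ) < Real.exp (2*T) := Real.exp_pos _
  have hE1 : (1:ℝ) ≤ Real.exp (2*T) := Real.one_le_exp (by linarith)
  have hinv : Real.exp (-(2*T)) * Real.exp (2*T) = 1 := by
    rw [← Real.exp_add]; simp
  have hψ0 : ψ 0 = K/2 - g 0 := by simp [hψdef]
  rw [hψ0] at hend
  have hψT : ψ T = K/2 * Real.exp (2*T) - Real.exp (2*T) * g T := rfl
  rw [hψT] at hend
  have hpos : 0 ≤ Real.exp (-(2*T)) := (Real.exp_pos _).le
  have key : Real.exp (-(2*T)) * (K/2 * Real.exp (2*T) - Real.exp (2*T) * g T)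
      = K/2 - g T := by
    have : Real.exp (-(2*T)) * (K/2 * Real.exp (2*T) - Real.exp (2*T) * g T)
        = K/2 * (Real.exp (-(2*T)) * Real.exp (2*T))
          - (Real.exp (-(2*T)) * Real.exp (2*T)) * g T := by ring
    rw [this, hinv]; ring
  have h6 : Real.exp (-(2*T)) * (K/2 - g 0) ≤ K/2 - g T := by
    rw [← key]; exact mul_le_mul_of_nonneg_left hend hpos
  nlinarith [h6, mul_nonneg hpos hK]


lemma mulVec_apply {ι : Type} [Fintype ι] (N : Matrix ι ι ℝ) (f : ι → ℝ) (i : ι) :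
    N.mulVec f i = ∑ j, N i j * f j := rfl

lemma voterGen_offdiag_nonneg {V : Type} [Fintype V] [DecidableEq V]
    (q : V → V → ℝ) (hq : ∀ x y, 0 ≤ q x y) (η ξ : V → Bool) (hne : η ≠ ξ) :
    0 ≤ voterGen q η ξ := by
  unfold voterGen genOfRate
  rw [if_neg (fun h => hne h.symm), sub_zero]
  exact Finset.sum_nonneg fun x _ => by
    by_cases h : ξ = Function.update η x (!η x)
    · simpa [h] using voterRate_nonneg q hq η x
    · simp [h]

set_option maxHeartbeats 1000000 in
lemma main_bound {V : Type} [Fintype V] [DecidableEq V] [Nonempty V]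
    (q : V → V → ℝ) (hq : ∀ x y, 0 ≤ q x y) (hqdiag : ∀ x, q x x = 0)
    (M : ℝ) (hM : ∀ x, ∑ y ∈ Finset.univ.filter (fun y => y ≠ x), q x y ≤ M)
    (π : V → ℝ) (hπ : IsStationaryChain q π)
    (K : ℝ) (hK : (2 + 4*M) * ∑ x, (π x)^2 ≤ K)
    (μ : (V → Bool) → ℝ) (hμ : IsStationaryNVM q μ)
    (T : ℝ) (hT : 0 ≤ T) :
    1 - 4 * K * Real.exp (2*T) ≤ tvDist (voterP q T (fun _ => true)) μ := by
  classical
  obtain ⟨hπnn, hπ1, hπst⟩ := hπ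
  obtain ⟨hμnn, hμ1, hμst⟩ := hμ
  have hstf := stationary_full q π hqdiag hπst
  set Q : Matrix (V → Bool) (V → Bool) ℝ := voterGen q with hQ
  set W : (V → Bool) → ℝ := Wfun π with hW
  set Wsq : (V → Bool) → ℝ := fun ξ => (W ξ)^2 with hWsq
  set hvec : (V → Bool) → ℝ := fun η => 4 * ∑ x, (π x)^2 * voterRate q η x with hhvec
  set one : V → Bool := fun _ => true with hone
  have hM0 : 0 ≤ M := by
    obtain ⟨x⟩ := ‹Nonempty V›
    refine le_trans ?_ (hM x)
    exact Finset.sum_nonneg fun y _ => hq x y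
  -- pointwise bound on hvec and K ≥ 0
  have hvec_nn : ∀ η, 0 ≤ hvec η := by
    intro η
    have : 0 ≤ ∑ x, (π x)^2 * voterRate q η x :=
      Finset.sum_nonneg fun x _ => mul_nonneg (sq_nonneg _) (voterRate_nonneg q hq η x)
    simp only [hhvec]; linarith
  have hvec_le : ∀ η, hvec η ≤ K := by
    intro η
    refine le_trans ?_ hK
    have : ∑ x, (π x)^2 * voterRate q η x ≤ ∑ x, (π x)^2 * (1/2 + M) :=
      Finset.sum_le_sum fun x _ => mul_le_mul_of_nonneg_left
        (voterRate_le q hq M hM η x) (sq_nonneg _)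
    have h2 : ∑ x, (π x)^2 * (1/2 + M) = (1/2 + M) * ∑ x, (π x)^2 := by
      rw [Finset.mul_sum]
      exact Finset.sum_congr rfl fun x _ => by ring
    have h3 : 0 ≤ ∑ x, (π x)^2 := Finset.sum_nonneg fun x _ => sq_nonneg _
    simp only [hhvec]
    nlinarith
  have hK0 : 0 ≤ K := le_trans (hvec_nn one) (hvec_le one)
  -- eigen relations
  have h_eigW : Q.mulVec W = (-1 : ℝ) • W := by
    rw [hQ, hW, voterGen_mulVec_W q π hqdiag hstf]
    funext η; simp
  have h_eig1 : Q.mulVec (fun _ => (1:ℝ)) = (0 : ℝ) • (fun _ => (1:ℝ)) := by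
    rw [hQ, voterGen_mulVec_one q]
    funext η; simp
  have hQW2 : Q.mulVec Wsq = fun η => -2 * Wsq η + hvec η := by
    funext η
    rw [hQ, hWsq]
    show (voterGen q).mulVec (fun ξ => (W ξ)^2) η = _
    rw [hW, voterGen_mulVec_Wsq q π hqdiag hstf η]
  set P : ℝ → Matrix (V → Bool) (V → Bool) ℝ := fun s => NormedSpace.exp (s • Q) with hP
  have hProw : ∀ s : ℝ, (P s).mulVec (fun _ => (1:ℝ)) = (fun _ => (1:ℝ)) := by
    intro s
    have : (s • Q).mulVec (fun _ => (1:ℝ)) = (0:ℝ) • (fun _ => (1:ℝ)) := by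
      rw [Matrix.smul_mulVec, h_eig1]; simp
    rw [hP]
    rw [exp_mulVec_eigen (s • Q) _ 0 this]
    simp
  have hPW : ∀ s : ℝ, (P s).mulVec W = Real.exp (-s) • W := by
    intro s
    have : (s • Q).mulVec W = (-s) • W := by
      rw [Matrix.smul_mulVec, h_eigW]; simp
    rw [hP, exp_mulVec_eigen (s • Q) _ (-s) this]
  have hPnn : ∀ s : ℝ, 0 ≤ s → ∀ i j, 0 ≤ P s i j := by
    intro s hs i j
    refine exp_entry_nonneg_of_offdiag (s • Q) (fun i j hij => ?_) i j
    have : (s • Q) i j = s * Q i j := rfl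
    rw [this]
    exact mul_nonneg hs (voterGen_offdiag_nonneg q hq i j hij)
  -- second moment ODE
  set g : ℝ → ℝ := fun s => ((P s).mulVec Wsq) one with hg
  set gder : ℝ → ℝ := fun s => ((P s).mulVec (Q.mulVec Wsq)) one with hgder
  have hgd : ∀ s ∈ Set.Icc (0:ℝ) T, HasDerivAt g (gder s) s := fun s _ =>
    hasDerivAt_exp_mulVec Q Wsq one s
  have hrow1 : ∀ s : ℝ, ∑ ξ, P s one ξ = 1 := by
    intro s
    have := congrFun (hProw s) one
    rw [mulVec_apply] at this
    simpa using this
  have hgb : ∀ s ∈ Set.Icc (0:ℝ) T, gder s ≤ -2 * g s + K := by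
    intro s hs
    have hsp := hs.1
    have expand : gder s = -2 * g s + ∑ ξ, P s one ξ * hvec ξ := by
      have h1 : gder s = ∑ ξ, P s one ξ * (-2 * Wsq ξ + hvec ξ) := by
        show ((P s).mulVec (Q.mulVec Wsq)) one = _
        rw [hQW2, mulVec_apply]
      have h2 : g s = ∑ ξ, P s one ξ * Wsq ξ := by
        show ((P s).mulVec Wsq) one = _
        rw [mulVec_apply]
      rw [h1, h2, Finset.mul_sum, ← Finset.sum_add_distrib]
      exact Finset.sum_congr rfl fun ξ _ => by ring
    rw [expand]
    have : ∑ ξ, P s one ξ * hvec ξ ≤ ∑ ξ, P s one ξ * K :=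
      Finset.sum_le_sum fun ξ _ => mul_le_mul_of_nonneg_left (hvec_le ξ) (hPnn s hsp one ξ)
    have h2 : ∑ ξ, P s one ξ * K = K := by
      rw [← Finset.sum_mul, hrow1 s, one_mul]
    linarith
  have hg0 : g 0 = 1 := by
    have hzero : (0:ℝ) • Q = 0 := zero_smul _ _
    have : P 0 = 1 := by rw [hP]; simp only [hzero]; exact NormedSpace.exp_zero
    rw [hg]
    simp only [this, Matrix.one_mulVec]
    have hWone : W one = 1 := by
      rw [hW, hone]
      unfold Wfun
      simp [bsgn, hπ1]
    show Wsq one = 1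
    rw [hWsq]; show (W one)^2 = 1; rw [hWone]; norm_num
  have hgT : g T ≤ Real.exp (-(2*T)) + K/2 := by
    have := ode_bound g gder T K hT hK0 hgd hgb
    rw [hg0, mul_one] at this
    exact this
  -- mean at time T
  set m : ℝ := Real.exp (-T) with hm
  have hm0 : 0 < m := Real.exp_pos _
  have hmsq : m^2 = Real.exp (-(2*T)) := by
    rw [hm, sq, ← Real.exp_add]; congr 1; ring
  have hWone : W one = 1 := by
    rw [hW, hone]; unfold Wfun; simp [bsgn, hπ1]
  have hmean : ∑ ξ, P T one ξ * W ξ = m := by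
    have h := congrFun (hPW T) one
    rw [mulVec_apply] at h
    rw [h]
    show Real.exp (-T) * W one = m
    rw [hWone, hm, mul_one]
  have hgTsum : ∑ ξ, P T one ξ * Wsq ξ = g T := by
    show _ = ((P T).mulVec Wsq) one
    rw [mulVec_apply]
  -- stationary measure moments
  have hstatE : ∀ f : (V → Bool) → ℝ, ∑ η, μ η * (Q.mulVec f) η = 0 := by
    intro f
    have : ∑ η, μ η * (Q.mulVec f) η = ∑ ξ, (∑ η, μ η * Q η ξ) * f ξ := by
      simp only [mulVec_apply, Finset.mul_sum, Finset.sum_mul]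
      rw [Finset.sum_comm]
      refine Finset.sum_congr rfl fun ξ _ => Finset.sum_congr rfl fun η _ => by ring
    rw [this]
    refine Finset.sum_eq_zero fun ξ _ => ?_
    rw [hμst ξ, zero_mul]
  have hEW2 : ∑ η, μ η * Wsq η ≤ K/2 := by
    have h0 := hstatE Wsq
    rw [hQW2] at h0
    have hexp : ∑ η, μ η * (-2 * Wsq η + hvec η)
        = -2 * (∑ η, μ η * Wsq η) + ∑ η, μ η * hvec η := by
      rw [Finset.mul_sum, ← Finset.sum_add_distrib]
      refine Finset.sum_congr rfl fun η _ => by ring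
    rw [hexp] at h0
    have hb : ∑ η, μ η * hvec η ≤ K := by
      have : ∑ η, μ η * hvec η ≤ ∑ η, μ η * K :=
        Finset.sum_le_sum fun η _ => mul_le_mul_of_nonneg_left (hvec_le η) (hμnn η)
      rw [← Finset.sum_mul, hμ1, one_mul] at this
      exact this
    linarith
  -- Chebyshev
  set A : Finset (V → Bool) := Finset.univ.filter (fun η => m/2 ≤ W η) with hA
  set μT : (V → Bool) → ℝ := fun ξ => P T one ξ with hμT
  have hμTnn : ∀ ξ, 0 ≤ μT ξ := fun ξ => hPnn T hT one ξ
  have hμT1 : ∑ ξ, μT ξ = 1 := hrow1 T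
  have hvarT : ∑ ξ, μT ξ * (W ξ - m)^2 ≤ K/2 := by
    have expand : ∀ ξ, μT ξ * (W ξ - m)^2
        = μT ξ * Wsq ξ - 2*m*(μT ξ * W ξ) + m^2 * μT ξ := by
      intro ξ
      have hws : Wsq ξ = (W ξ)^2 := rfl
      rw [hws]; ring
    rw [Finset.sum_congr rfl fun ξ _ => expand ξ]
    rw [Finset.sum_add_distrib, Finset.sum_sub_distrib, ← Finset.mul_sum, ← Finset.mul_sum,
      hgTsum, hmean, hμT1, mul_one]
    nlinarith [hgT, hmsq]
  have chebT : ∑ ξ ∈ Aᶜ, μT ξ ≤ 2 * K * Real.exp (2*T) := by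
    have hterm : ∀ ξ ∈ Aᶜ, μT ξ ≤ μT ξ * ((W ξ - m)/(m/2))^2 := by
      intro ξ hξ
      have hW' : W ξ < m/2 := by
        rw [hA] at hξ
        simp only [Finset.mem_compl, Finset.mem_filter, Finset.mem_univ, true_and, not_le] at hξ
        exact hξ
      have h1 : 1 ≤ ((W ξ - m)/(m/2))^2 := by
        rw [div_pow, one_le_div (by positivity)]
        nlinarith
      exact le_mul_of_one_le_right (hμTnn ξ) h1
    have h2 : ∑ ξ ∈ Aᶜ, μT ξ ≤ ∑ ξ ∈ Aᶜ, μT ξ * ((W ξ - m)/(m/2))^2 :=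
      Finset.sum_le_sum hterm
    have h3 : ∑ ξ ∈ Aᶜ, μT ξ * ((W ξ - m)/(m/2))^2
        ≤ ∑ ξ, μT ξ * ((W ξ - m)/(m/2))^2 := by
      refine Finset.sum_le_sum_of_subset_of_nonneg (Finset.subset_univ _) ?_
      intro ξ _ _
      exact mul_nonneg (hμTnn ξ) (sq_nonneg _)
    have h4 : ∑ ξ, μT ξ * ((W ξ - m)/(m/2))^2
        = (4/m^2) * ∑ ξ, μT ξ * (W ξ - m)^2 := by
      rw [Finset.mul_sum]
      refine Finset.sum_congr rfl fun ξ _ => ?_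
      rw [div_pow]
      field_simp
      ring
    have hminv : (4/m^2) * (K/2) = 2 * K * Real.exp (2*T) := by
      have : m^2 * Real.exp (2*T) = 1 := by
        rw [hmsq, ← Real.exp_add]; simp
      have hm2 : (0:ℝ) < m^2 := by positivity
      field_simp
      nlinarith [this]
    have h5 : (4/m^2) * ∑ ξ, μT ξ * (W ξ - m)^2 ≤ (4/m^2) * (K/2) := by
      have : (0:ℝ) ≤ 4/m^2 := by positivity
      exact mul_le_mul_of_nonneg_left hvarT this
    linarith
  have chebS : ∑ ξ ∈ A, μ ξ ≤ 2 * K * Real.exp (2*T) := by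
    have hterm : ∀ ξ ∈ A, μ ξ ≤ μ ξ * (W ξ/(m/2))^2 := by
      intro ξ hξ
      have hW' : m/2 ≤ W ξ := by
        rw [hA] at hξ
        simp only [Finset.mem_filter, Finset.mem_univ, true_and] at hξ
        exact hξ
      have h1 : 1 ≤ (W ξ/(m/2))^2 := by
        rw [div_pow, one_le_div (by positivity)]
        nlinarith
      exact le_mul_of_one_le_right (hμnn ξ) h1
    have h2 : ∑ ξ ∈ A, μ ξ ≤ ∑ ξ ∈ A, μ ξ * (W ξ/(m/2))^2 := Finset.sum_le_sum hterm
    have h3 : ∑ ξ ∈ A, μ ξ * (W ξ/(m/2))^2 ≤ ∑ ξ, μ ξ * (W ξ/(m/2))^2 := by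
      refine Finset.sum_le_sum_of_subset_of_nonneg (Finset.subset_univ _) ?_
      intro ξ _ _
      exact mul_nonneg (hμnn ξ) (sq_nonneg _)
    have h4 : ∑ ξ, μ ξ * (W ξ/(m/2))^2 = (4/m^2) * ∑ ξ, μ ξ * Wsq ξ := by
      rw [Finset.mul_sum]
      refine Finset.sum_congr rfl fun ξ _ => ?_
      have : Wsq ξ = (W ξ)^2 := rfl
      rw [this, div_pow]
      field_simp
      ring
    have hminv : (4/m^2) * (K/2) = 2 * K * Real.exp (2*T) := by
      have : m^2 * Real.exp (2*T) = 1 := by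
        rw [hmsq, ← Real.exp_add]; simp
      have hm2 : (0:ℝ) < m^2 := by positivity
      field_simp
      nlinarith [this]
    have h5 : (4/m^2) * ∑ ξ, μ ξ * Wsq ξ ≤ (4/m^2) * (K/2) := by
      have : (0:ℝ) ≤ 4/m^2 := by positivity
      exact mul_le_mul_of_nonneg_left hEW2 this
    linarith
  -- conclude with TV lower bound
  have hμTtv : voterP q T (fun _ => true) = μT := by
    funext ξ
    rw [hμT, hP]
    rfl
  have hsums : ∑ s, μT s = ∑ s, μ s := by rw [hμT1, hμ1]
  have htv := tv_lower μT μ hsums A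
  have hAfull : ∑ ξ ∈ A, μT ξ = 1 - ∑ ξ ∈ Aᶜ, μT ξ := by
    have := Finset.sum_add_sum_compl A μT
    rw [hμT1] at this
    linarith
  rw [hμTtv]
  calc 1 - 4 * K * Real.exp (2*T)
      ≤ (1 - ∑ ξ ∈ Aᶜ, μT ξ) - ∑ ξ ∈ A, μ ξ := by linarith
    _ = (∑ ξ ∈ A, μT ξ) - ∑ ξ ∈ A, μ ξ := by rw [hAfull]
    _ ≤ tvDist μT μ := htv


lemma voterP_prob {V : Type} [Fintype V] [DecidableEq V]
    (q : V → V → ℝ) (hq : ∀ x y, 0 ≤ q x y) (T : ℝ) (hT : 0 ≤ T) :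
    (∀ ξ, 0 ≤ voterP q T (fun _ => true) ξ) ∧ (∑ ξ, voterP q T (fun _ => true) ξ = 1) := by
  constructor
  · intro ξ
    refine exp_entry_nonneg_of_offdiag (T • voterGen q) (fun i j hij => ?_) _ ξ
    have : (T • voterGen q) i j = T * voterGen q i j := rfl
    rw [this]
    exact mul_nonneg hT (voterGen_offdiag_nonneg q hq i j hij)
  · have h0 : (T • voterGen q).mulVec (fun _ => (1:ℝ)) = (0:ℝ) • (fun _ => (1:ℝ)) := by
      rw [Matrix.smul_mulVec, voterGen_mulVec_one q]; simp
    have h := congrFun (exp_mulVec_eigen (T • voterGen q) _ 0 h0) (fun _ => true)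
    rw [mulVec_apply] at h
    simpa [voterP] using h

set_option maxHeartbeats 1000000 in
/-- **Theorem 1, eq. (2), of Cox–Peres–Steif (cutoff lower bound).** Under bounded rates and
almost-uniform stationary distributions,
`lim_{α→∞} liminf_{n→∞} ‖μ^{n,𝟏}_{(1/2)log|Sⁿ| − α} − μⁿ_∞‖_TV = 1`. -/
theorem stmt_3 {S : ℕ → Type} [∀ n, Fintype (S n)] [∀ n, DecidableEq (S n)]
    (q : ∀ n, S n → S n → ℝ)
    (hq : ∀ n x y, 0 ≤ q n x y) (hqdiag : ∀ n x, q n x x = 0)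
    (hcard : Filter.Tendsto (fun n => (Fintype.card (S n) : ℝ)) Filter.atTop Filter.atTop)
    (M : ℝ) (hM : ∀ n x, ∑ y ∈ Finset.univ.filter (fun y => y ≠ x), q n x y ≤ M)
    (C : ℝ)
    (hC : ∀ n, ∃ π : S n → ℝ, IsStationaryChain (q n) π ∧ (∀ x, 0 < π x) ∧
        (⨆ x, π x) / (⨅ x, π x) ≤ C)
    (μinf : ∀ n, (S n → Bool) → ℝ) (hμ : ∀ n, IsStationaryNVM (q n) (μinf n)) :
    Filter.Tendsto
      (fun α : ℝ => Filter.liminf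
        (fun n => tvDist
          (voterP (q n) ((1 / 2) * Real.log (Fintype.card (S n)) - α) (fun _ => true))
          (μinf n))
        Filter.atTop)
      Filter.atTop (nhds 1) := by
  classical
  set u : ℕ → ℝ → ℝ := fun n α => tvDist
      (voterP (q n) ((1 / 2) * Real.log (Fintype.card (S n)) - α) (fun _ => true))
      (μinf n) with hu
  -- global positivity facts
  obtain ⟨n₀, hn₀⟩ : ∃ n, 1 ≤ (Fintype.card (S n) : ℝ) := (hcard.eventually_ge_atTop 1).exists
  haveI hne₀ : Nonempty (S n₀) := by
    refine Fintype.card_pos_iff.mp ?_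
    have : (0:ℝ) < (Fintype.card (S n₀) : ℝ) := lt_of_lt_of_le zero_lt_one hn₀
    exact_mod_cast this
  have hM0 : 0 ≤ M := by
    obtain ⟨x⟩ := id hne₀
    exact le_trans (Finset.sum_nonneg fun y _ => hq n₀ x y) (hM n₀ x)
  have hC0 : 0 ≤ C := by
    obtain ⟨π, hπ, hπpos, hratio⟩ := hC n₀
    refine le_trans ?_ hratio
    have hbddA : BddAbove (Set.range π) := Set.Finite.bddAbove (Set.finite_range π)
    obtain ⟨x⟩ := id hne₀
    have h1 : 0 ≤ (⨆ y, π y) := le_trans (hπpos x).le (le_ciSup hbddA x)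
    have h2 : 0 ≤ (⨅ y, π y) := le_ciInf fun y => (hπpos y).le
    positivity
  set c : ℝ := 4 * ((2 + 4*M) * C) with hc
  have hc0 : 0 ≤ c := by positivity
  -- the key eventual estimate, for each fixed α
  have key : ∀ α : ℝ, ∀ᶠ n in Filter.atTop,
      1 - c * Real.exp (-(2*α)) ≤ u n α ∧ u n α ≤ 1 := by
    intro α
    filter_upwards [hcard.eventually_ge_atTop (max 1 (Real.exp (2*α)))] with n hn
    set N : ℝ := (Fintype.card (S n) : ℝ) with hN
    have hN1 : 1 ≤ N := le_trans (le_max_left _ _) hn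
    have hNexp : Real.exp (2*α) ≤ N := le_trans (le_max_right _ _) hn
    have hN0 : (0:ℝ) < N := lt_of_lt_of_le zero_lt_one hN1
    haveI : Nonempty (S n) := by
      refine Fintype.card_pos_iff.mp ?_
      rw [hN] at hN0
      exact_mod_cast hN0
    set T : ℝ := (1 / 2) * Real.log N - α with hTdef
    have hT : 0 ≤ T := by
      have : 2*α ≤ Real.log N := (Real.le_log_iff_exp_le hN0).mpr hNexp
      rw [hTdef]; linarith
    have hexp2T : Real.exp (2*T) = N * Real.exp (-(2*α)) := by
      have h2T : 2*T = Real.log N + (-(2*α)) := by rw [hTdef]; ring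
      rw [h2T, Real.exp_add, Real.exp_log hN0]
    obtain ⟨π, hπ, hπpos, hratio⟩ := hC n
    have hbddA : BddAbove (Set.range π) := Set.Finite.bddAbove (Set.finite_range π)
    have hbddB : BddBelow (Set.range π) := Set.Finite.bddBelow (Set.finite_range π)
    have hminle : ∀ x, (⨅ y, π y) ≤ π x := fun x => ciInf_le hbddB x
    have hmaxge : ∀ x, π x ≤ (⨆ y, π y) := fun x => le_ciSup hbddA x
    have hminpos : 0 < ⨅ y, π y := by
      obtain ⟨x₀, _, hx₀⟩ := Finset.exists_min_image Finset.univ π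
        ⟨Classical.arbitrary (S n), Finset.mem_univ _⟩
      have : π x₀ ≤ ⨅ y, π y := le_ciInf fun y => hx₀ y (Finset.mem_univ y)
      exact lt_of_lt_of_le (hπpos x₀) this
    have hmaxle : (⨆ y, π y) ≤ C * (⨅ y, π y) := (div_le_iff₀ hminpos).mp hratio
    have hmin_le : N * (⨅ y, π y) ≤ 1 := by
      have h1 : ∑ _x : S n, (⨅ y, π y) ≤ ∑ x, π x := Finset.sum_le_sum fun x _ => hminle x
      rw [Finset.sum_const, hπ.2.1, Finset.card_univ, nsmul_eq_mul] at h1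
      exact h1
    have hsumsq : ∑ x, (π x)^2 ≤ C / N := by
      have h1 : ∑ x, (π x)^2 ≤ ∑ x, π x * (⨆ y, π y) := by
        refine Finset.sum_le_sum fun x _ => ?_
        rw [sq]
        exact mul_le_mul_of_nonneg_left (hmaxge x) (hπ.1 x)
      rw [← Finset.sum_mul, hπ.2.1, one_mul] at h1
      have h2 : (⨅ y, π y) ≤ 1 / N := by
        rw [le_div_iff₀ hN0]
        calc (⨅ y, π y) * N = N * (⨅ y, π y) := by ring
          _ ≤ 1 := hmin_le
      calc ∑ x, (π x)^2 ≤ (⨆ y, π y) := h1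
        _ ≤ C * (⨅ y, π y) := hmaxle
        _ ≤ C * (1 / N) := mul_le_mul_of_nonneg_left h2 hC0
        _ = C / N := by ring
    have hKK : (2 + 4*M) * ∑ x, (π x)^2 ≤ (2 + 4*M) * (C / N) :=
      mul_le_mul_of_nonneg_left hsumsq (by linarith)
    have hmain := main_bound (q n) (hq n) (hqdiag n) M (hM n) π hπ
      ((2 + 4*M) * (C / N)) hKK (μinf n) (hμ n) T hT
    have hprob := voterP_prob (q n) (hq n) T hT
    obtain ⟨hμnn, hμ1, _⟩ := hμ n
    constructor
    · refine le_trans ?_ hmain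
      have heq : 4 * ((2 + 4*M) * (C / N)) * Real.exp (2*T) = c * Real.exp (-(2*α)) := by
        rw [hexp2T, hc]
        field_simp
      rw [heq]
    · exact tv_le_one _ _ hprob.1 hμnn hprob.2 hμ1
  -- liminf bounds and squeeze
  have hlow : ∀ α : ℝ, 1 - c * Real.exp (-(2*α))
      ≤ Filter.liminf (fun n => u n α) Filter.atTop := by
    intro α
    refine Filter.le_liminf_of_le ?_ (((key α).mono fun n h => h.1))
    exact Filter.isCoboundedUnder_ge_of_eventually_le _ ((key α).mono fun n h => h.2)
  have hup : ∀ α : ℝ, Filter.liminf (fun n => u n α) Filter.atTop ≤ 1 := by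
    intro α
    refine Filter.liminf_le_of_frequently_le (((key α).mono fun n h => h.2).frequently) ?_
    exact ⟨1 - c * Real.exp (-(2*α)), Filter.eventually_map.mpr ((key α).mono fun n h => h.1)⟩
  have hlim : Filter.Tendsto (fun α : ℝ => 1 - c * Real.exp (-(2*α)))
      Filter.atTop (nhds 1) := by
    have h1 : Filter.Tendsto (fun α : ℝ => 2*α) Filter.atTop Filter.atTop := by
      exact Filter.Tendsto.const_mul_atTop two_pos Filter.tendsto_id
    have h2 : Filter.Tendsto (fun α : ℝ => -(2*α)) Filter.atTop Filter.atBot :=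
      Filter.tendsto_neg_atTop_atBot.comp h1
    have h3 : Filter.Tendsto (fun α : ℝ => Real.exp (-(2*α))) Filter.atTop (nhds 0) :=
      Real.tendsto_exp_atBot.comp h2
    have h4 : Filter.Tendsto (fun α : ℝ => c * Real.exp (-(2*α))) Filter.atTop (nhds 0) := by
      simpa using h3.const_mul c
    have h5 := (tendsto_const_nhds (x := (1:ℝ)) (f := Filter.atTop)).sub h4
    simpa using h5
  exact tendsto_of_tendsto_of_tendsto_of_le_of_le' hlim tendsto_const_nhds
    (Filter.Eventually.of_forall hlow) (Filter.Eventually.of_forall hup)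
end

section
/- Consider the noisy voter model corresponding to continuous-time random walk with parameter 1 on the n-star, with n even and n ≥ 4. Let η0 be any configuration in {0,1}^{S} which equals 1 on exactly n/2 of the leaves. If t = (1/4)·(log n − C) > 0 for a real number C, then ‖μ^{η0}_t − μ_∞‖_TV ≥ e^C / (48 + e^C). -/
open scoped BigOperators

/-- Voting rates of continuous-time random walk with parameter 1 on the `n`-star:
`none` is the center vertex and `some i` (for `i : Fin n`) are the leaves. A leaf jumps to the
center at rate 1, and the center jumps to a uniformly chosen leaf at rate 1. -/
noncomputable def starQ (n : ℕ) : Option (Fin n) → Option (Fin n) → ℝ :=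
  fun x y => match x, y with
    | some _, none => 1
    | none, some _ => 1 / (n : ℝ)
    | _, _ => 0


open NormedSpace Matrix
open scoped Matrix Nat

section ExpHelpers
variable {m : Type} [Fintype m] [DecidableEq m]

lemma CPS5_exp_mulVec_eigen (A : Matrix m m ℝ) (v : m → ℝ) (lam : ℝ)
    (h : A *ᵥ v = lam • v) :
    NormedSpace.exp A *ᵥ v = Real.exp lam • v := by
  letI : SeminormedRing (Matrix m m ℝ) := Matrix.linftyOpSemiNormedRing
  letI : NormedRing (Matrix m m ℝ) := Matrix.linftyOpNormedRing
  letI : NormedAlgebra ℝ (Matrix m m ℝ) := Matrix.linftyOpNormedAlgebra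
  let L : Matrix m m ℝ →ₗ[ℝ] (m → ℝ) :=
    { toFun := fun M => M *ᵥ v
      map_add' := fun M N => Matrix.add_mulVec M N v
      map_smul' := fun c M => Matrix.smul_mulVec c M v }
  have hLc : Continuous L := LinearMap.continuous_of_finiteDimensional L
  have hsum : Summable fun k : ℕ => (k !⁻¹ : ℝ) • A ^ k := expSeries_summable' A
  have hpow : ∀ k : ℕ, A ^ k *ᵥ v = (lam ^ k) • v := by
    intro k
    induction k with
    | zero => simp [Matrix.one_mulVec]
    | succ k ih =>
        rw [pow_succ', pow_succ', ← Matrix.mulVec_mulVec, ih, Matrix.mulVec_smul, h,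
          smul_smul, mul_comm]
  have hmap : L (∑' k : ℕ, (k !⁻¹ : ℝ) • A ^ k) = ∑' k : ℕ, L ((k !⁻¹ : ℝ) • A ^ k) :=
    ((hsum.hasSum.map L hLc).tsum_eq).symm
  have hL1 : ∀ k : ℕ, L ((k !⁻¹ : ℝ) • A ^ k) = ((k !⁻¹ : ℝ) * lam ^ k) • v := by
    intro k
    rw [_root_.map_smul]
    have : L (A ^ k) = A ^ k *ᵥ v := rfl
    rw [this, hpow, smul_smul]
  have hexp : NormedSpace.exp A *ᵥ v = L (∑' k : ℕ, (k !⁻¹ : ℝ) • A ^ k) := by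
    rw [exp_eq_tsum ℝ]; rfl
  rw [hexp, hmap]
  simp only [hL1]
  rw [Summable.tsum_smul_const, Real.exp_eq_exp_ℝ, exp_eq_tsum ℝ]
  · norm_num
  · have := expSeries_summable' (𝕂 := ℝ) lam
    simpa [smul_eq_mul] using this

lemma CPS5_pow_entry_nonneg (B : Matrix m m ℝ) (hB : ∀ i j, 0 ≤ B i j) (k : ℕ) :
    ∀ i j, 0 ≤ (B ^ k) i j := by
  induction k with
  | zero =>
      intro i j
      by_cases h : i = j <;> simp [pow_zero, Matrix.one_apply, h]
  | succ k ih =>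
      intro i j
      rw [pow_succ, Matrix.mul_apply]
      exact Finset.sum_nonneg fun l _ => mul_nonneg (ih i l) (hB l j)

lemma CPS5_exp_entry_nonneg_of_nonneg (B : Matrix m m ℝ) (hB : ∀ i j, 0 ≤ B i j) (i j : m) :
    0 ≤ NormedSpace.exp B i j := by
  letI : SeminormedRing (Matrix m m ℝ) := Matrix.linftyOpSemiNormedRing
  letI : NormedRing (Matrix m m ℝ) := Matrix.linftyOpNormedRing
  letI : NormedAlgebra ℝ (Matrix m m ℝ) := Matrix.linftyOpNormedAlgebra
  let L : Matrix m m ℝ →ₗ[ℝ] ℝ :=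
    { toFun := fun M => M i j
      map_add' := fun M N => rfl
      map_smul' := fun c M => rfl }
  have hLc : Continuous L := LinearMap.continuous_of_finiteDimensional L
  have hsum : Summable fun k : ℕ => (k !⁻¹ : ℝ) • B ^ k := expSeries_summable' B
  have hmap : L (∑' k : ℕ, (k !⁻¹ : ℝ) • B ^ k) = ∑' k : ℕ, L ((k !⁻¹ : ℝ) • B ^ k) :=
    ((hsum.hasSum.map L hLc).tsum_eq).symm
  have hexp : NormedSpace.exp B i j = L (∑' k : ℕ, (k !⁻¹ : ℝ) • B ^ k) := by
    rw [exp_eq_tsum ℝ]; rfl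
  rw [hexp, hmap]
  refine tsum_nonneg fun k => ?_
  have : L ((k !⁻¹ : ℝ) • B ^ k) = (k !⁻¹ : ℝ) * (B ^ k) i j := rfl
  rw [this]
  exact mul_nonneg (by positivity) (CPS5_pow_entry_nonneg B hB k i j)

lemma CPS5_exp_entry_nonneg (A : Matrix m m ℝ) (hoff : ∀ i j, i ≠ j → 0 ≤ A i j) (i j : m) :
    0 ≤ NormedSpace.exp A i j := by
  classical
  set c : ℝ := ∑ k, |A k k| with hc
  have hcn : ∀ k, 0 ≤ A k k + c := by
    intro k
    have h1 : |A k k| ≤ c := by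
      rw [hc]
      exact Finset.single_le_sum (f := fun k => |A k k|) (fun l _ => abs_nonneg _)
        (Finset.mem_univ k)
    have := neg_abs_le (A k k)
    linarith
  set B : Matrix m m ℝ := A + c • (1 : Matrix m m ℝ) with hBdef
  have hB : ∀ i j, 0 ≤ B i j := by
    intro i j
    by_cases h : i = j
    · subst h
      simp only [hBdef, Matrix.add_apply, Matrix.smul_apply, Matrix.one_apply_eq, smul_eq_mul,
        mul_one]
      exact hcn i
    · simp only [hBdef, Matrix.add_apply, Matrix.smul_apply, Matrix.one_apply_ne h, smul_eq_mul,
        mul_zero, add_zero]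
      exact hoff i j h
  have hA : A = B + (-c) • (1 : Matrix m m ℝ) := by
    rw [hBdef]; module
  have hcomm : Commute B ((-c) • (1 : Matrix m m ℝ)) := by
    apply Commute.smul_right
    exact Commute.one_right B
  have hsplit : NormedSpace.exp A
      = NormedSpace.exp B * NormedSpace.exp ((-c) • (1 : Matrix m m ℝ)) := by
    rw [hA]
    exact Matrix.exp_add_of_commute B _ hcomm
  have hdiag : ((-c) • (1 : Matrix m m ℝ)) = Matrix.diagonal (fun _ => -c) := by
    rw [Matrix.smul_one_eq_diagonal]
  have hexp1 : NormedSpace.exp ((-c) • (1 : Matrix m m ℝ))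
      = Matrix.diagonal (fun _ : m => Real.exp (-c)) := by
    have hfun : NormedSpace.exp (fun _ : m => (-c : ℝ)) = fun _ : m => Real.exp (-c) := by
      funext k
      rw [Pi.coe_exp, Real.exp_eq_exp_ℝ]
    rw [hdiag, Matrix.exp_diagonal, hfun]
  rw [hsplit, hexp1, Matrix.mul_diagonal]
  exact mul_nonneg (CPS5_exp_entry_nonneg_of_nonneg B hB i j) (Real.exp_nonneg _)

end ExpHelpers
section GenHelpers

open scoped Matrix

variable {V : Type} [Fintype V] [DecidableEq V]

lemma CPS5_voterGen_mulVec (q : V → V → ℝ) (f : (V → Bool) → ℝ) (η : V → Bool) :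
    (voterGen q *ᵥ f) η
      = ∑ x, voterRate q η x * (f (Function.update η x (!η x)) - f η) := by
  classical
  simp only [Matrix.mulVec, dotProduct, voterGen, genOfRate]
  simp only [sub_mul, Finset.sum_sub_distrib, Finset.sum_mul, ite_mul, zero_mul]
  rw [Finset.sum_comm]
  have h1 : ∀ x, (∑ ξ, if ξ = Function.update η x (!η x) then voterRate q η x * f ξ else 0)
      = voterRate q η x * f (Function.update η x (!η x)) := by
    intro x
    rw [Finset.sum_ite_eq' Finset.univ (Function.update η x (!η x))
      (fun ξ => voterRate q η x * f ξ)]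
    simp
  have h2 : (∑ ξ, if ξ = η then (∑ x, voterRate q η x) * f ξ else 0)
      = (∑ x, voterRate q η x) * f η := by
    rw [Finset.sum_ite_eq' Finset.univ η (fun ξ => (∑ x, voterRate q η x) * f ξ)]
    simp
  simp only [h1]
  have h2 : (∑ ξ : V → Bool, if ξ = η then ∑ i, voterRate q η i * f ξ else 0)
      = ∑ i, voterRate q η i * f η := by
    rw [Finset.sum_ite_eq' Finset.univ η (fun ξ => ∑ i, voterRate q η i * f ξ)]
    simp
  rw [h2]
  simp only [mul_sub, Finset.sum_sub_distrib]

end GenHelpers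
section StarHelpers

open scoped Matrix

noncomputable def CPS5_sgn (b : Bool) : ℝ := if b then 1 else -1

lemma CPS5_sgn_not (b : Bool) : CPS5_sgn (!b) = - CPS5_sgn b := by
  cases b <;> simp [CPS5_sgn]

noncomputable def CPS5_Z {n : ℕ} (e : Fin n → ℝ) (ξ : Option (Fin n) → Bool) : ℝ :=
  ∑ i, e i * CPS5_sgn (ξ (some i))

noncomputable def CPS5_U {n : ℕ} (ξ : Option (Fin n) → Bool) : ℝ :=
  ∑ i : Fin n, CPS5_sgn (ξ (some i))

noncomputable def CPS5_W {n : ℕ} (e : Fin n → ℝ) (ξ : Option (Fin n) → Bool) : ℝ :=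
  CPS5_Z e ξ ^ 2 + ((CPS5_U ξ) ^ 2 - (n : ℝ)) / ((n : ℝ) - 1) - (n : ℝ)

variable {n : ℕ}

lemma CPS5_rate_leaf (η : Option (Fin n) → Bool) (i : Fin n) :
    voterRate (starQ n) η (some i)
      = 1 - CPS5_sgn (η (some i)) * CPS5_sgn (η none) / 2 := by
  unfold voterRate
  have hsum : (∑ y ∈ Finset.univ.filter (fun y => y ≠ some i),
      starQ n (some i) y * (if η y ≠ η (some i) then (1:ℝ) else 0))
      = (if η none ≠ η (some i) then (1:ℝ) else 0) := by
    rw [Finset.sum_eq_single_of_mem (none : Option (Fin n))]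
    · simp [starQ]
    · simp
    · intro y _ hy
      match y with
      | none => exact absurd rfl hy
      | some j => simp [starQ]
  rw [hsum]
  cases h1 : η none <;> cases h2 : η (some i) <;> simp [CPS5_sgn, h1, h2] <;> norm_num

lemma CPS5_sum_update (g : Fin n → Bool → ℝ) (η : Option (Fin n) → Bool) (i : Fin n) (b : Bool) :
    ∑ j, g j (Function.update η (some i) b (some j))
      = (∑ j, g j (η (some j))) + (g i b - g i (η (some i))) := by
  have hupd : ∀ j : Fin n, Function.update η (some i) b (some j)
      = if j = i then b else η (some j) := by
    intro j
    by_cases h : j = i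
    · subst h; simp
    · rw [Function.update_of_ne (by simpa using h)]
      simp [h]
  have hterm : ∀ j : Fin n, g j (Function.update η (some i) b (some j))
      = (if j = i then g i b - g i (η (some i)) else 0) + g j (η (some j)) := by
    intro j
    rw [hupd j]
    by_cases h : j = i
    · subst h; simp
    · simp [h]
  simp only [hterm]
  rw [Finset.sum_add_distrib, Finset.sum_ite_eq' Finset.univ i]
  simp [add_comm]

lemma CPS5_Z_update_some (e : Fin n → ℝ) (η : Option (Fin n) → Bool) (i : Fin n) (b : Bool) :
    CPS5_Z e (Function.update η (some i) b)
      = CPS5_Z e η + e i * (CPS5_sgn b - CPS5_sgn (η (some i))) := by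
  unfold CPS5_Z
  rw [CPS5_sum_update (fun j c => e j * CPS5_sgn c) η i b]
  ring

lemma CPS5_U_update_some (η : Option (Fin n) → Bool) (i : Fin n) (b : Bool) :
    CPS5_U (Function.update η (some i) b)
      = CPS5_U η + (CPS5_sgn b - CPS5_sgn (η (some i))) := by
  unfold CPS5_U
  rw [CPS5_sum_update (fun _ c => CPS5_sgn c) η i b]

lemma CPS5_Z_update_none (e : Fin n → ℝ) (η : Option (Fin n) → Bool) (b : Bool) :
    CPS5_Z e (Function.update η none b) = CPS5_Z e η := by
  unfold CPS5_Z
  apply Finset.sum_congr rfl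
  intro j _
  rw [Function.update_of_ne (by simp)]

lemma CPS5_U_update_none (η : Option (Fin n) → Bool) (b : Bool) :
    CPS5_U (Function.update η none b) = CPS5_U η := by
  unfold CPS5_U
  apply Finset.sum_congr rfl
  intro j _
  rw [Function.update_of_ne (by simp)]

end StarHelpers
section EigenHelpers

open scoped Matrix

variable {n : ℕ}

lemma CPS5_Q_one (q : Option (Fin n) → Option (Fin n) → ℝ) :
    voterGen q *ᵥ (fun _ => (1 : ℝ)) = 0 := by
  funext η
  rw [CPS5_voterGen_mulVec]
  simp

lemma CPS5_QZ (e : Fin n → ℝ) (hesum : ∑ i, e i = 0) :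
    voterGen (starQ n) *ᵥ CPS5_Z e = (-2 : ℝ) • CPS5_Z e := by
  funext η
  rw [CPS5_voterGen_mulVec]
  rw [Fintype.sum_option]
  have hnone : voterRate (starQ n) η none *
      (CPS5_Z e (Function.update η none (!η none)) - CPS5_Z e η) = 0 := by
    rw [CPS5_Z_update_none]; ring
  have key : ∀ i : Fin n, voterRate (starQ n) η (some i) *
      (CPS5_Z e (Function.update η (some i) (!η (some i))) - CPS5_Z e η)
      = -2 * (e i * CPS5_sgn (η (some i))) + e i * CPS5_sgn (η none) := by
    intro i
    rw [CPS5_rate_leaf, CPS5_Z_update_some, CPS5_sgn_not]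
    cases h1 : η (some i) <;> cases h2 : η none <;> simp [CPS5_sgn] <;> ring
  simp only [key, hnone, zero_add]
  rw [Finset.sum_add_distrib, ← Finset.mul_sum, ← Finset.sum_mul, hesum]
  show _ = (-2 : ℝ) * CPS5_Z e η
  unfold CPS5_Z
  ring

lemma CPS5_QW (hn4 : 4 ≤ n) (e : Fin n → ℝ) (he : ∀ i, e i = 1 ∨ e i = -1)
    (hesum : ∑ i, e i = 0) :
    voterGen (starQ n) *ᵥ CPS5_W e = (-4 : ℝ) • CPS5_W e := by
  have hN1 : (1 : ℝ) < (n : ℝ) := by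
    have : (4 : ℝ) ≤ (n : ℝ) := by exact_mod_cast hn4
    linarith
  have hNm1 : ((n : ℝ) - 1) ≠ 0 := by linarith
  funext η
  rw [CPS5_voterGen_mulVec]
  rw [Fintype.sum_option]
  set z := CPS5_Z e η with hz
  set u := CPS5_U η with hu
  set sc := CPS5_sgn (η none) with hsc
  have hnone : voterRate (starQ n) η none *
      (CPS5_W e (Function.update η none (!η none)) - CPS5_W e η) = 0 := by
    unfold CPS5_W
    rw [CPS5_Z_update_none, CPS5_U_update_none, ← hz, ← hu]
    ring
  have key : ∀ i : Fin n, voterRate (starQ n) η (some i) *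
      (CPS5_W e (Function.update η (some i) (!η (some i))) - CPS5_W e η)
      = (-4 * z) * (e i * CPS5_sgn (η (some i)))
        + (-(4 * u) / ((n:ℝ) - 1) - 2 * sc - 2 * sc / ((n:ℝ) - 1)) * CPS5_sgn (η (some i))
        + (2 * sc * z) * e i
        + (4 + 4 / ((n:ℝ) - 1) + 2 * sc * u / ((n:ℝ) - 1)) := by
    intro i
    unfold CPS5_W
    rw [CPS5_rate_leaf, CPS5_Z_update_some, CPS5_U_update_some, CPS5_sgn_not, ← hz, ← hu, ← hsc]
    rcases he i with he1 | he1 <;>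
      cases h1 : η (some i) <;>
        simp only [CPS5_sgn, h1, he1, if_true, if_false, Bool.false_eq_true] <;>
          field_simp <;> ring
  simp only [key, hnone, zero_add]
  rw [Finset.sum_add_distrib, Finset.sum_add_distrib, Finset.sum_add_distrib,
    ← Finset.mul_sum, ← Finset.mul_sum, ← Finset.mul_sum, hesum, Finset.sum_const,
    Finset.card_univ, Fintype.card_fin]
  show _ = (-4 : ℝ) * CPS5_W e η
  unfold CPS5_W
  rw [← hz, ← hu]
  have : ∑ i, e i * CPS5_sgn (η (some i)) = z := rfl
  rw [this]
  have : ∑ i : Fin n, CPS5_sgn (η (some i)) = u := rfl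
  rw [this]
  rw [nsmul_eq_mul]
  field_simp
  ring

end EigenHelpers
section NonnegHelpers

variable {n : ℕ}

lemma CPS5_starQ_nonneg (x y : Option (Fin n)) : 0 ≤ starQ n x y := by
  cases x <;> cases y <;> simp only [starQ] <;> positivity

lemma CPS5_voterRate_nonneg (η : Option (Fin n) → Bool) (x : Option (Fin n)) :
    0 ≤ voterRate (starQ n) η x := by
  unfold voterRate
  have h1 : (0:ℝ) ≤ 1/2 := by norm_num
  refine add_nonneg h1 (Finset.sum_nonneg fun y _ => ?_)
  refine mul_nonneg (CPS5_starQ_nonneg x y) ?_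
  split <;> norm_num

lemma CPS5_voterGen_offdiag_nonneg (η ξ : Option (Fin n) → Bool) (hne : ξ ≠ η) :
    0 ≤ voterGen (starQ n) η ξ := by
  unfold voterGen genOfRate
  rw [if_neg hne, sub_zero]
  refine Finset.sum_nonneg fun x _ => ?_
  split
  · exact CPS5_voterRate_nonneg η x
  · exact le_refl 0

end NonnegHelpers

set_option maxHeartbeats 2000000

open scoped Matrix

/-- **Theorem 2(i) of Cox–Peres–Steif.** For the noisy voter model on the `n`-star (`n` even),
started from a configuration which is 1 on exactly half of the leaves, at time
`t = (1/4)(log n − C) > 0` the total variation distance from stationarity is at least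
`e^C / (48 + e^C)`. -/
theorem stmt_5 (n : ℕ) (hn : Even n) (hn4 : 4 ≤ n)
    (η0 : Option (Fin n) → Bool)
    (hη0 : (Finset.univ.filter (fun i : Fin n => η0 (some i) = true)).card = n / 2)
    (μinf : (Option (Fin n) → Bool) → ℝ) (hμ : IsStationaryNVM (starQ n) μinf)
    (C : ℝ) (t : ℝ) (htdef : t = (1 / 4) * (Real.log n - C)) (ht : 0 < t) :
    Real.exp C / (48 + Real.exp C) ≤ tvDist (voterP (starQ n) t η0) μinf := by
  classical
  set N : ℝ := (n : ℝ) with hNdef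
  have hN4 : (4:ℝ) ≤ N := by rw [hNdef]; exact_mod_cast hn4
  have hN0 : (0:ℝ) < N := by linarith
  have hNm1 : (0:ℝ) < N - 1 := by linarith
  set e : Fin n → ℝ := fun i => CPS5_sgn (η0 (some i)) with he_def
  have he : ∀ i, e i = 1 ∨ e i = -1 := by
    intro i; cases h : η0 (some i) <;> simp [he_def, CPS5_sgn, h]
  have hesq : ∀ i, e i * e i = 1 := by
    intro i; rcases he i with h | h <;> rw [h] <;> norm_num
  -- the sum of e is zero
  have hcards : (Finset.univ.filter (fun i : Fin n => η0 (some i) = true)).card +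
      (Finset.univ.filter (fun i : Fin n => ¬ (η0 (some i) = true))).card = n := by
    rw [Finset.card_filter_add_card_filter_not, Finset.card_univ, Fintype.card_fin]
  have hc2 : (Finset.univ.filter (fun i : Fin n => ¬ (η0 (some i) = true))).card = n / 2 := by
    obtain ⟨k, hk⟩ := hn; omega
  have hesum : ∑ i, e i = 0 := by
    rw [← Finset.sum_filter_add_sum_filter_not Finset.univ
      (fun i : Fin n => η0 (some i) = true) e]
    have h1 : ∀ i ∈ Finset.univ.filter (fun i : Fin n => η0 (some i) = true), e i = 1 := by
      intro i hi
      simp only [Finset.mem_filter] at hi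
      simp [he_def, CPS5_sgn, hi.2]
    have h2 : ∀ i ∈ Finset.univ.filter (fun i : Fin n => ¬(η0 (some i) = true)), e i = -1 := by
      intro i hi
      simp only [Finset.mem_filter] at hi
      simp [he_def, CPS5_sgn, hi.2]
    rw [Finset.sum_congr rfl h1, Finset.sum_congr rfl h2, Finset.sum_const, Finset.sum_const,
      hη0, hc2]
    simp
  -- values at the initial configuration
  have hZ0 : CPS5_Z e η0 = N := by
    unfold CPS5_Z
    have h1 : ∀ i : Fin n, e i * CPS5_sgn (η0 (some i)) = 1 := fun i => hesq i
    rw [Finset.sum_congr rfl (fun i _ => h1 i), Finset.sum_const, Finset.card_univ,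
      Fintype.card_fin]
    simp [hNdef]
  have hU0 : CPS5_U η0 = 0 := hesum
  have hW0 : CPS5_W e η0 = N^2 + (0 - N)/(N-1) - N := by
    unfold CPS5_W
    rw [hZ0, hU0, ← hNdef]
    norm_num
  -- the measures
  set μ : (Option (Fin n) → Bool) → ℝ := voterP (starQ n) t η0 with hμdef
  set ν : (Option (Fin n) → Bool) → ℝ := μinf with hνdef
  obtain ⟨hν0, hν1, hνst⟩ := hμ
  have hμ0 : ∀ s, 0 ≤ μ s := by
    intro s
    have hoff : ∀ η ξ, η ≠ ξ → 0 ≤ (t • voterGen (starQ n)) η ξ := by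
      intro η ξ hne
      have hval : (t • voterGen (starQ n)) η ξ = t * voterGen (starQ n) η ξ := rfl
      rw [hval]
      exact mul_nonneg ht.le (CPS5_voterGen_offdiag_nonneg η ξ (Ne.symm hne))
    exact CPS5_exp_entry_nonneg _ hoff η0 s
  have hEμ : ∀ (f : (Option (Fin n) → Bool) → ℝ) (lam : ℝ),
      voterGen (starQ n) *ᵥ f = lam • f →
      ∑ s, μ s * f s = Real.exp (t * lam) * f η0 := by
    intro f lam hf
    have h1 : (t • voterGen (starQ n)) *ᵥ f = (t * lam) • f := by
      rw [Matrix.smul_mulVec, hf, smul_smul]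
    have h2 := CPS5_exp_mulVec_eigen _ f (t * lam) h1
    have h3 : ∀ M : Matrix ((Option (Fin n)) → Bool) ((Option (Fin n)) → Bool) ℝ,
        (M *ᵥ f) η0 = ∑ s, M η0 s * f s := fun M => rfl
    have hμs : ∀ s, μ s = NormedSpace.exp (t • voterGen (starQ n)) η0 s := by
      intro s
      rw [hμdef]
      rfl
    calc ∑ s, μ s * f s
        = ∑ s, NormedSpace.exp (t • voterGen (starQ n)) η0 s * f s := by
          exact Finset.sum_congr rfl fun s _ => by rw [hμs s]
      _ = (NormedSpace.exp (t • voterGen (starQ n)) *ᵥ f) η0 := (h3 _).symm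
      _ = Real.exp (t * lam) * f η0 := by rw [h2]; simp
  have hμ1 : ∑ s, μ s = 1 := by
    have hQ1 : voterGen (starQ n) *ᵥ (fun _ => (1:ℝ)) = (0:ℝ) • (fun _ => (1:ℝ)) := by
      rw [CPS5_Q_one]; funext s; simp
    have := hEμ (fun _ => 1) 0 hQ1
    simpa using this
  have hEν : ∀ (f : (Option (Fin n) → Bool) → ℝ) (lam : ℝ),
      voterGen (starQ n) *ᵥ f = lam • f →
      lam * (∑ s, ν s * f s) = 0 := by
    intro f lam hf
    have h0 : ∑ s, ν s * ((voterGen (starQ n)) *ᵥ f) s = 0 := by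
      have hswap : ∑ s, ν s * ((voterGen (starQ n)) *ᵥ f) s
          = ∑ ξ, (∑ s, ν s * voterGen (starQ n) s ξ) * f ξ := by
        simp only [Matrix.mulVec, dotProduct, Finset.mul_sum, Finset.sum_mul]
        rw [Finset.sum_comm]
        exact Finset.sum_congr rfl fun ξ _ => Finset.sum_congr rfl fun s _ => by ring
      rw [hswap]
      refine Finset.sum_eq_zero fun ξ _ => ?_
      rw [hνst ξ, zero_mul]
    rw [hf] at h0
    have h1 : ∑ s, ν s * ((lam • f) s) = lam * ∑ s, ν s * f s := by
      rw [Finset.mul_sum]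
      exact Finset.sum_congr rfl fun s _ => by simp [smul_eq_mul]; ring
    rw [h1] at h0
    exact h0
  -- expectations of the eigenfunctions
  have hQZ := CPS5_QZ e hesum
  have hQW := CPS5_QW hn4 e he hesum
  have hEμZ : ∑ s, μ s * CPS5_Z e s = Real.exp (t * -2) * N := by
    rw [hEμ _ _ hQZ, hZ0]
  have hEμW : ∑ s, μ s * CPS5_W e s = Real.exp (t * -4) * CPS5_W e η0 := hEμ _ _ hQW
  have hEνZ : ∑ s, ν s * CPS5_Z e s = 0 := by
    have := hEν _ _ hQZ; linarith
  have hEνW : ∑ s, ν s * CPS5_W e s = 0 := by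
    have := hEν _ _ hQW; linarith
  -- second moments
  set Z : (Option (Fin n) → Bool) → ℝ := CPS5_Z e with hZdef
  set a : ℝ := Real.exp (t * -2) * N with hadef
  have ha_pos : 0 < a := mul_pos (Real.exp_pos _) hN0
  set Smu : ℝ := ∑ s, μ s * (Z s)^2 with hSmudef
  set Snu : ℝ := ∑ s, ν s * (Z s)^2 with hSnudef
  set SUmu : ℝ := ∑ s, μ s * (CPS5_U s)^2 with hSUmudef
  set SUnu : ℝ := ∑ s, ν s * (CPS5_U s)^2 with hSUnudef
  have hSUmu0 : 0 ≤ SUmu :=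
    Finset.sum_nonneg fun s _ => mul_nonneg (hμ0 s) (sq_nonneg _)
  have hSUnu0 : 0 ≤ SUnu :=
    Finset.sum_nonneg fun s _ => mul_nonneg (hν0 s) (sq_nonneg _)
  have hZsq : ∀ s, (Z s)^2 = CPS5_W e s - ((CPS5_U s)^2 - N)/(N-1) + N := by
    intro s
    rw [hZdef]
    unfold CPS5_W
    rw [← hNdef]
    ring
  have hmom : ∀ (m : (Option (Fin n) → Bool) → ℝ), (∑ s, m s = 1) →
      ∑ s, m s * (Z s)^2 = (∑ s, m s * CPS5_W e s)
        + (N - ∑ s, m s * (CPS5_U s)^2) / (N - 1) + N := by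
    intro m hm1
    have expand : ∀ s, m s * (Z s)^2
        = m s * CPS5_W e s + (m s * N - m s * (CPS5_U s)^2)/(N-1) + m s * N := by
      intro s
      rw [hZsq s]
      field_simp
      ring
    rw [Finset.sum_congr rfl fun s _ => expand s, Finset.sum_add_distrib,
      Finset.sum_add_distrib, ← Finset.sum_div, Finset.sum_sub_distrib,
      ← Finset.sum_mul, hm1]
    ring
  have hSmu_eq := hmom μ hμ1
  have hSnu_eq := hmom ν hν1
  have hWle : CPS5_W e η0 ≤ N^2 := by
    rw [hW0]
    have h1 : (0 - N)/(N-1) ≤ 0 :=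
      div_nonpos_of_nonpos_of_nonneg (by linarith) (by linarith)
    linarith
  have hNd2 : N/(N-1) ≤ 2 := by
    rw [div_le_iff₀ hNm1]; linarith
  have hSmu_le : Smu ≤ Real.exp (t * -4) * N^2 + N + 2 := by
    rw [hSmudef, hSmu_eq, ← hSUmudef, hEμW]
    have h1 : Real.exp (t * -4) * CPS5_W e η0 ≤ Real.exp (t * -4) * N^2 :=
      mul_le_mul_of_nonneg_left hWle (Real.exp_nonneg _)
    have h2 : (N - SUmu)/(N-1) ≤ N/(N-1) :=
      by
      rw [div_le_div_iff_of_pos_right hNm1]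
      linarith
    linarith
  have hSnu_le : Snu ≤ N + 2 := by
    rw [hSnudef, hSnu_eq, ← hSUnudef, hEνW]
    have h2 : (N - SUnu)/(N-1) ≤ N/(N-1) :=
      by
      rw [div_le_div_iff_of_pos_right hNm1]
      linarith
    linarith
  -- total variation and Cauchy-Schwarz
  set p : ℝ := tvDist μ ν with hpdef
  have hp0 : 0 ≤ p := by
    rw [hpdef]
    unfold tvDist
    positivity
  have habs : ∑ s, |μ s - ν s| = 2 * p := by
    rw [hpdef]
    unfold tvDist
    ring
  have hdg : ∑ s, (μ s - ν s) * (Z s - a/2) = a := by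
    have expand : ∀ s, (μ s - ν s) * (Z s - a/2)
        = μ s * Z s - ν s * Z s - (a/2) * μ s + (a/2) * ν s := fun s => by ring
    rw [Finset.sum_congr rfl fun s _ => expand s, Finset.sum_add_distrib,
      Finset.sum_sub_distrib, Finset.sum_sub_distrib, ← Finset.mul_sum, ← Finset.mul_sum,
      hμ1, hν1, hEμZ, hEνZ]
    ring
  have hstep1 : a ≤ ∑ s, |μ s - ν s| * |Z s - a/2| := by
    calc a = ∑ s, (μ s - ν s) * (Z s - a/2) := hdg.symm
    _ ≤ |∑ s, (μ s - ν s) * (Z s - a/2)| := le_abs_self _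
    _ ≤ ∑ s, |(μ s - ν s) * (Z s - a/2)| := Finset.abs_sum_le_sum_abs _ _
    _ = ∑ s, |μ s - ν s| * |Z s - a/2| := Finset.sum_congr rfl fun s _ => abs_mul _ _
  have hCS : a^2 ≤ (∑ s, |μ s - ν s|) * (∑ s, |μ s - ν s| * (Z s - a/2)^2) := by
    have h1 := Finset.sum_mul_sq_le_sq_mul_sq Finset.univ
      (fun s => Real.sqrt |μ s - ν s|) (fun s => Real.sqrt |μ s - ν s| * |Z s - a/2|)
    have h2 : ∀ s : Option (Fin n) → Bool,
        Real.sqrt |μ s - ν s| * (Real.sqrt |μ s - ν s| * |Z s - a/2|)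
        = |μ s - ν s| * |Z s - a/2| := by
      intro s
      rw [← mul_assoc, Real.mul_self_sqrt (abs_nonneg _)]
    have h3 : ∀ s : Option (Fin n) → Bool,
        (Real.sqrt |μ s - ν s|)^2 = |μ s - ν s| := fun s => Real.sq_sqrt (abs_nonneg _)
    have h4 : ∀ s : Option (Fin n) → Bool,
        (Real.sqrt |μ s - ν s| * |Z s - a/2|)^2 = |μ s - ν s| * (Z s - a/2)^2 := by
      intro s
      rw [mul_pow, Real.sq_sqrt (abs_nonneg _), sq_abs]
    rw [Finset.sum_congr rfl fun s _ => h2 s, Finset.sum_congr rfl fun s _ => h3 s,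
      Finset.sum_congr rfl fun s _ => h4 s] at h1
    calc a^2 ≤ (∑ s, |μ s - ν s| * |Z s - a/2|)^2 := by
          apply pow_le_pow_left₀ ha_pos.le hstep1
    _ ≤ _ := h1
  have hmid : ∑ s, |μ s - ν s| * (Z s - a/2)^2 ≤ Smu + Snu - a^2/2 := by
    have h1 : ∀ s, |μ s - ν s| * (Z s - a/2)^2 ≤ (μ s + ν s) * (Z s - a/2)^2 := by
      intro s
      refine mul_le_mul_of_nonneg_right ?_ (sq_nonneg _)
      have := hμ0 s
      have := hν0 s
      exact abs_le.mpr ⟨by linarith, by linarith⟩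
    have h2 : ∑ s, (μ s + ν s) * (Z s - a/2)^2 = Smu + Snu - a^2/2 := by
      have expand : ∀ s, (μ s + ν s) * (Z s - a/2)^2
          = μ s * (Z s)^2 + ν s * (Z s)^2 - a * (μ s * Z s) - a * (ν s * Z s)
            + (a^2/4) * μ s + (a^2/4) * ν s := fun s => by ring
      rw [Finset.sum_congr rfl fun s _ => expand s]
      simp only [Finset.sum_add_distrib, Finset.sum_sub_distrib, ← Finset.mul_sum]
      rw [hμ1, hν1, hEμZ, hEνZ, ← hSmudef, ← hSnudef]
      ring
    calc ∑ s, |μ s - ν s| * (Z s - a/2)^2 ≤ ∑ s, (μ s + ν s) * (Z s - a/2)^2 :=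
          Finset.sum_le_sum fun s _ => h1 s
    _ = Smu + Snu - a^2/2 := h2
  -- identify a^2
  have hexp4 : Real.exp (t * -4) = Real.exp C / N := by
    have hlog : t * -4 = C - Real.log N := by
      rw [htdef]; ring
    rw [hlog, Real.exp_sub, Real.exp_log hN0]
  have ha2 : a^2 = Real.exp C * N := by
    rw [hadef]
    have : (Real.exp (t * -2))^2 = Real.exp (t * -4) := by
      rw [sq, ← Real.exp_add]; ring_nf
    calc (Real.exp (t * -2) * N)^2 = (Real.exp (t * -2))^2 * N^2 := by ring
    _ = Real.exp (t * -4) * N^2 := by rw [this]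
    _ = (Real.exp C / N) * N^2 := by rw [hexp4]
    _ = Real.exp C * N := by field_simp
  -- final arithmetic
  have hkey : a^2 ≤ p * (a^2 + 6*N) := by
    have h1 : a^2 ≤ (2*p) * (Smu + Snu - a^2/2) := by
      calc a^2 ≤ (∑ s, |μ s - ν s|) * (∑ s, |μ s - ν s| * (Z s - a/2)^2) := hCS
      _ ≤ (∑ s, |μ s - ν s|) * (Smu + Snu - a^2/2) := by
          refine mul_le_mul_of_nonneg_left hmid ?_
          exact Finset.sum_nonneg fun s _ => abs_nonneg _
      _ = (2*p) * (Smu + Snu - a^2/2) := by rw [habs]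
    have h2 : Smu + Snu - a^2/2 ≤ a^2/2 + 3*N := by
      have : Real.exp (t * -4) * N^2 = a^2 := by
        rw [ha2, hexp4]; field_simp
      linarith
    calc a^2 ≤ (2*p) * (Smu + Snu - a^2/2) := h1
    _ ≤ (2*p) * (a^2/2 + 3*N) := by
        refine mul_le_mul_of_nonneg_left h2 (by linarith)
    _ = p * (a^2 + 6*N) := by ring
  have hEC := Real.exp_pos C
  have hden : 0 < Real.exp C * N + 6 * N := by positivity
  have hp_ge : (Real.exp C * N) / (Real.exp C * N + 6 * N) ≤ p := by
    rw [div_le_iff₀ hden]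
    calc Real.exp C * N = a^2 := ha2.symm
    _ ≤ p * (a^2 + 6*N) := hkey
    _ = p * (Real.exp C * N + 6 * N) := by rw [ha2]
  refine le_trans ?_ hp_ge
  rw [div_le_div_iff₀ (by positivity) hden]
  have hEN : (0:ℝ) ≤ Real.exp C * N := by positivity
  have h6 : (6:ℝ) * (Real.exp C * N) ≤ 48 * (Real.exp C * N) :=
    mul_le_mul_of_nonneg_right (by norm_num) hEN
  calc Real.exp C * (Real.exp C * N + 6 * N)
      = Real.exp C * Real.exp C * N + 6 * (Real.exp C * N) := by ring
    _ ≤ Real.exp C * Real.exp C * N + 48 * (Real.exp C * N) := by linarith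
    _ = Real.exp C * N * (48 + Real.exp C) := by ring
end

section
/- Fix a finite set S with |S| ≥ 2, nonnegative voting rates q, and a stationary distribution π for the chain (S,q). Define Φ : {0,1}^S → ℝ by Φ(η) = 2·∑_{x∈S} η(x)·π(x) − 1. Then for all t ≥ 0 and all η ∈ {0,1}^S, the noisy voter model satisfies E_η[Φ(η_t)] = e^{−t}·Φ(η); that is, ∑_{η' ∈ {0,1}^S} P^t(η,η')·Φ(η') = e^{−t}·Φ(η). Equivalently, Φ is an eigenfunction of the generator Q with Q·Φ = −Φ. -/
open scoped BigOperators

/-- Sign function: `1` on `true`, `-1` on `false`. -/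
private def sg (b : Bool) : ℝ := if b then 1 else -1

private lemma key_cancel {S : Type} [Fintype S] [DecidableEq S]
    (q : S → S → ℝ) (π : S → ℝ)
    (hπ : IsStationaryChain q π) (η : S → Bool) :
    ∑ x, ∑ y ∈ Finset.univ.filter (fun y => y ≠ x),
      π x * sg (η x) * (q x y * (if η y ≠ η x then 1 else 0)) = 0 := by
  have key : ∀ x y, π x * sg (η x) * (q x y * (if η y ≠ η x then 1 else 0))
      = (1/2) * (π x * q x y * sg (η x) - π x * q x y * sg (η y)) := by
    intro x y
    rcases Bool.eq_false_or_eq_true (η x) with h1 | h1 <;>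
      rcases Bool.eq_false_or_eq_true (η y) with h2 | h2 <;>
      simp [sg, h1, h2] <;> ring
  simp_rw [key, ← Finset.mul_sum, Finset.sum_sub_distrib]
  have hA : ∀ x, ∑ y ∈ Finset.univ.filter (fun y => y ≠ x), π x * q x y * sg (η x)
      = π x * sg (η x) * ∑ y ∈ Finset.univ.filter (fun y => y ≠ x), q x y := by
    intro x; rw [Finset.mul_sum]; apply Finset.sum_congr rfl; intro y _; ring
  have hswap : ∑ x, ∑ y ∈ Finset.univ.filter (fun y => y ≠ x), π x * q x y * sg (η y)
      = ∑ y, ∑ x ∈ Finset.univ.filter (fun x => x ≠ y), π x * q x y * sg (η y) := by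
    simp_rw [Finset.sum_filter]
    rw [Finset.sum_comm]
    refine Finset.sum_congr rfl fun y _ => Finset.sum_congr rfl fun x _ => ?_
    rcases eq_or_ne x y with h | h
    · simp [h]
    · simp [h, Ne.symm h]
  rw [hswap]
  have hB : ∀ y, ∑ x ∈ Finset.univ.filter (fun x => x ≠ y), π x * q x y * sg (η y)
      = (∑ x ∈ Finset.univ.filter (fun x => x ≠ y), π x * q x y) * sg (η y) := by
    intro y; rw [Finset.sum_mul]
  simp_rw [hA, hB, hπ.2.2]
  have : ∀ y, π y * (∑ z ∈ Finset.univ.filter (fun z => z ≠ y), q y z) * sg (η y)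
      = π y * sg (η y) * ∑ z ∈ Finset.univ.filter (fun z => z ≠ y), q y z := by
    intro y; ring
  simp_rw [this, sub_self, mul_zero]

private lemma gen_apply {S : Type} [Fintype S] [DecidableEq S]
    (r : (S → Bool) → S → ℝ) (Φ : (S → Bool) → ℝ) (η : S → Bool) :
    ∑ ξ : S → Bool, genOfRate r η ξ * Φ ξ
      = ∑ x, r η x * (Φ (Function.update η x (!η x)) - Φ η) := by
  unfold genOfRate
  simp_rw [sub_mul, Finset.sum_sub_distrib, Finset.sum_mul, ite_mul, zero_mul]
  rw [Finset.sum_comm]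
  simp_rw [Finset.sum_ite_eq', Finset.mem_univ, if_true, mul_sub, Finset.sum_sub_distrib]
  rw [Finset.sum_mul]

private lemma phi_flip {S : Type} [Fintype S] [DecidableEq S]
    (π : S → ℝ) (Φ : (S → Bool) → ℝ)
    (hΦ : ∀ η, Φ η = 2 * (∑ x, (if η x then (1 : ℝ) else 0) * π x) - 1)
    (η : S → Bool) (x : S) :
    Φ (Function.update η x (!η x)) - Φ η = -(2 * π x * sg (η x)) := by
  rw [hΦ, hΦ]
  have : (∑ y, (if Function.update η x (!η x) y then (1 : ℝ) else 0) * π y)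
      - ∑ y, (if η y then (1 : ℝ) else 0) * π y
      = ((if !η x then (1 : ℝ) else 0) - (if η x then (1 : ℝ) else 0)) * π x := by
    rw [← Finset.sum_sub_distrib]
    rw [Finset.sum_eq_single x]
    · simp [Function.update_self, sub_mul]
    · intro y _ hy; simp [Function.update_of_ne hy]
    · intro h; exact absurd (Finset.mem_univ x) h
  have h2 : (2 * (∑ y, (if Function.update η x (!η x) y then (1 : ℝ) else 0) * π y) - 1)
      - (2 * (∑ y, (if η y then (1 : ℝ) else 0) * π y) - 1)
      = 2 * (((if !η x then (1 : ℝ) else 0) - (if η x then (1 : ℝ) else 0)) * π x) := by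
    rw [← this]; ring
  rw [h2]
  rcases Bool.eq_false_or_eq_true (η x) with h | h <;> simp [h, sg] <;> ring

private lemma gen_eigen {S : Type} [Fintype S] [DecidableEq S]
    (q : S → S → ℝ) (π : S → ℝ) (hπ : IsStationaryChain q π)
    (Φ : (S → Bool) → ℝ)
    (hΦ : ∀ η, Φ η = 2 * (∑ x, (if η x then (1 : ℝ) else 0) * π x) - 1)
    (η : S → Bool) :
    ∑ η' : S → Bool, voterGen q η η' * Φ η' = -Φ η := by
  rw [voterGen, gen_apply]
  simp_rw [phi_flip π Φ hΦ η]
  have expand : ∀ x, voterRate q η x * -(2 * π x * sg (η x))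
      = -(π x * sg (η x))
        - 2 * ∑ y ∈ Finset.univ.filter (fun y => y ≠ x),
            π x * sg (η x) * (q x y * (if η y ≠ η x then 1 else 0)) := by
    intro x
    rw [voterRate, add_mul, Finset.sum_mul]
    have h1 : (1/2 : ℝ) * -(2 * π x * sg (η x)) = -(π x * sg (η x)) := by ring
    have h2 : ∀ y ∈ Finset.univ.filter (fun y => y ≠ x),
        (q x y * (if η y ≠ η x then 1 else 0)) * -(2 * π x * sg (η x))
        = -(2 * (π x * sg (η x) * (q x y * (if η y ≠ η x then 1 else 0)))) := by
      intro y _; ring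
    rw [h1, Finset.sum_congr rfl h2, Finset.sum_neg_distrib, ← Finset.mul_sum, sub_eq_add_neg]
  simp_rw [expand]
  rw [Finset.sum_sub_distrib, ← Finset.mul_sum, key_cancel q π hπ η, mul_zero, sub_zero,
    Finset.sum_neg_distrib, neg_inj]
  have hrw : 2 * (∑ x, (if η x then (1:ℝ) else 0) * π x) - 1
      = ∑ x, (2 * (if η x then (1:ℝ) else 0) - 1) * π x := by
    simp_rw [sub_mul, one_mul]
    rw [Finset.sum_sub_distrib, hπ.2.1]
    congr 1
    rw [Finset.mul_sum]
    exact Finset.sum_congr rfl fun x _ => by ring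
  rw [hΦ η, hrw]
  refine Finset.sum_congr rfl fun x _ => ?_
  rcases Bool.eq_false_or_eq_true (η x) with h | h <;> simp [h, sg] <;> ring

/-- **Eq. (5) of Cox–Peres–Steif.** For a stationary distribution `π` of the voting chain, the
function `Φ(η) = 2 ∑_x η(x) π(x) − 1` satisfies `E_η[Φ(η_t)] = e^{−t} Φ(η)`; equivalently, `Φ`
is an eigenfunction of the generator with `QΦ = −Φ`. -/
theorem stmt_10 {S : Type} [Fintype S] [DecidableEq S]
    (hS : 2 ≤ Fintype.card S)
    (q : S → S → ℝ) (hq : ∀ x y, 0 ≤ q x y) (hqdiag : ∀ x, q x x = 0)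
    (π : S → ℝ) (hπ : IsStationaryChain q π)
    (Φ : (S → Bool) → ℝ)
    (hΦ : ∀ η, Φ η = 2 * (∑ x, (if η x then (1 : ℝ) else 0) * π x) - 1) :
    (∀ t : ℝ, 0 ≤ t → ∀ η : S → Bool,
        ∑ η' : S → Bool, voterP q t η η' * Φ η' = Real.exp (-t) * Φ η)
      ∧ ∀ η : S → Bool, ∑ η' : S → Bool, voterGen q η η' * Φ η' = -Φ η := by
  have heig : ∀ η, ∑ η' : S → Bool, voterGen q η η' * Φ η' = -Φ η := gen_eigen q π hπ Φ hΦ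
  have hmv : (voterGen q).mulVec Φ = -Φ := by
    funext η
    simpa [Matrix.mulVec, dotProduct] using heig η
  refine ⟨?_, heig⟩
  intro t ht η
  letI : SeminormedRing (Matrix (S → Bool) (S → Bool) ℝ) := Matrix.linftyOpSemiNormedRing
  letI : NormedRing (Matrix (S → Bool) (S → Bool) ℝ) := Matrix.linftyOpNormedRing
  letI : NormedAlgebra ℝ (Matrix (S → Bool) (S → Bool) ℝ) := Matrix.linftyOpNormedAlgebra
  have hA : (t • voterGen q).mulVec Φ = (-t) • Φ := by
    rw [Matrix.smul_mulVec, hmv, smul_neg, ← neg_smul]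
  have hpow : ∀ n : ℕ, ((t • voterGen q) ^ n).mulVec Φ = ((-t) ^ n) • Φ := by
    intro n
    induction n with
    | zero => simp [Matrix.one_mulVec]
    | succ n ih =>
      rw [pow_succ, ← Matrix.mulVec_mulVec, hA, Matrix.mulVec_smul, ih, smul_smul, pow_succ, mul_comm]
  let L : Matrix (S → Bool) (S → Bool) ℝ →ₗ[ℝ] ℝ :=
    { toFun := fun A => ∑ η' : S → Bool, A η η' * Φ η'
      map_add' := by
        intro A B
        simp [Matrix.add_apply, add_mul, Finset.sum_add_distrib]
      map_smul' := by
        intro c A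
        simp [Matrix.smul_apply, Finset.mul_sum, smul_eq_mul, mul_assoc] }
  have hL : Continuous L := LinearMap.continuous_of_finiteDimensional L
  have hsum := NormedSpace.exp_series_hasSum_exp' (𝕂 := ℝ) (t • voterGen q)
  have h2 : HasSum (fun n : ℕ => L ((n.factorial⁻¹ : ℝ) • (t • voterGen q) ^ n))
      (L (NormedSpace.exp (t • voterGen q))) :=
    hsum.mapL ⟨L, hL⟩
  have hterm : ∀ n : ℕ, L ((n.factorial⁻¹ : ℝ) • (t • voterGen q) ^ n)
      = ((n.factorial⁻¹ : ℝ) • (-t) ^ n) * Φ η := by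
    intro n
    have h3 : L ((t • voterGen q) ^ n) = ((-t) ^ n) * Φ η := by
      have := congrFun (hpow n) η
      simpa [Matrix.mulVec, dotProduct, L] using this
    rw [map_smul]
    simp only [smul_eq_mul, h3]
    ring
  rw [funext hterm] at h2
  have h4 : HasSum (fun n : ℕ => ((n.factorial⁻¹ : ℝ) • (-t) ^ n) * Φ η)
      (NormedSpace.exp (-t) * Φ η) :=
    (NormedSpace.exp_series_hasSum_exp' (𝕂 := ℝ) (-t)).mul_right (Φ η)
  have h5 : L (NormedSpace.exp (t • voterGen q)) = NormedSpace.exp (-t) * Φ η :=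
    h2.unique h4
  rw [Real.exp_eq_exp_ℝ]
  exact h5
end

section
/- For every β ≥ 0 and all s, s1, s2 ∈ {−1, 1}: [1 + exp(2β·s·(s1 + s2))]^{−1} = (2/(1 + e^{4β})) · ( 1/2 + ((e^{4β} − 1)/4)·( 1{s1 ≠ s} + 1{s2 ≠ s} ) ). Consequently, the heat-bath stochastic Ising model on the cycle ℤ/nℤ with inverse temperature β, in which the spin at site x flips at rate [1 + exp(2β·σ(x)·(σ(x−1)+σ(x+1)))]^{−1}, has generator equal to θ = 2/(1+e^{4β}) times the generator of the noisy voter model on ℤ/nℤ with rates q(x,x+1) = q(x,x−1) = (e^{4β}−1)/4 (identifying spin −1 with state 0 and spin +1 with state 1). -/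
open scoped BigOperators

/-- Spin value of a Boolean state: `true ↦ +1`, `false ↦ −1`. -/
noncomputable def spin (b : Bool) : ℝ := if b then 1 else -1

/-- Heat-bath flip rate of the stochastic Ising model on the cycle `ℤ/nℤ` at inverse
temperature `β`. -/
noncomputable def isingRate (n : ℕ) [NeZero n] (β : ℝ) (η : ZMod n → Bool) (x : ZMod n) : ℝ :=
  (1 + Real.exp (2 * β * spin (η x) * (spin (η (x - 1)) + spin (η (x + 1)))))⁻¹

/-- Generator of the heat-bath stochastic Ising model on the cycle `ℤ/nℤ`. -/
noncomputable def isingGen (n : ℕ) [NeZero n] (β : ℝ) :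
    Matrix (ZMod n → Bool) (ZMod n → Bool) ℝ :=
  genOfRate (isingRate n β)

/-- Nearest-neighbour voting rates `q(x, x±1) = (e^{4β} − 1)/4` on the cycle `ℤ/nℤ`. -/
noncomputable def cycleQ (n : ℕ) [NeZero n] (β : ℝ) : ZMod n → ZMod n → ℝ :=
  fun x y => if y = x + 1 ∨ y = x - 1 then (Real.exp (4 * β) - 1) / 4 else 0


lemma scalar_id (β : ℝ) (s s1 s2 : ℝ) (hs : s = -1 ∨ s = 1) (hs1 : s1 = -1 ∨ s1 = 1)
    (hs2 : s2 = -1 ∨ s2 = 1) :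
    (1 + Real.exp (2 * β * s * (s1 + s2)))⁻¹
      = (2 / (1 + Real.exp (4 * β))) *
          (1 / 2 + ((Real.exp (4 * β) - 1) / 4) *
            ((if s1 ≠ s then (1 : ℝ) else 0) + (if s2 ≠ s then (1 : ℝ) else 0))) := by
  have hE := Real.exp_pos (4 * β)
  have hne : (1 : ℝ) + Real.exp (4 * β) ≠ 0 := by positivity
  rcases hs with rfl | rfl <;> rcases hs1 with rfl | rfl <;> rcases hs2 with rfl | rfl <;>
    norm_num <;> ring_nf <;>
    simp only [Real.exp_zero, Real.exp_neg, show β * 4 = 4 * β from by ring] <;>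
    field_simp <;> ring

lemma genOfRate_const_mul {V : Type} [Fintype V] [DecidableEq V] (c : ℝ)
    (r : (V → Bool) → V → ℝ) :
    genOfRate (fun η x => c * r η x) = c • genOfRate r := by
  funext η ξ
  simp only [genOfRate, Matrix.smul_apply, smul_eq_mul, mul_sub, Finset.mul_sum, mul_ite,
    mul_zero]

lemma natCast_ne_zero_of (n a : ℕ) [NeZero n] (h : ¬ n ∣ a) :
    ((a : ZMod n) ≠ 0) := by
  rw [Ne, ZMod.natCast_eq_zero_iff]
  exact h

lemma voterRate_eq_s13 (n : ℕ) [NeZero n] (hn : 3 ≤ n) (β : ℝ) (η : ZMod n → Bool) (x : ZMod n) :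
    voterRate (cycleQ n β) η x
      = 1 / 2 + (Real.exp (4 * β) - 1) / 4 *
          ((if η (x - 1) ≠ η x then (1 : ℝ) else 0) + (if η (x + 1) ≠ η x then (1 : ℝ) else 0)) := by
  have h1 : ((1 : ℕ) : ZMod n) ≠ 0 :=
    natCast_ne_zero_of n 1 (fun h => by have := Nat.le_of_dvd one_pos h; omega)
  have h2 : ((2 : ℕ) : ZMod n) ≠ 0 :=
    natCast_ne_zero_of n 2 (fun h => by have := Nat.le_of_dvd two_pos h; omega)
  have hp1 : x + 1 ≠ x := by
    intro h
    apply h1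
    have : x + 1 - x = 0 := by rw [h]; ring
    simpa using this
  have hm1 : x - 1 ≠ x := by
    intro h
    apply h1
    have : x - (x - 1) = 0 := by rw [h]; ring
    simpa using this
  have hpm : x + 1 ≠ x - 1 := by
    intro h
    apply h2
    have : (x + 1) - (x - 1) = 0 := by rw [h]; ring
    push_cast
    calc (2 : ZMod n) = (x + 1) - (x - 1) := by ring
      _ = 0 := this
  rw [voterRate]
  congr 1
  rw [show Finset.univ.filter (fun y => y ≠ x)
      = insert (x+1) {x-1} ∪ (Finset.univ.filter (fun y => y ≠ x) \ insert (x+1) {x-1}) from ?_]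
  · rw [Finset.sum_union Finset.disjoint_sdiff, Finset.sum_insert (by simp [hpm]),
      Finset.sum_singleton]
    have hz : ∀ y ∈ Finset.univ.filter (fun y => y ≠ x) \ insert (x+1) {x-1},
        cycleQ n β x y * (if η y ≠ η x then (1:ℝ) else 0) = 0 := by
      intro y hy
      simp only [Finset.mem_sdiff, Finset.mem_insert, Finset.mem_singleton, not_or] at hy
      rw [cycleQ]
      simp [hy.2.1, hy.2.2]
    rw [Finset.sum_eq_zero hz, add_zero, cycleQ, cycleQ]
    simp only [if_pos (Or.inl rfl), if_pos (Or.inr rfl)]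
    ring_nf
    simp only [true_or, or_true, if_true]
    ring
  · rw [Finset.union_sdiff_of_subset]
    intro y hy
    simp only [Finset.mem_insert, Finset.mem_singleton] at hy
    rcases hy with rfl | rfl <;> simp [hp1, hm1]

lemma spin_mem (b : Bool) : spin b = -1 ∨ spin b = 1 := by
  cases b <;> simp [spin]

lemma spin_ne_iff (a b : Bool) : (spin a ≠ spin b) ↔ a ≠ b := by
  cases a <;> cases b <;> norm_num [spin]

/-- **The Ising/noisy-voter correspondence on the cycle (Cox–Peres–Steif).** The elementary
rate identity on `{−1,1}`, and consequently: the heat-bath stochastic Ising model on `ℤ/nℤ`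
at inverse temperature `β` has generator `θ = 2/(1+e^{4β})` times the generator of the noisy
voter model with rates `q(x,x±1) = (e^{4β}−1)/4`. -/
theorem stmt_13 (β : ℝ) (hβ : 0 ≤ β) :
    (∀ s s1 s2 : ℝ, (s = -1 ∨ s = 1) → (s1 = -1 ∨ s1 = 1) → (s2 = -1 ∨ s2 = 1) →
      (1 + Real.exp (2 * β * s * (s1 + s2)))⁻¹
        = (2 / (1 + Real.exp (4 * β))) *
            (1 / 2 + ((Real.exp (4 * β) - 1) / 4) *
              ((if s1 ≠ s then (1 : ℝ) else 0) + (if s2 ≠ s then (1 : ℝ) else 0))))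
    ∧ ∀ n : ℕ, 3 ≤ n → ∀ _ : NeZero n,
        isingGen n β = (2 / (1 + Real.exp (4 * β))) • voterGen (cycleQ n β) := by
  refine ⟨fun s s1 s2 hs hs1 hs2 => scalar_id β s s1 s2 hs hs1 hs2, ?_⟩
  intro n hn inst
  haveI := inst
  have hrate : isingRate n β
      = fun η x => (2 / (1 + Real.exp (4 * β))) * voterRate (cycleQ n β) η x := by
    funext η x
    rw [isingRate, voterRate_eq_s13 n hn β η x,
      scalar_id β (spin (η x)) (spin (η (x - 1))) (spin (η (x + 1)))
        (spin_mem _) (spin_mem _) (spin_mem _)]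
    simp only [spin_ne_iff]
  rw [isingGen, voterGen, hrate, genOfRate_const_mul]
end

section
/- Let θ, θ1, θ2 ∈ (0, 1/2]. For ξ ∈ {−1,1}, let μ_ξ be the distribution on {−1,1}² of (σ1, σ2) where σ_m = ξ·ε0, σ1 = σ_m·ε1, σ2 = σ_m·ε2, and ε0, ε1, ε2 are independent ±1-valued random variables with P(ε0 = −1) = θ, P(ε1 = −1) = θ1, P(ε2 = −1) = θ2 (this is the noisy tree Υ with root ξ). Let ν_ξ be the distribution on {−1,1}² of (σ̂1, σ̂2) where σ̂1 = ξ·ε0'·ε1', σ̂2 = ξ·ε0''·ε2'', with ε0', ε0'', ε1', ε2'' independent, P(ε0' = −1) = P(ε0'' = −1) = θ, P(ε1' = −1) = θ1, P(ε2'' = −1) = θ2 (this is the stringy tree Υ̂ with root ξ). Then there exists a single Markov kernel K from {−1,1}² to {−1,1}² (not depending on ξ) such that for both ξ = −1 and ξ = +1, pushing ν_ξ through K yields μ_ξ; i.e., for all (a,b) ∈ {−1,1}², μ_ξ(a,b) = ∑_{(u,v)} ν_ξ(u,v)·K((u,v),(a,b)). In other words, the stringy tree Υ̂ dominates Υ.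 -/
open scoped BigOperators

/-- Encoding of `{−1,+1}` by `Bool`: `true ↦ +1`, `false ↦ −1`. Multiplication of signs is
then `a == b`. -/
def signMul (a b : Bool) : Bool := a == b

/-- Distribution of a `±1`-valued flip variable with flip probability `θ`
(`false`, i.e. `−1`, with probability `θ`). -/
noncomputable def flipPr (θ : ℝ) (b : Bool) : ℝ := if b then 1 - θ else θ

/-- The joint law `μ_ξ` of the two leaf spins `(σ₁, σ₂)` of the noisy tree `Υ` with root value
`ξ`: `σ_m = ξ·ε₀`, `σ₁ = σ_m·ε₁`, `σ₂ = σ_m·ε₂`, with independent flips `ε₀, ε₁, ε₂` of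
respective flip probabilities `θ, θ₁, θ₂`. -/
noncomputable def treeLaw (θ θ₁ θ₂ : ℝ) (ξ : Bool) (ab : Bool × Bool) : ℝ :=
  ∑ e₀ : Bool, ∑ e₁ : Bool, ∑ e₂ : Bool,
    flipPr θ e₀ * flipPr θ₁ e₁ * flipPr θ₂ e₂ *
      (if (signMul (signMul ξ e₀) e₁, signMul (signMul ξ e₀) e₂) = ab then 1 else 0)

/-- The joint law `ν_ξ` of the two leaf spins `(σ̂₁, σ̂₂)` of the stringy tree `Υ̂` with root
value `ξ`: `σ̂₁ = ξ·ε₀'·ε₁'`, `σ̂₂ = ξ·ε₀''·ε₂''`, with all four flips independent. -/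
noncomputable def stringyLaw (θ θ₁ θ₂ : ℝ) (ξ : Bool) (ab : Bool × Bool) : ℝ :=
  ∑ e₀ : Bool, ∑ e₀' : Bool, ∑ e₁ : Bool, ∑ e₂ : Bool,
    flipPr θ e₀ * flipPr θ e₀' * flipPr θ₁ e₁ * flipPr θ₂ e₂ *
      (if (signMul (signMul ξ e₀) e₁, signMul (signMul ξ e₀') e₂) = ab then 1 else 0)


lemma treeLaw_swap (θ θ₁ θ₂ : ℝ) (ξ a b : Bool) :
    treeLaw θ θ₁ θ₂ ξ (a, b) = treeLaw θ θ₂ θ₁ ξ (b, a) := by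
  cases ξ <;> cases a <;> cases b <;>
    simp [treeLaw, flipPr, signMul, Fintype.sum_bool, Prod.ext_iff] <;> ring

lemma stringyLaw_swap (θ θ₁ θ₂ : ℝ) (ξ a b : Bool) :
    stringyLaw θ θ₁ θ₂ ξ (a, b) = stringyLaw θ θ₂ θ₁ ξ (b, a) := by
  cases ξ <;> cases a <;> cases b <;>
    simp [stringyLaw, flipPr, signMul, Fintype.sum_bool, Prod.ext_iff] <;> ring

set_option maxHeartbeats 2000000 in
lemma key_aux_stmt14 (θ θ₁ θ₂ : ℝ) (hθ : θ ∈ Set.Ioc (0 : ℝ) (1 / 2))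
    (hθ₁ : θ₁ ∈ Set.Ioc (0 : ℝ) (1 / 2)) (hθ₂ : θ₂ ∈ Set.Ioc (0 : ℝ) (1 / 2))
    (hle : θ₁ ≤ θ₂) :
    ∃ K : Bool × Bool → Bool × Bool → ℝ,
      (∀ u v, 0 ≤ K u v) ∧ (∀ u, ∑ v, K u v = 1) ∧
        ∀ ξ : Bool, ∀ ab : Bool × Bool,
          treeLaw θ θ₁ θ₂ ξ ab = ∑ u, stringyLaw θ θ₁ θ₂ ξ u * K u ab := by
  obtain ⟨hθa, hθb⟩ := hθ
  obtain ⟨h1a, h1b⟩ := hθ₁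
  obtain ⟨h2a, h2b⟩ := hθ₂
  have hs0 : 0 ≤ 1 - 2 * θ := by linarith
  have hsl : 1 - 2 * θ < 1 := by linarith
  have h10 : 0 ≤ 1 - 2 * θ₁ := by linarith
  have h1l : 1 - 2 * θ₁ < 1 := by linarith
  have h20 : 0 ≤ 1 - 2 * θ₂ := by linarith
  have h21 : 1 - 2 * θ₂ ≤ 1 - 2 * θ₁ := by linarith
  have hss1 : 0 ≤ (1 - 2 * θ) * (1 - 2 * θ₁) := mul_nonneg hs0 h10
  have hss2 : (1 - 2 * θ) * (1 - 2 * θ₁) < 1 := by nlinarith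
  have hD0 : 0 < 1 - (1 - 2 * θ) ^ 2 * (1 - 2 * θ₁) ^ 2 := by nlinarith
  have hDne : 1 - (1 - 2 * θ) ^ 2 * (1 - 2 * θ₁) ^ 2 ≠ 0 := ne_of_gt hD0
  have hsq : (1 - 2 * θ) ^ 2 ≤ 1 := by nlinarith
  have h1sq : (1 - 2 * θ₁) ^ 2 ≤ 1 := by nlinarith
  set P : ℝ := (1 - (1 - 2 * θ₁) ^ 2 +
    (1 - 2 * θ₁) * (1 - 2 * θ₂) * (1 - (1 - 2 * θ) ^ 2)) /
      (1 - (1 - 2 * θ) ^ 2 * (1 - 2 * θ₁) ^ 2) with hP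
  set Q : ℝ := ((1 - 2 * θ₁) ^ 2 + (1 - 2 * θ₁) * (1 - 2 * θ₂) - 1 -
    (1 - 2 * θ) ^ 2 * (1 - 2 * θ₁) * (1 - 2 * θ₂)) /
      (1 - (1 - 2 * θ) ^ 2 * (1 - 2 * θ₁) ^ 2) with hQ
  have hmm : 0 ≤ (1 - 2 * θ₁) * ((1 - 2 * θ₁) - (1 - 2 * θ₂)) * (1 - (1 - 2 * θ) ^ 2) :=
    mul_nonneg (mul_nonneg h10 (by linarith)) (by nlinarith)
  have hP1 : P ≤ 1 := by rw [hP, div_le_one hD0]; nlinarith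
  have hP2 : -1 ≤ P := by
    rw [hP, le_div_iff₀ hD0]
    nlinarith [mul_nonneg (mul_nonneg h10 h20) (sub_nonneg.2 hsq)]
  have hQ1 : Q ≤ 1 := by rw [hQ, div_le_one hD0]; nlinarith
  have hQ2 : -1 ≤ Q := by
    rw [hQ, le_div_iff₀ hD0]
    nlinarith [mul_nonneg (mul_nonneg h10 h20) (sub_nonneg.2 hsq)]
  refine ⟨fun uv ab =>
    if ab.1 = uv.1 then
      (1 + (if uv.2 = uv.1 then P else Q) * (if ab.2 = uv.1 then 1 else -1)) / 2
    else 0, ?_, ?_, ?_⟩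
  · rintro ⟨u, v⟩ ⟨a, b⟩
    cases u <;> cases v <;> cases a <;> cases b <;> simp <;> linarith
  · rintro ⟨u, v⟩
    rw [Fintype.sum_prod_type]
    cases u <;> cases v <;> simp [Fintype.sum_bool] <;> ring
  · rintro ξ ⟨a, b⟩
    rw [Fintype.sum_prod_type]
    cases ξ <;> cases a <;> cases b <;>
      · simp only [treeLaw, stringyLaw, flipPr, signMul, Fintype.sum_bool, hP, hQ]
        norm_num
        field_simp [show (1 - (1 - θ₁ * 2) ^ 2 * (1 - θ * 2) ^ 2 : ℝ) ≠ 0 by convert hDne using 1; ring]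
        ring

/-- **Key special case of Theorem 6.1 of Evans–Kenyon–Peres–Schulman, as used by
Cox–Peres–Steif.** There is a single Markov kernel `K` on `{−1,1}²`, not depending on the root
value `ξ`, transforming the stringy-tree leaf law `ν_ξ` into the noisy-tree leaf law `μ_ξ`;
i.e. the stringy tree `Υ̂` dominates `Υ`. -/
theorem stmt_14 (θ θ₁ θ₂ : ℝ) (hθ : θ ∈ Set.Ioc (0 : ℝ) (1 / 2))
    (hθ₁ : θ₁ ∈ Set.Ioc (0 : ℝ) (1 / 2)) (hθ₂ : θ₂ ∈ Set.Ioc (0 : ℝ) (1 / 2)) :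
    ∃ K : Bool × Bool → Bool × Bool → ℝ,
      (∀ u v, 0 ≤ K u v) ∧ (∀ u, ∑ v, K u v = 1) ∧
        ∀ ξ : Bool, ∀ ab : Bool × Bool,
          treeLaw θ θ₁ θ₂ ξ ab = ∑ u, stringyLaw θ θ₁ θ₂ ξ u * K u ab := by
  rcases le_total θ₁ θ₂ with h | h
  · exact key_aux_stmt14 θ θ₁ θ₂ hθ hθ₁ hθ₂ h
  · obtain ⟨K, hK0, hK1, hKeq⟩ := key_aux_stmt14 θ θ₂ θ₁ hθ hθ₂ hθ₁ h
    refine ⟨fun u ab => K (u.2, u.1) (ab.2, ab.1), fun u v => hK0 _ _, ?_, ?_⟩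
    · intro u
      rw [← hK1 (u.2, u.1)]
      exact Fintype.sum_equiv (Equiv.prodComm Bool Bool) _ _ (fun v => rfl)
    · rintro ξ ⟨a, b⟩
      rw [treeLaw_swap, hKeq ξ (b, a)]
      refine (Fintype.sum_equiv (Equiv.prodComm Bool Bool) _ _ (fun u => ?_)).symm
      rcases u with ⟨x, y⟩
      simp [stringyLaw_swap θ θ₁ θ₂ ξ x y]
end

section
/- Consider the noisy voter model corresponding to continuous-time random walk with parameter 1 on the n-star, and the reduced chain on {0,1} × {0,1,…,n} obtained by recording the state of the center and the number of leaves in state 1. Then for all t ≥ 0 and all n ≥ 1: ‖μ^𝟏_t − μ_∞‖_TV = ‖P_n^t((1,n),·) − π_n‖_TV, where 𝟏 is the all-ones configuration of the full noisy voter model on the n-star, μ_∞ its stationary distribution, P_n^t the transition semigroup of the reduced chain, and π_n the stationary distribution of the reduced chain. -/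
open scoped BigOperators

/-- Off-diagonal jump rates of the reduced chain on `{0,1} × {0,1,…,n}` (state of the center,
number of leaves in state 1); `true` codes 1 and `false` codes 0. -/
noncomputable def reducedRate (n : ℕ) : Bool × Fin (n + 1) → Bool × Fin (n + 1) → ℝ :=
  fun s t =>
    if s.1 = t.1 then
      (if (t.2 : ℕ) = (s.2 : ℕ) + 1 then
        (if s.1 then 3 * ((n : ℝ) - ((s.2 : ℕ) : ℝ)) / 2 else ((n : ℝ) - ((s.2 : ℕ) : ℝ)) / 2)
      else if (s.2 : ℕ) = (t.2 : ℕ) + 1 then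
        (if s.1 then ((s.2 : ℕ) : ℝ) / 2 else 3 * ((s.2 : ℕ) : ℝ) / 2)
      else 0)
    else
      (if s.2 = t.2 then
        (if s.1 then 1 / 2 + ((n : ℝ) - ((s.2 : ℕ) : ℝ)) / (n : ℝ)
         else 1 / 2 + ((s.2 : ℕ) : ℝ) / (n : ℝ))
      else 0)

/-- Generator of the reduced chain on `{0,1} × {0,1,…,n}`. -/
noncomputable def reducedGen (n : ℕ) : Matrix (Bool × Fin (n + 1)) (Bool × Fin (n + 1)) ℝ :=
  fun s t => if s = t then -∑ u, reducedRate n s u else reducedRate n s t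

/-- Transition semigroup `P^t = exp (t Qₙ)` of the reduced chain. -/
noncomputable def reducedP (n : ℕ) (t : ℝ) :
    Matrix (Bool × Fin (n + 1)) (Bool × Fin (n + 1)) ℝ :=
  NormedSpace.exp (t • reducedGen n)

/-- `π` is a stationary distribution of the reduced chain. -/
def IsStationaryReduced (n : ℕ) (π : Bool × Fin (n + 1) → ℝ) : Prop :=
  (∀ s, 0 ≤ π s) ∧ (∑ s, π s = 1) ∧ ∀ t, ∑ s, π s * reducedGen n s t = 0


section Helpers
open Matrix Finset Function

lemma exp_intertwine {V S : Type} [Fintype V] [DecidableEq V] [Fintype S] [DecidableEq S]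
    (A : Matrix V V ℝ) (B : Matrix S S ℝ) (L : Matrix V S ℝ) (h : A * L = L * B) :
    NormedSpace.exp A * L = L * NormedSpace.exp B := by
  letI : NormedRing (Matrix V V ℝ) := Matrix.linftyOpNormedRing
  letI : NormedAlgebra ℝ (Matrix V V ℝ) := Matrix.linftyOpNormedAlgebra
  letI : NormedRing (Matrix S S ℝ) := Matrix.linftyOpNormedRing
  letI : NormedAlgebra ℝ (Matrix S S ℝ) := Matrix.linftyOpNormedAlgebra
  have hpow : ∀ m : ℕ, A ^ m * L = L * B ^ m := by
    intro m
    induction m with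
    | zero => simp
    | succ k ih => rw [pow_succ, pow_succ, Matrix.mul_assoc, h, ← Matrix.mul_assoc, ih,
        Matrix.mul_assoc]
  have hA : Summable fun n : ℕ => (((Nat.factorial n : ℝ))⁻¹) • A ^ n := NormedSpace.expSeries_summable' A
  have hB : Summable fun n : ℕ => (((Nat.factorial n : ℝ))⁻¹) • B ^ n := NormedSpace.expSeries_summable' B
  let f : Matrix V V ℝ →ₗ[ℝ] Matrix V S ℝ :=
    { toFun := fun M => M * L
      map_add' := fun M N => Matrix.add_mul M N L
      map_smul' := fun c M => Matrix.smul_mul c M L }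
  let g : Matrix S S ℝ →ₗ[ℝ] Matrix V S ℝ :=
    { toFun := fun M => L * M
      map_add' := fun M N => Matrix.mul_add L M N
      map_smul' := fun c M => Matrix.mul_smul L c M }
  have hf : Continuous f := LinearMap.continuous_of_finiteDimensional f
  have hg : Continuous g := LinearMap.continuous_of_finiteDimensional g
  have h1 : NormedSpace.exp A * L = f (NormedSpace.exp A) := rfl
  have h2 : L * NormedSpace.exp B = g (NormedSpace.exp B) := rfl
  rw [h1, h2, NormedSpace.exp_eq_tsum (𝕂 := ℝ), NormedSpace.exp_eq_tsum (𝕂 := ℝ)]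
  rw [hA.map_tsum f hf, hB.map_tsum g hg]
  congr 1
  funext n
  show (((Nat.factorial n : ℝ))⁻¹ • A ^ n) * L = L * (((Nat.factorial n : ℝ))⁻¹ • B ^ n)
  rw [Matrix.smul_mul, Matrix.mul_smul, hpow]


section Unique
variable {V : Type} [Fintype V] [DecidableEq V] [Nonempty V]

lemma harmonic_const (Q : Matrix V V ℝ) (hpos : ∀ x y, x ≠ y → 0 ≤ Q x y)
    (hrow : ∀ x, ∑ y, Q x y = 0)
    (hconn : ∀ x y : V, Relation.ReflTransGen (fun a b => a ≠ b ∧ 0 < Q a b) x y)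
    (f : V → ℝ) (hf : Q *ᵥ f = 0) (x y : V) : f x = f y := by
  obtain ⟨x0, -, hx0⟩ := Finset.exists_max_image Finset.univ f
    ⟨Classical.arbitrary V, Finset.mem_univ _⟩
  have key : ∀ z : V, Relation.ReflTransGen (fun a b => a ≠ b ∧ 0 < Q a b) x0 z → f z = f x0 := by
    intro z hz
    induction hz with
    | refl => rfl
    | tail hab hstep ih =>
      rename_i b c
      have hb : ∀ y, f y ≤ f b := by intro y; rw [ih]; exact hx0 y (Finset.mem_univ y)
      have h0 : ∑ y, Q b y * (f y - f b) = 0 := by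
        have h1 : ∑ y, Q b y * f y = 0 := congrFun hf b
        have h2 : ∑ y, Q b y * f b = 0 := by rw [← Finset.sum_mul, hrow, zero_mul]
        calc ∑ y, Q b y * (f y - f b) = ∑ y, (Q b y * f y - Q b y * f b) := by
              simp [mul_sub]
          _ = 0 := by rw [Finset.sum_sub_distrib, h1, h2, sub_zero]
      have h3 : ∑ y ∈ Finset.univ.filter (fun y => y ≠ b), Q b y * (f y - f b) = 0 := by
        rw [← Finset.sum_filter_add_sum_filter_not Finset.univ (fun y => y ≠ b)
          (fun y => Q b y * (f y - f b))] at h0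
        have hz : ∑ y ∈ Finset.univ.filter (fun y => ¬ y ≠ b), Q b y * (f y - f b) = 0 := by
          apply Finset.sum_eq_zero
          intro y hy
          simp only [Finset.mem_filter, not_not] at hy
          rw [hy.2]; simp
        rw [hz, add_zero] at h0
        exact h0
      have hterm := (Finset.sum_eq_zero_iff_of_nonpos (fun y hy => by
          have hyb : y ≠ b := (Finset.mem_filter.mp hy).2
          exact mul_nonpos_of_nonneg_of_nonpos (hpos b y (Ne.symm hyb))
            (by linarith [hb y]))).mp h3
      have hc : Q b c * (f c - f b) = 0 :=
        hterm c (Finset.mem_filter.mpr ⟨Finset.mem_univ c, Ne.symm hstep.1⟩)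
      have hfc : f c = f b := by
        rcases mul_eq_zero.mp hc with h | h
        · exact absurd h (ne_of_gt hstep.2)
        · linarith
      rw [hfc, ih]
  rw [key x (hconn x0 x), key y (hconn x0 y)]

lemma stationary_unique (Q : Matrix V V ℝ) (hpos : ∀ x y, x ≠ y → 0 ≤ Q x y)
    (hrow : ∀ x, ∑ y, Q x y = 0)
    (hconn : ∀ x y : V, Relation.ReflTransGen (fun a b => a ≠ b ∧ 0 < Q a b) x y)
    (μ ν : V → ℝ) (hμs : ∑ x, μ x = 1) (hνs : ∑ x, ν x = 1)
    (hμ : ∀ y, ∑ x, μ x * Q x y = 0) (hν : ∀ y, ∑ x, ν x * Q x y = 0) : μ = ν := by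
  classical
  -- right kernel of Q is the constants
  have hker : LinearMap.ker Q.mulVecLin = Submodule.span ℝ {(fun _ => (1:ℝ) : V → ℝ)} := by
    apply le_antisymm
    · intro f hf
      have hf' : Q *ᵥ f = 0 := hf
      have hc := harmonic_const Q hpos hrow hconn f hf'
      have : f = (f (Classical.arbitrary V)) • (fun _ => (1:ℝ)) := by
        funext z; simp [hc z (Classical.arbitrary V)]
      rw [this]
      exact Submodule.smul_mem _ _ (Submodule.mem_span_singleton_self _)
    · rw [Submodule.span_le]
      intro f hf
      simp only [Set.mem_singleton_iff] at hf
      subst hf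
      simp only [SetLike.mem_coe, LinearMap.mem_ker]
      show Q *ᵥ (fun _ => (1:ℝ)) = 0
      funext x
      simpa [Matrix.mulVec, dotProduct] using hrow x
  have hdim : Module.finrank ℝ (LinearMap.ker Q.mulVecLin) = 1 := by
    rw [hker]
    rw [finrank_span_singleton]
    intro h
    have := congrFun h (Classical.arbitrary V)
    simpa using this
  -- left kernel has dimension 1
  have hrank : Q.rank = Fintype.card V - 1 := by
    have := LinearMap.finrank_range_add_finrank_ker Q.mulVecLin
    rw [hdim] at this
    have hcard : Module.finrank ℝ (V → ℝ) = Fintype.card V := by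
      simp [Module.finrank_fintype_fun_eq_card]
    rw [hcard] at this
    have h1 : 1 ≤ Fintype.card V := Fintype.card_pos
    unfold Matrix.rank
    omega
  have hdimT : Module.finrank ℝ (LinearMap.ker (Q.transpose).mulVecLin) = 1 := by
    have h2 := LinearMap.finrank_range_add_finrank_ker (Q.transpose).mulVecLin
    have hcard : Module.finrank ℝ (V → ℝ) = Fintype.card V := by
      simp [Module.finrank_fintype_fun_eq_card]
    rw [hcard] at h2
    have h3 : (Q.transpose).rank = Fintype.card V - 1 := by
      rw [Matrix.rank_transpose, hrank]
    unfold Matrix.rank at h3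
    have h1 : 1 ≤ Fintype.card V := Fintype.card_pos
    omega
  have hμk : μ ∈ LinearMap.ker (Q.transpose).mulVecLin := by
    simp only [LinearMap.mem_ker]
    show Q.transpose *ᵥ μ = 0
    funext y
    simpa [Matrix.mulVec, dotProduct, Matrix.transpose, mul_comm] using hμ y
  have hνk : ν ∈ LinearMap.ker (Q.transpose).mulVecLin := by
    simp only [LinearMap.mem_ker]
    show Q.transpose *ᵥ ν = 0
    funext y
    simpa [Matrix.mulVec, dotProduct, Matrix.transpose, mul_comm] using hν y
  have hμ0 : μ ≠ 0 := by
    intro h; rw [h] at hμs; simpa using hμs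
  -- the kernel is spanned by μ
  have hspan : Submodule.span ℝ {(⟨μ, hμk⟩ : LinearMap.ker (Q.transpose).mulVecLin)} = ⊤ := by
    have hv0 : (⟨μ, hμk⟩ : LinearMap.ker (Q.transpose).mulVecLin) ≠ 0 := by
      intro h
      apply hμ0
      exact congrArg Subtype.val h
    exact (finrank_eq_one_iff_of_nonzero _ hv0).mp hdimT
  have : (⟨ν, hνk⟩ : LinearMap.ker (Q.transpose).mulVecLin) ∈
      Submodule.span ℝ {(⟨μ, hμk⟩ : LinearMap.ker (Q.transpose).mulVecLin)} := by
    rw [hspan]; trivial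
  obtain ⟨c, hc⟩ := Submodule.mem_span_singleton.mp this
  have hcv : ν = c • μ := by
    have := congrArg Subtype.val hc
    exact this.symm
  have hc1 : c = 1 := by
    have := hνs
    rw [hcv] at this
    simp only [Pi.smul_apply, smul_eq_mul, ← Finset.mul_sum, hμs, mul_one] at this
    exact this
  rw [hcv, hc1, one_smul]
end Unique


namespace CPS
variable {n : ℕ}

def cnt (η : Option (Fin n) → Bool) : ℕ :=
  (Finset.univ.filter (fun i : Fin n => η (some i) = true)).card

lemma cnt_le (η : Option (Fin n) → Bool) : cnt η ≤ n := by
  classical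
  calc cnt η ≤ (Finset.univ : Finset (Fin n)).card := Finset.card_filter_le _ _
    _ = n := by simp

def Phi (η : Option (Fin n) → Bool) : Bool × Fin (n + 1) :=
  (η none, ⟨cnt η, Nat.lt_succ_of_le (cnt_le η)⟩)

lemma rate_none (η : Option (Fin n) → Bool) :
    voterRate (starQ n) η none =
      1 / 2 + ((Finset.univ.filter (fun i : Fin n => η (some i) ≠ η none)).card : ℝ) / n := by
  unfold voterRate
  congr 1
  rw [Finset.sum_filter, Fintype.sum_option]
  have h1 : ∀ x : Fin n, (if (some x : Option (Fin n)) ≠ none then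
      starQ n none (some x) * (if η (some x) ≠ η none then 1 else 0) else 0)
      = (n : ℝ)⁻¹ * (if η (some x) ≠ η none then 1 else 0) := by
    intro x
    rw [if_pos (Option.some_ne_none x)]
    show (1 / (n : ℝ)) * _ = _
    rw [one_div]
  rw [Finset.sum_congr rfl fun x _ => h1 x, ← Finset.mul_sum]
  have h2 : (∑ x : Fin n, if η (some x) ≠ η none then (1:ℝ) else 0)
      = ((Finset.univ.filter (fun i : Fin n => η (some i) ≠ η none)).card : ℝ) := by
    rw [Finset.sum_boole]
  rw [h2]
  have : ¬ ((none : Option (Fin n)) ≠ none) := by simp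
  rw [if_neg this, zero_add, mul_comm, div_eq_mul_inv]

lemma rate_some (η : Option (Fin n) → Bool) (i : Fin n) :
    voterRate (starQ n) η (some i) = 1 / 2 + (if η none ≠ η (some i) then 1 else 0) := by
  unfold voterRate
  congr 1
  rw [Finset.sum_filter, Fintype.sum_option]
  have h1 : ∀ j : Fin n, (if (some j : Option (Fin n)) ≠ some i then
      starQ n (some i) (some j) * (if η (some j) ≠ η (some i) then 1 else 0) else 0) = 0 := by
    intro j
    have : starQ n (some i) (some j) = 0 := rfl
    simp [this]
  rw [Finset.sum_congr rfl (fun j _ => h1 j), Finset.sum_const, smul_zero, add_zero]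
  have : starQ n (some i) none = 1 := rfl
  simp [this]

end CPS


section GenLemmas
variable {V : Type} [Fintype V] [DecidableEq V]

lemma update_flip_ne (η : V → Bool) (x : V) : Function.update η x (!η x) ≠ η := by
  intro h
  have := congrFun h x
  simp at this

lemma gen_row_sum (r : (V → Bool) → V → ℝ) (η : V → Bool) :
    ∑ ξ, genOfRate r η ξ = 0 := by
  unfold genOfRate
  rw [Finset.sum_sub_distrib]
  rw [Finset.sum_comm]
  have h1 : ∀ x : V, (∑ ξ : V → Bool, if ξ = Function.update η x (!η x) then r η x else 0)
      = r η x := by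
    intro x
    rw [Finset.sum_ite_eq' Finset.univ (Function.update η x (!η x)) (fun _ => r η x)]
    simp
  rw [Finset.sum_congr rfl fun x _ => h1 x]
  rw [Finset.sum_ite_eq' Finset.univ η (fun _ => ∑ x, r η x)]
  simp

lemma gen_offdiag_nonneg (r : (V → Bool) → V → ℝ) (hr : ∀ η x, 0 ≤ r η x)
    (η ξ : V → Bool) (hne : η ≠ ξ) : 0 ≤ genOfRate r η ξ := by
  unfold genOfRate
  rw [if_neg (Ne.symm hne), sub_zero]
  refine Finset.sum_nonneg fun x _ => ?_
  split
  · exact hr η x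
  · exact le_refl 0

lemma gen_flip_pos (r : (V → Bool) → V → ℝ) (hr : ∀ η x, 0 ≤ r η x)
    (η : V → Bool) (x : V) (hx : 0 < r η x) :
    0 < genOfRate r η (Function.update η x (!η x)) := by
  unfold genOfRate
  rw [if_neg (update_flip_ne η x), sub_zero]
  apply Finset.sum_pos'
  · intro y _
    split
    · exact hr η y
    · exact le_refl 0
  · exact ⟨x, Finset.mem_univ x, by rw [if_pos rfl]; exact hx⟩

lemma hypercube_conn (Q : Matrix (V → Bool) (V → Bool) ℝ)
    (h : ∀ η x, 0 < Q η (Function.update η x (!η x))) (η ξ : V → Bool) :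
    Relation.ReflTransGen (fun a b => a ≠ b ∧ 0 < Q a b) η ξ := by
  classical
  generalize hm : (Finset.univ.filter (fun x => η x ≠ ξ x)).card = m
  induction m generalizing η with
  | zero =>
    have : η = ξ := by
      funext x
      by_contra hx
      have : x ∈ Finset.univ.filter (fun x => η x ≠ ξ x) := by
        simp [hx]
      rw [Finset.card_eq_zero] at hm
      simp [hm] at this
    rw [this]
  | succ m ih =>
    have hne : (Finset.univ.filter (fun x => η x ≠ ξ x)).Nonempty := by
      rw [← Finset.card_pos, hm]; omega
    obtain ⟨x, hx⟩ := hne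
    have hxd : η x ≠ ξ x := (Finset.mem_filter.mp hx).2
    set η' := Function.update η x (!η x) with hη'
    have hflip : η' x = ξ x := by
      rw [hη', Function.update_self]
      cases hb : η x <;> cases hc : ξ x <;> simp_all
    have hcard : (Finset.univ.filter (fun y => η' y ≠ ξ y)).card = m := by
      have hset : Finset.univ.filter (fun y => η' y ≠ ξ y)
          = (Finset.univ.filter (fun y => η y ≠ ξ y)).erase x := by
        ext y
        simp only [Finset.mem_filter, Finset.mem_erase, Finset.mem_univ, true_and]
        constructor
        · intro hy
          have hyx : y ≠ x := by
            intro h'; subst h'; exact hy hflip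
          rw [hη', Function.update_of_ne hyx] at hy
          exact ⟨hyx, hy⟩
        · intro ⟨hyx, hy⟩
          rw [hη', Function.update_of_ne hyx]
          exact hy
      rw [hset, Finset.card_erase_of_mem hx, hm]
      omega
    have hstep : (fun a b => a ≠ b ∧ 0 < Q a b) η η' :=
      ⟨(update_flip_ne η x).symm, h η x⟩
    exact Relation.ReflTransGen.head hstep (ih η' hcard)

end GenLemmas


namespace CPS
variable {n : ℕ}

/-- noise rate for flipping the center -/
noncomputable def rC (n : ℕ) (b : Bool) (k : ℕ) : ℝ :=
  if b then 1 / 2 + ((n : ℝ) - (k : ℝ)) / n else 1 / 2 + (k : ℝ) / n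

/-- flip rate of a leaf currently in state 1 -/
noncomputable def cS (b : Bool) : ℝ := if b then 1 / 2 else 3 / 2

/-- flip rate of a leaf currently in state 0 -/
noncomputable def cT (b : Bool) : ℝ := if b then 3 / 2 else 1 / 2

/-- total flip rate out of a configuration with center `b` and `k` ones -/
noncomputable def sigR (n : ℕ) (b : Bool) (k : ℕ) : ℝ :=
  rC n b k + (k : ℝ) * cS b + ((n : ℝ) - (k : ℝ)) * cT b

/-- explicit form of a lumped generator row -/
noncomputable def Faux (n : ℕ) (b : Bool) (kf : Fin (n + 1)) (s : Bool × Fin (n + 1)) : ℝ :=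
  (if s = (!b, kf) then rC n b (kf : ℕ) else 0)
    + (if s.1 = b ∧ (s.2 : ℕ) + 1 = (kf : ℕ) then ((kf : ℕ) : ℝ) * cS b else 0)
    + (if s.1 = b ∧ (s.2 : ℕ) = (kf : ℕ) + 1 then ((n : ℝ) - ((kf : ℕ) : ℝ)) * cT b else 0)
    - (if s = (b, kf) then sigR n b (kf : ℕ) else 0)

lemma rate_row_sum (b : Bool) (kf : Fin (n + 1)) :
    ∑ u, reducedRate n (b, kf) u = sigR n b (kf : ℕ) := by
  set k : ℕ := (kf : ℕ) with hk
  have hkn : k ≤ n := Fin.is_le kf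
  rw [Fintype.sum_prod_type]
  have hbool : ∀ g : Bool → ℝ, ∑ c, g c = g b + g (!b) := by
    intro g; cases b <;> simp [Fintype.sum_bool] <;> ring
  rw [hbool]
  have h1 : ∑ m : Fin (n + 1), reducedRate n (b, kf) (!b, m) = rC n b k := by
    have : ∀ m : Fin (n + 1), reducedRate n (b, kf) (!b, m)
        = if m = kf then rC n b k else 0 := by
      intro m
      unfold reducedRate rC
      have hb : ¬ (b = !b) := by cases b <;> simp
      rw [if_neg hb]
      by_cases hm : m = kf
      · rw [if_pos hm.symm, if_pos hm]
      · rw [if_neg (fun h => hm h.symm), if_neg hm]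
    rw [Finset.sum_congr rfl fun m _ => this m, Finset.sum_ite_eq' Finset.univ kf]
    simp
  have h2 : ∑ m : Fin (n + 1), reducedRate n (b, kf) (b, m)
      = (k : ℝ) * cS b + ((n : ℝ) - (k : ℝ)) * cT b := by
    have hA : ∀ m : Fin (n + 1), reducedRate n (b, kf) (b, m)
        = (if (m : ℕ) = k + 1 then ((n : ℝ) - (k : ℝ)) * cT b else 0)
          + (if k = (m : ℕ) + 1 then (k : ℝ) * cS b else 0) := by
      intro m
      unfold reducedRate cS cT
      rw [if_pos rfl]
      simp only []
      split_ifs <;> first | omega | (push_cast; ring)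
    rw [Finset.sum_congr rfl fun m _ => hA m, Finset.sum_add_distrib]
    have hup : (∑ m : Fin (n + 1), if (m : ℕ) = k + 1 then ((n : ℝ) - (k : ℝ)) * cT b else 0)
        = ((n : ℝ) - (k : ℝ)) * cT b := by
      rcases Nat.lt_or_ge k n with hlt | hge
      · have : ∀ m : Fin (n + 1), ((m : ℕ) = k + 1) ↔ (m = ⟨k + 1, by omega⟩) := by
          intro m; rw [Fin.ext_iff]
        simp only [this]
        rw [Finset.sum_ite_eq' Finset.univ (⟨k + 1, by omega⟩ : Fin (n + 1))]
        simp
      · have hkn' : k = n := le_antisymm hkn hge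
        have : ∀ m : Fin (n + 1), ¬ ((m : ℕ) = k + 1) := by
          intro m; have := Fin.is_le m; omega
        simp only [this, if_false, Finset.sum_const_zero]
        rw [hkn']; ring
    have hdn : (∑ m : Fin (n + 1), if k = (m : ℕ) + 1 then (k : ℝ) * cS b else 0)
        = (k : ℝ) * cS b := by
      rcases Nat.eq_zero_or_pos k with h0 | hpos
      · have : ∀ m : Fin (n + 1), ¬ (k = (m : ℕ) + 1) := by intro m; omega
        simp only [this, if_false, Finset.sum_const_zero, h0]
        simp
      · have : ∀ m : Fin (n + 1), (k = (m : ℕ) + 1) ↔ (m = ⟨k - 1, by omega⟩) := by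
          intro m; rw [Fin.ext_iff]; simp only []; omega
        simp only [this]
        rw [Finset.sum_ite_eq' Finset.univ (⟨k - 1, by omega⟩ : Fin (n + 1))]
        simp
    rw [hup, hdn]; ring
  rw [h1, h2]
  unfold sigR
  ring

lemma reduced_eq_Faux (b : Bool) (kf : Fin (n + 1)) (s : Bool × Fin (n + 1)) :
    reducedGen n (b, kf) s = Faux n b kf s := by
  set k : ℕ := (kf : ℕ) with hk
  have hkn : k ≤ n := Fin.is_le kf
  obtain ⟨c, m⟩ := s
  unfold reducedGen Faux
  by_cases hdiag : ((b, kf) : Bool × Fin (n + 1)) = (c, m)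
  · rw [if_pos hdiag, rate_row_sum]
    obtain ⟨hc, hm⟩ := Prod.ext_iff.mp hdiag
    simp only at hc hm
    subst hc; subst hm
    have h1 : ¬ (((b, kf) : Bool × Fin (n + 1)) = (!b, kf)) := by
      intro h
      have h' := (Prod.ext_iff.mp h).1
      simp only at h'
      cases b <;> exact Bool.noConfusion h'
    have h2 : ¬ ((kf : ℕ) + 1 = k) := by omega
    have h3 : ¬ ((kf : ℕ) = k + 1) := by omega
    rw [if_neg h1, if_pos rfl]
    have h2' : ¬ ((kf : ℕ) + 1 = (kf : ℕ)) := by omega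
    have h3' : ¬ ((kf : ℕ) = (kf : ℕ) + 1) := by omega
    simp only [h2, h3, h2', h3', and_false, if_false]
    ring
  · rw [if_neg hdiag]
    have h4 : ¬ (((c, m) : Bool × Fin (n + 1)) = (b, kf)) := fun h => hdiag h.symm
    rw [if_neg h4]
    unfold reducedRate
    by_cases hc : c = b
    · subst hc
      rw [if_pos rfl]
      have h1 : ¬ (((c, m) : Bool × Fin (n + 1)) = (!c, kf)) := by
        intro h
        have h' := (Prod.ext_iff.mp h).1
        simp only at h'
        cases c <;> exact Bool.noConfusion h'
      rw [if_neg h1]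
      simp only [true_and]
      by_cases hup : (m : ℕ) = (kf : ℕ) + 1
      · rw [if_pos hup, if_pos hup, if_neg (show ¬ ((m : ℕ) + 1 = (kf : ℕ)) by omega)]
        simp only [cT]
        cases c <;> norm_num <;> ring
      · rw [if_neg hup, if_neg hup]
        by_cases hdn : (kf : ℕ) = (m : ℕ) + 1
        · rw [if_pos hdn, if_pos (show (m : ℕ) + 1 = (kf : ℕ) by omega)]
          simp only [cS]
          cases c <;> norm_num <;> ring
        · rw [if_neg hdn, if_neg (show ¬ ((m : ℕ) + 1 = (kf : ℕ)) by omega)]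
          ring
    · rw [if_neg (fun h => hc h.symm)]
      have h2 : ¬ (c = b ∧ (m : ℕ) + 1 = k) := fun h => hc h.1
      have h3 : ¬ (c = b ∧ (m : ℕ) = k + 1) := fun h => hc h.1
      rw [if_neg h2, if_neg h3]
      have hcb : c = !b := by
        cases b <;> cases c <;> first | rfl | (exact absurd rfl hc)
      by_cases hm : m = kf
      · subst hm
        rw [if_pos (show ((c, m) : Bool × Fin (n + 1)) = (!b, m) by rw [hcb]), if_pos rfl]
        unfold rC
        cases b <;> simp
      · have h5 : ¬ (((c, m) : Bool × Fin (n + 1)) = (!b, kf)) := by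
          intro h; exact hm (Prod.mk.injEq .. ▸ h).2
        have h6 : ¬ (kf = m) := fun h => hm h.symm
        rw [if_neg h5, if_neg h6]
        ring
end CPS


end Helpers


namespace CPS
variable {n : ℕ}

lemma cnt_update_none (η : Option (Fin n) → Bool) (v : Bool) :
    cnt (Function.update η none v) = cnt η := by
  unfold cnt
  apply congrArg Finset.card
  apply Finset.filter_congr
  intro i _
  rw [Function.update_of_ne (Option.some_ne_none i)]

lemma Phi_flip_center (η : Option (Fin n) → Bool) :
    Phi (Function.update η none (!η none)) = (!η none, (Phi η).2) := by
  apply Prod.ext_iff.mpr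
  constructor
  · show Function.update η none (!η none) none = !η none
    exact Function.update_self _ _ _
  · exact Fin.ext (cnt_update_none η _)

lemma filter_flip_true (η : Option (Fin n) → Bool) (i : Fin n) (hi : η (some i) = true) :
    (Finset.univ.filter fun j : Fin n =>
        (Function.update η (some i) (!η (some i))) (some j) = true)
      = (Finset.univ.filter fun j : Fin n => η (some j) = true).erase i := by
  ext j
  simp only [Finset.mem_filter, Finset.mem_erase, Finset.mem_univ, true_and]
  by_cases hj : j = i
  · subst hj
    rw [Function.update_self]
    simp [hi]
  · rw [Function.update_of_ne (fun h => hj (Option.some_inj.mp h))]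
    simp [hj]

lemma filter_flip_false (η : Option (Fin n) → Bool) (i : Fin n) (hi : η (some i) = false) :
    (Finset.univ.filter fun j : Fin n =>
        (Function.update η (some i) (!η (some i))) (some j) = true)
      = insert i (Finset.univ.filter fun j : Fin n => η (some j) = true) := by
  ext j
  simp only [Finset.mem_filter, Finset.mem_insert, Finset.mem_univ, true_and]
  by_cases hj : j = i
  · subst hj
    rw [Function.update_self]
    simp [hi]
  · rw [Function.update_of_ne (fun h => hj (Option.some_inj.mp h))]
    simp [hj]

lemma Phi_flip_true_eq (η : Option (Fin n) → Bool) (i : Fin n) (hi : η (some i) = true)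
    (s : Bool × Fin (n + 1)) :
    (Phi (Function.update η (some i) (!η (some i))) = s)
      ↔ (s.1 = η none ∧ (s.2 : ℕ) + 1 = cnt η) := by
  have hiS : i ∈ Finset.univ.filter (fun j : Fin n => η (some j) = true) := by
    simp [hi]
  have h1 : 1 ≤ cnt η := Finset.card_pos.mpr ⟨i, hiS⟩
  have hcnt : cnt (Function.update η (some i) (!η (some i))) = cnt η - 1 := by
    unfold cnt
    rw [filter_flip_true η i hi, Finset.card_erase_of_mem hiS]
  have hnone : (Function.update η (some i) (!η (some i))) none = η none :=
    Function.update_of_ne (Option.some_ne_none i).symm _ _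
  rw [Prod.ext_iff]
  constructor
  · rintro ⟨ha, hb⟩
    refine ⟨by rw [← ha]; exact hnone.symm, ?_⟩
    have := congrArg Fin.val hb
    show (s.2 : ℕ) + 1 = cnt η
    rw [← this]
    show (cnt (Function.update η (some i) (!η (some i)))) + 1 = cnt η
    omega
  · rintro ⟨ha, hb⟩
    constructor
    · show (Function.update η (some i) (!η (some i))) none = s.1
      rw [hnone, ha]
    · apply Fin.ext
      show cnt (Function.update η (some i) (!η (some i))) = (s.2 : ℕ)
      omega

lemma Phi_flip_false_eq (η : Option (Fin n) → Bool) (i : Fin n) (hi : η (some i) = false)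
    (s : Bool × Fin (n + 1)) :
    (Phi (Function.update η (some i) (!η (some i))) = s)
      ↔ (s.1 = η none ∧ (s.2 : ℕ) = cnt η + 1) := by
  have hiS : i ∉ Finset.univ.filter (fun j : Fin n => η (some j) = true) := by
    simp [hi]
  have hcnt : cnt (Function.update η (some i) (!η (some i))) = cnt η + 1 := by
    unfold cnt
    rw [filter_flip_false η i hi, Finset.card_insert_of_notMem hiS]
  have hnone : (Function.update η (some i) (!η (some i))) none = η none :=
    Function.update_of_ne (Option.some_ne_none i).symm _ _
  rw [Prod.ext_iff]
  constructor
  · rintro ⟨ha, hb⟩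
    refine ⟨by rw [← ha]; exact hnone.symm, ?_⟩
    have := congrArg Fin.val hb
    show (s.2 : ℕ) = cnt η + 1
    rw [← this]
    show (cnt (Function.update η (some i) (!η (some i)))) = cnt η + 1
    exact hcnt
  · rintro ⟨ha, hb⟩
    constructor
    · show (Function.update η (some i) (!η (some i))) none = s.1
      rw [hnone, ha]
    · apply Fin.ext
      show cnt (Function.update η (some i) (!η (some i))) = (s.2 : ℕ)
      omega

lemma rate_none_rC (η : Option (Fin n) → Bool) :
    voterRate (starQ n) η none = rC n (η none) (cnt η) := by
  rw [rate_none]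
  unfold rC
  cases hb : η none
  · rw [if_neg (by simp)]
    have hset : (Finset.univ.filter (fun i : Fin n => η (some i) ≠ false))
        = (Finset.univ.filter (fun i : Fin n => η (some i) = true)) := by
      apply Finset.filter_congr
      intro i _
      simp
    rw [hset]
    rfl
  · rw [if_pos rfl]
    congr 1
    have hset : (Finset.univ.filter (fun i : Fin n => η (some i) ≠ true))
        = Finset.univ \ (Finset.univ.filter (fun i : Fin n => η (some i) = true)) := by
      rw [← Finset.filter_not]
    rw [hset, Finset.card_sdiff_of_subset (Finset.filter_subset _ _)]
    have hle : cnt η ≤ n := cnt_le η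
    rw [Finset.card_univ, Fintype.card_fin]
    show ((n - cnt η : ℕ) : ℝ) / n = ((n : ℝ) - (cnt η : ℝ)) / n
    rw [Nat.cast_sub hle]

lemma rate_some_cS (η : Option (Fin n) → Bool) (i : Fin n) (hi : η (some i) = true) :
    voterRate (starQ n) η (some i) = cS (η none) := by
  rw [rate_some, hi]
  unfold cS
  cases hb : η none <;> norm_num

lemma rate_some_cT (η : Option (Fin n) → Bool) (i : Fin n) (hi : η (some i) = false) :
    voterRate (starQ n) η (some i) = cT (η none) := by
  rw [rate_some, hi]
  unfold cT
  cases hb : η none <;> norm_num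

lemma card_not_cnt (η : Option (Fin n) → Bool) :
    (Finset.univ.filter (fun j : Fin n => ¬ η (some j) = true)).card = n - cnt η := by
  rw [Finset.filter_not, Finset.card_sdiff_of_subset (Finset.filter_subset _ _)]
  rw [Finset.card_univ, Fintype.card_fin]
  rfl

lemma sum_rates (η : Option (Fin n) → Bool) :
    ∑ x, voterRate (starQ n) η x = sigR n (η none) (cnt η) := by
  rw [Fintype.sum_option, rate_none_rC]
  have hleaf : ∑ i : Fin n, voterRate (starQ n) η (some i)
      = (cnt η : ℝ) * cS (η none) + ((n : ℝ) - (cnt η : ℝ)) * cT (η none) := by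
    rw [← Finset.sum_filter_add_sum_filter_not Finset.univ (fun j : Fin n => η (some j) = true)]
    have h1 : ∑ i ∈ Finset.univ.filter (fun j : Fin n => η (some j) = true),
        voterRate (starQ n) η (some i) = (cnt η : ℝ) * cS (η none) := by
      rw [Finset.sum_congr rfl (fun i hi => rate_some_cS η i (Finset.mem_filter.mp hi).2)]
      rw [Finset.sum_const, nsmul_eq_mul]
      rfl
    have h2 : ∑ i ∈ Finset.univ.filter (fun j : Fin n => ¬ η (some j) = true),
        voterRate (starQ n) η (some i) = ((n : ℝ) - (cnt η : ℝ)) * cT (η none) := by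
      rw [Finset.sum_congr rfl (fun i hi => rate_some_cT η i
        (Bool.not_eq_true _ ▸ (Finset.mem_filter.mp hi).2))]
      rw [Finset.sum_const, nsmul_eq_mul, card_not_cnt]
      rw [Nat.cast_sub (cnt_le η)]
    rw [h1, h2]
  rw [hleaf]
  unfold sigR
  ring

end CPS


namespace CPS
variable {n : ℕ}

lemma lump_lhs (η : Option (Fin n) → Bool) (s : Bool × Fin (n + 1)) :
    ∑ ξ, voterGen (starQ n) η ξ * (if Phi ξ = s then (1 : ℝ) else 0)
      = Faux n (η none) (Phi η).2 s := by
  classical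
  have hval : (((Phi η).2 : ℕ)) = cnt η := rfl
  have step1 : ∑ ξ, voterGen (starQ n) η ξ * (if Phi ξ = s then (1 : ℝ) else 0)
      = (∑ x, (if Phi (Function.update η x (!η x)) = s then (1 : ℝ) else 0)
          * voterRate (starQ n) η x)
        - (if Phi η = s then (1 : ℝ) else 0) * ∑ x, voterRate (starQ n) η x := by
    unfold voterGen genOfRate
    simp only [sub_mul]
    rw [Finset.sum_sub_distrib]
    congr 1
    · simp only [Finset.sum_mul]
      rw [Finset.sum_comm]
      apply Finset.sum_congr rfl
      intro x _
      simp only [ite_mul, zero_mul]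
      rw [Finset.sum_ite_eq' Finset.univ (Function.update η x (!η x))
        (fun ξ => voterRate (starQ n) η x * (if Phi ξ = s then (1 : ℝ) else 0))]
      rw [if_pos (Finset.mem_univ _)]
      split_ifs <;> ring
    · simp only [ite_mul, zero_mul]
      rw [Finset.sum_ite_eq' Finset.univ η
        (fun ξ => (∑ x, voterRate (starQ n) η x) * (if Phi ξ = s then (1 : ℝ) else 0))]
      rw [if_pos (Finset.mem_univ _)]
      split_ifs <;> ring
  rw [step1, Fintype.sum_option, sum_rates]
  have hcen : (if Phi (Function.update η none (!η none)) = s then (1 : ℝ) else 0)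
      * voterRate (starQ n) η none
      = (if s = (!η none, (Phi η).2) then rC n (η none) (cnt η) else 0) := by
    rw [Phi_flip_center, rate_none_rC]
    by_cases h : s = (!η none, (Phi η).2)
    · rw [if_pos h.symm, if_pos h, one_mul]
    · rw [if_neg (fun hh => h hh.symm), if_neg h, zero_mul]
  have hleaf : ∑ i : Fin n,
      (if Phi (Function.update η (some i) (!η (some i))) = s then (1 : ℝ) else 0)
        * voterRate (starQ n) η (some i)
      = (if s.1 = η none ∧ (s.2 : ℕ) + 1 = cnt η then (cnt η : ℝ) * cS (η none) else 0)
        + (if s.1 = η none ∧ (s.2 : ℕ) = cnt η + 1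
            then ((n : ℝ) - (cnt η : ℝ)) * cT (η none) else 0) := by
    rw [← Finset.sum_filter_add_sum_filter_not Finset.univ (fun j : Fin n => η (some j) = true)]
    have h1 : ∑ i ∈ Finset.univ.filter (fun j : Fin n => η (some j) = true),
        (if Phi (Function.update η (some i) (!η (some i))) = s then (1 : ℝ) else 0)
          * voterRate (starQ n) η (some i)
        = (if s.1 = η none ∧ (s.2 : ℕ) + 1 = cnt η then (cnt η : ℝ) * cS (η none) else 0) := by
      have hterm : ∀ i ∈ Finset.univ.filter (fun j : Fin n => η (some j) = true),
          (if Phi (Function.update η (some i) (!η (some i))) = s then (1 : ℝ) else 0)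
            * voterRate (starQ n) η (some i)
          = (if s.1 = η none ∧ (s.2 : ℕ) + 1 = cnt η then (1 : ℝ) else 0) * cS (η none) := by
        intro i hi
        have hi' : η (some i) = true := (Finset.mem_filter.mp hi).2
        rw [rate_some_cS η i hi']
        congr 1
        exact if_congr (Phi_flip_true_eq η i hi' s) rfl rfl
      rw [Finset.sum_congr rfl hterm, Finset.sum_const, nsmul_eq_mul]
      show (cnt η : ℝ) * ((if s.1 = η none ∧ (s.2 : ℕ) + 1 = cnt η then (1 : ℝ) else 0)
        * cS (η none)) = _
      by_cases h : s.1 = η none ∧ (s.2 : ℕ) + 1 = cnt η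
      · rw [if_pos h, if_pos h]; ring
      · rw [if_neg h, if_neg h]; ring
    have h2 : ∑ i ∈ Finset.univ.filter (fun j : Fin n => ¬ η (some j) = true),
        (if Phi (Function.update η (some i) (!η (some i))) = s then (1 : ℝ) else 0)
          * voterRate (starQ n) η (some i)
        = (if s.1 = η none ∧ (s.2 : ℕ) = cnt η + 1
            then ((n : ℝ) - (cnt η : ℝ)) * cT (η none) else 0) := by
      have hterm : ∀ i ∈ Finset.univ.filter (fun j : Fin n => ¬ η (some j) = true),
          (if Phi (Function.update η (some i) (!η (some i))) = s then (1 : ℝ) else 0)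
            * voterRate (starQ n) η (some i)
          = (if s.1 = η none ∧ (s.2 : ℕ) = cnt η + 1 then (1 : ℝ) else 0) * cT (η none) := by
        intro i hi
        have hi' : η (some i) = false :=
          Bool.not_eq_true _ ▸ (Finset.mem_filter.mp hi).2
        rw [rate_some_cT η i hi']
        congr 1
        exact if_congr (Phi_flip_false_eq η i hi' s) rfl rfl
      rw [Finset.sum_congr rfl hterm, Finset.sum_const, nsmul_eq_mul, card_not_cnt,
        Nat.cast_sub (cnt_le η)]
      show ((n : ℝ) - (cnt η : ℝ)) * ((if s.1 = η none ∧ (s.2 : ℕ) = cnt η + 1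
        then (1 : ℝ) else 0) * cT (η none)) = _
      by_cases h : s.1 = η none ∧ (s.2 : ℕ) = cnt η + 1
      · rw [if_pos h, if_pos h]; ring
      · rw [if_neg h, if_neg h]; ring
    rw [h1, h2]
  rw [hcen, hleaf]
  have hdiag : (if Phi η = s then (1 : ℝ) else 0) * sigR n (η none) (cnt η)
      = (if s = (η none, (Phi η).2) then sigR n (η none) (cnt η) else 0) := by
    have hPhi : Phi η = (η none, (Phi η).2) := rfl
    by_cases h : s = (η none, (Phi η).2)
    · rw [if_pos (by rw [hPhi, ← h]), if_pos h, one_mul]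
    · rw [if_neg (fun hh => h (by rw [← hh, hPhi])), if_neg h, zero_mul]
  rw [hdiag]
  unfold Faux
  rw [hval]
  ring

lemma lump_matrix (hn : 0 < n) :
    voterGen (starQ n) * (Matrix.of fun (ξ : Option (Fin n) → Bool) (u : Bool × Fin (n + 1)) =>
        if Phi ξ = u then (1 : ℝ) else 0)
      = (Matrix.of fun (ξ : Option (Fin n) → Bool) (u : Bool × Fin (n + 1)) =>
        if Phi ξ = u then (1 : ℝ) else 0) * reducedGen n := by
  ext η s
  rw [Matrix.mul_apply, Matrix.mul_apply]
  have hL : ∑ u, (Matrix.of fun (ξ : Option (Fin n) → Bool) (u : Bool × Fin (n + 1)) =>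
      if Phi ξ = u then (1 : ℝ) else 0) η u * reducedGen n u s = reducedGen n (Phi η) s := by
    have : ∀ u, (Matrix.of fun (ξ : Option (Fin n) → Bool) (u : Bool × Fin (n + 1)) =>
        if Phi ξ = u then (1 : ℝ) else 0) η u * reducedGen n u s
        = if u = Phi η then reducedGen n u s else 0 := by
      intro u
      simp only [Matrix.of_apply]
      by_cases h : Phi η = u
      · rw [if_pos h, if_pos h.symm, one_mul]
      · rw [if_neg h, if_neg (fun hh => h hh.symm), zero_mul]
    rw [Finset.sum_congr rfl (fun u _ => this u)]
    rw [Finset.sum_ite_eq' Finset.univ (Phi η) (fun u => reducedGen n u s)]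
    rw [if_pos (Finset.mem_univ _)]
  rw [hL]
  have hPhi : Phi η = (η none, (Phi η).2) := rfl
  rw [hPhi, reduced_eq_Faux]
  simp only [Matrix.of_apply]
  exact lump_lhs η s

end CPS


namespace CPS
variable {n : ℕ}

lemma comp_equiv_inj (e : Option (Fin n) ≃ Option (Fin n))
    (f g : Option (Fin n) → Bool) : f ∘ e = g ∘ e ↔ f = g := by
  constructor
  · intro h
    funext z
    have := congrFun h (e.symm z)
    simpa using this
  · intro h; rw [h]

lemma starQ_perm (σ : Equiv.Perm (Fin n)) (a b : Option (Fin n)) :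
    starQ n (Equiv.optionCongr σ a) (Equiv.optionCongr σ b) = starQ n a b := by
  cases a <;> cases b <;> rfl

lemma rate_perm (σ : Equiv.Perm (Fin n)) (η : Option (Fin n) → Bool) (x : Option (Fin n)) :
    voterRate (starQ n) (η ∘ Equiv.optionCongr σ) x
      = voterRate (starQ n) η (Equiv.optionCongr σ x) := by
  unfold voterRate
  congr 1
  rw [Finset.sum_filter, Finset.sum_filter]
  apply Fintype.sum_equiv (Equiv.optionCongr σ)
  intro y
  have hne : (Equiv.optionCongr σ y ≠ Equiv.optionCongr σ x) ↔ (y ≠ x) := by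
    constructor
    · intro h hxy; exact h (by rw [hxy])
    · intro h hxy; exact h ((Equiv.optionCongr σ).injective hxy)
  by_cases hy : y = x
  · rw [if_neg (by simpa using hy), if_neg (fun h => (hne.mp h) hy)]
  · rw [if_pos hy, if_pos (hne.mpr hy), starQ_perm]
    rfl

lemma gen_perm (σ : Equiv.Perm (Fin n)) (η ξ : Option (Fin n) → Bool) :
    voterGen (starQ n) (η ∘ Equiv.optionCongr σ) (ξ ∘ Equiv.optionCongr σ)
      = voterGen (starQ n) η ξ := by
  unfold voterGen genOfRate
  congr 1
  · apply Fintype.sum_equiv (Equiv.optionCongr σ)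
    intro x
    have hupd : Function.update η (Equiv.optionCongr σ x) (!η (Equiv.optionCongr σ x))
        ∘ Equiv.optionCongr σ
        = Function.update (η ∘ Equiv.optionCongr σ) x (!(η ∘ Equiv.optionCongr σ) x) := by
      rw [Function.update_comp_equiv]
      simp only [Equiv.symm_apply_apply, Function.comp_apply]
    have hcond : (ξ ∘ Equiv.optionCongr σ
          = Function.update (η ∘ Equiv.optionCongr σ) x (!(η ∘ Equiv.optionCongr σ) x))
        ↔ (ξ = Function.update η (Equiv.optionCongr σ x) (!η (Equiv.optionCongr σ x))) := by
      rw [← hupd, comp_equiv_inj]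
    rw [if_congr hcond rfl rfl]
    by_cases h : ξ = Function.update η (Equiv.optionCongr σ x) (!η (Equiv.optionCongr σ x))
    · rw [if_pos h, if_pos h, rate_perm]
    · rw [if_neg h, if_neg h]
  · have hcond : (ξ ∘ Equiv.optionCongr σ = η ∘ Equiv.optionCongr σ) ↔ (ξ = η) :=
      comp_equiv_inj _ ξ η
    rw [if_congr hcond rfl rfl]
    by_cases h : ξ = η
    · rw [if_pos h, if_pos h]
      apply Fintype.sum_equiv (Equiv.optionCongr σ)
      intro x
      exact rate_perm σ η x
    · rw [if_neg h, if_neg h]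

lemma gen_perm' (σ : Equiv.Perm (Fin n)) (η ξ : Option (Fin n) → Bool) :
    voterGen (starQ n) (η ∘ Equiv.optionCongr σ) ξ
      = voterGen (starQ n) η (ξ ∘ (Equiv.optionCongr σ).symm) := by
  have := gen_perm σ η (ξ ∘ (Equiv.optionCongr σ).symm)
  rw [← this]
  congr 1
  funext z
  simp only [Function.comp_apply, Equiv.symm_apply_apply]

/-- the permutation matrix of precomposition with `optionCongr σ` -/
noncomputable def permMat (σ : Equiv.Perm (Fin n)) :
    Matrix (Option (Fin n) → Bool) (Option (Fin n) → Bool) ℝ :=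
  Matrix.of fun η ξ => if ξ = η ∘ Equiv.optionCongr σ then 1 else 0

lemma gen_permMat_comm (σ : Equiv.Perm (Fin n)) :
    voterGen (starQ n) * permMat σ = permMat σ * voterGen (starQ n) := by
  ext η ζ
  rw [Matrix.mul_apply, Matrix.mul_apply]
  have hL : ∑ ξ, voterGen (starQ n) η ξ * permMat σ ξ ζ
      = voterGen (starQ n) η (ζ ∘ (Equiv.optionCongr σ).symm) := by
    have hterm : ∀ ξ, voterGen (starQ n) η ξ * permMat σ ξ ζ
        = if ξ = ζ ∘ (Equiv.optionCongr σ).symm then voterGen (starQ n) η ξ else 0 := by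
      intro ξ
      unfold permMat
      simp only [Matrix.of_apply]
      have hiff : (ζ = ξ ∘ Equiv.optionCongr σ) ↔ (ξ = ζ ∘ (Equiv.optionCongr σ).symm) := by
        constructor
        · intro h; funext z; rw [h]; simp
        · intro h; funext z; rw [h]; simp only [Function.comp_apply, Equiv.symm_apply_apply]
      by_cases h : ξ = ζ ∘ (Equiv.optionCongr σ).symm
      · rw [if_pos (hiff.mpr h), if_pos h, mul_one]
      · rw [if_neg (fun hh => h (hiff.mp hh)), if_neg h, mul_zero]
    rw [Finset.sum_congr rfl (fun ξ _ => hterm ξ),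
      Finset.sum_ite_eq' Finset.univ _ (fun ξ => voterGen (starQ n) η ξ),
      if_pos (Finset.mem_univ _)]
  have hR : ∑ ξ, permMat σ η ξ * voterGen (starQ n) ξ ζ
      = voterGen (starQ n) (η ∘ Equiv.optionCongr σ) ζ := by
    have hterm : ∀ ξ, permMat σ η ξ * voterGen (starQ n) ξ ζ
        = if ξ = η ∘ Equiv.optionCongr σ then voterGen (starQ n) ξ ζ else 0 := by
      intro ξ
      unfold permMat
      simp only [Matrix.of_apply]
      by_cases h : ξ = η ∘ Equiv.optionCongr σ
      · rw [if_pos h, if_pos h, one_mul]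
      · rw [if_neg h, if_neg h, zero_mul]
    rw [Finset.sum_congr rfl (fun ξ _ => hterm ξ),
      Finset.sum_ite_eq' Finset.univ _ (fun ξ => voterGen (starQ n) ξ ζ),
      if_pos (Finset.mem_univ _)]
  rw [hL, hR, gen_perm']

lemma voterP_perm (t : ℝ) (σ : Equiv.Perm (Fin n)) (ξ : Option (Fin n) → Bool) :
    voterP (starQ n) t (fun _ => true) (ξ ∘ Equiv.optionCongr σ)
      = voterP (starQ n) t (fun _ => true) ξ := by
  have hcomm : (t • voterGen (starQ n)) * permMat σ
      = permMat σ * (t • voterGen (starQ n)) := by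
    rw [Matrix.smul_mul, Matrix.mul_smul, gen_permMat_comm]
  have hexp := exp_intertwine (t • voterGen (starQ n)) (t • voterGen (starQ n))
    (permMat σ) hcomm
  have h1 := congrFun (congrFun hexp (fun _ => true)) (ξ ∘ Equiv.optionCongr σ)
  have hLft : (NormedSpace.exp (t • voterGen (starQ n)) * permMat σ)
      (fun _ => true) (ξ ∘ Equiv.optionCongr σ)
      = voterP (starQ n) t (fun _ => true) ξ := by
    rw [Matrix.mul_apply]
    have hterm : ∀ ζ, NormedSpace.exp (t • voterGen (starQ n)) (fun _ => true) ζ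
        * permMat σ ζ (ξ ∘ Equiv.optionCongr σ)
        = if ζ = ξ then NormedSpace.exp (t • voterGen (starQ n)) (fun _ => true) ζ else 0 := by
      intro ζ
      unfold permMat
      simp only [Matrix.of_apply]
      have hiff : (ξ ∘ Equiv.optionCongr σ = ζ ∘ Equiv.optionCongr σ) ↔ (ζ = ξ) := by
        rw [comp_equiv_inj]
        exact eq_comm
      by_cases h : ζ = ξ
      · rw [if_pos (hiff.mpr h), if_pos h, mul_one]
      · rw [if_neg (fun hh => h (hiff.mp hh)), if_neg h, mul_zero]
    rw [Finset.sum_congr rfl (fun ζ _ => hterm ζ),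
      Finset.sum_ite_eq' Finset.univ _
        (fun ζ => NormedSpace.exp (t • voterGen (starQ n)) (fun _ => true) ζ),
      if_pos (Finset.mem_univ _)]
    rfl
  have hRgt : (permMat σ * NormedSpace.exp (t • voterGen (starQ n)))
      (fun _ => true) (ξ ∘ Equiv.optionCongr σ)
      = voterP (starQ n) t (fun _ => true) (ξ ∘ Equiv.optionCongr σ) := by
    rw [Matrix.mul_apply]
    have hterm : ∀ ζ, permMat σ (fun _ => true) ζ
        * NormedSpace.exp (t • voterGen (starQ n)) ζ (ξ ∘ Equiv.optionCongr σ)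
        = if ζ = (fun _ => true) then
            NormedSpace.exp (t • voterGen (starQ n)) ζ (ξ ∘ Equiv.optionCongr σ) else 0 := by
      intro ζ
      unfold permMat
      simp only [Matrix.of_apply]
      have hone : ((fun (_ : Option (Fin n)) => true) ∘ Equiv.optionCongr σ)
          = (fun _ => true) := rfl
      rw [hone]
      by_cases h : ζ = (fun _ => true)
      · rw [if_pos h, if_pos h, one_mul]
      · rw [if_neg h, if_neg h, zero_mul]
    rw [Finset.sum_congr rfl (fun ζ _ => hterm ζ),
      Finset.sum_ite_eq' Finset.univ _
        (fun ζ => NormedSpace.exp (t • voterGen (starQ n)) ζ (ξ ∘ Equiv.optionCongr σ)),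
      if_pos (Finset.mem_univ _)]
    rfl
  rw [hLft, hRgt] at h1
  exact h1.symm

lemma exists_perm (ξ ξ' : Option (Fin n) → Bool) (h : Phi ξ = Phi ξ') :
    ∃ σ : Equiv.Perm (Fin n), ∀ x, ξ' x = ξ (Equiv.optionCongr σ x) := by
  classical
  set A := Finset.univ.filter (fun i : Fin n => ξ' (some i) = true) with hA
  set B := Finset.univ.filter (fun i : Fin n => ξ (some i) = true) with hB
  have hcard : A.card = B.card := by
    have h2 := congrArg Fin.val (Prod.ext_iff.mp h).2
    exact h2.symm
  have hcardc : Aᶜ.card = Bᶜ.card := by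
    rw [Finset.card_compl, Finset.card_compl, hcard]
  let e1 : {i // i ∈ A} ≃ {i // i ∈ B} := A.equivOfCardEq (t := B) hcard
  let e2 : {i // i ∈ Aᶜ} ≃ {i // i ∈ Bᶜ} := Aᶜ.equivOfCardEq (t := Bᶜ) hcardc
  let e2' : {i // ¬ i ∈ A} ≃ {i // ¬ i ∈ B} :=
    ((Equiv.subtypeEquivRight (fun i => (Finset.mem_compl (s := A)).symm)).trans e2).trans
      (Equiv.subtypeEquivRight (fun i => Finset.mem_compl (s := B)))
  let σ : Equiv.Perm (Fin n) :=
    ((Equiv.sumCompl (fun i => i ∈ A)).symm.trans (e1.sumCongr e2')).trans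
      (Equiv.sumCompl (fun i => i ∈ B))
  have hmem : ∀ i : Fin n, (i ∈ A → σ i ∈ B) ∧ (i ∉ A → σ i ∉ B) := by
    intro i
    constructor
    · intro hi
      show (Equiv.sumCompl (fun i => i ∈ B))
        ((e1.sumCongr e2') ((Equiv.sumCompl (fun i => i ∈ A)).symm i)) ∈ B
      rw [Equiv.sumCompl_symm_apply_of_pos hi]
      simp only [Equiv.sumCongr_apply, Sum.map_inl, Equiv.sumCompl_apply_inl]
      exact (e1 ⟨i, hi⟩).2
    · intro hi
      show (Equiv.sumCompl (fun i => i ∈ B))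
        ((e1.sumCongr e2') ((Equiv.sumCompl (fun i => i ∈ A)).symm i)) ∉ B
      rw [Equiv.sumCompl_symm_apply_of_neg hi]
      simp only [Equiv.sumCongr_apply, Sum.map_inr, Equiv.sumCompl_apply_inr]
      exact (e2' ⟨i, hi⟩).2
  refine ⟨σ, ?_⟩
  intro x
  cases x with
  | none =>
    show ξ' none = ξ none
    exact ((Prod.ext_iff.mp h).1).symm
  | some i =>
    show ξ' (some i) = ξ (some (σ i))
    cases hxi : ξ' (some i) with
    | true =>
      have hiA : i ∈ A := by rw [hA]; simp [hxi]
      have := (hmem i).1 hiA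
      rw [hB] at this
      exact (Finset.mem_filter.mp this).2.symm
    | false =>
      have hiA : i ∉ A := by rw [hA]; simp [hxi]
      have hnB := (hmem i).2 hiA
      rw [hB] at hnB
      have : ¬ ξ (some (σ i)) = true := fun hc => hnB (by simp [hc])
      cases hxs : ξ (some (σ i)) with
      | true => exact absurd hxs this
      | false => rfl

end CPS


namespace CPS
variable {n : ℕ}

lemma reducedRate_nonneg (hn : 0 < n) (s u : Bool × Fin (n + 1)) :
    0 ≤ reducedRate n s u := by
  unfold reducedRate
  have h2 : ((s.2 : ℕ) : ℝ) ≤ n := by exact_mod_cast Fin.is_le s.2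
  have h0 : (0 : ℝ) ≤ ((s.2 : ℕ) : ℝ) := Nat.cast_nonneg _
  have hn' : (0 : ℝ) < n := by exact_mod_cast hn
  have hA : (0 : ℝ) ≤ ((n : ℝ) - ((s.2 : ℕ) : ℝ)) / n := div_nonneg (by linarith) hn'.le
  have hB : (0 : ℝ) ≤ ((s.2 : ℕ) : ℝ) / n := div_nonneg h0 hn'.le
  split_ifs <;> linarith

lemma reducedRate_self (s : Bool × Fin (n + 1)) : reducedRate n s s = 0 := by
  unfold reducedRate
  rw [if_pos rfl, if_neg (by omega), if_neg (by omega)]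

lemma reducedGen_row_sum (s : Bool × Fin (n + 1)) : ∑ u, reducedGen n s u = 0 := by
  have hterm : ∀ u, reducedGen n s u
      = reducedRate n s u + (if u = s then -∑ v, reducedRate n s v else 0) := by
    intro u
    unfold reducedGen
    by_cases h : s = u
    · rw [if_pos h, if_pos h.symm, ← h, reducedRate_self]
      ring
    · rw [if_neg h, if_neg (fun hh => h hh.symm)]
      ring
  rw [Finset.sum_congr rfl (fun u _ => hterm u), Finset.sum_add_distrib,
    Finset.sum_ite_eq' Finset.univ s (fun _ => -∑ v, reducedRate n s v),
    if_pos (Finset.mem_univ _)]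
  ring

lemma reducedGen_offdiag_nonneg (hn : 0 < n) (s u : Bool × Fin (n + 1)) (h : s ≠ u) :
    0 ≤ reducedGen n s u := by
  unfold reducedGen
  rw [if_neg h]
  exact reducedRate_nonneg hn s u

lemma red_step_flip (hn : 0 < n) (b : Bool) (k : Fin (n + 1)) :
    ((b, k) : Bool × Fin (n + 1)) ≠ (!b, k) ∧ 0 < reducedGen n (b, k) (!b, k) := by
  have hne : ((b, k) : Bool × Fin (n + 1)) ≠ (!b, k) := by
    intro h
    have := (Prod.ext_iff.mp h).1
    cases b <;> exact Bool.noConfusion this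
  refine ⟨hne, ?_⟩
  unfold reducedGen
  rw [if_neg hne]
  unfold reducedRate
  have hb : ¬ (b = !b) := by cases b <;> simp
  rw [if_neg hb, if_pos rfl]
  have h2 : ((k : ℕ) : ℝ) ≤ n := by exact_mod_cast Fin.is_le k
  have h0 : (0 : ℝ) ≤ ((k : ℕ) : ℝ) := Nat.cast_nonneg _
  have hn' : (0 : ℝ) < n := by exact_mod_cast hn
  have hA : (0 : ℝ) ≤ ((n : ℝ) - ((k : ℕ) : ℝ)) / n := div_nonneg (by linarith) hn'.le
  have hB : (0 : ℝ) ≤ ((k : ℕ) : ℝ) / n := div_nonneg h0 hn'.le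
  split_ifs <;> linarith

lemma red_step_up (b : Bool) (k : Fin (n + 1)) (hk : (k : ℕ) < n) :
    ((b, k) : Bool × Fin (n + 1)) ≠ (b, ⟨(k : ℕ) + 1, by omega⟩)
      ∧ 0 < reducedGen n (b, k) (b, ⟨(k : ℕ) + 1, by omega⟩) := by
  have hne : ((b, k) : Bool × Fin (n + 1)) ≠ (b, ⟨(k : ℕ) + 1, by omega⟩) := by
    intro h
    have := congrArg Fin.val (Prod.ext_iff.mp h).2
    simp at this
  refine ⟨hne, ?_⟩
  unfold reducedGen
  rw [if_neg hne]
  unfold reducedRate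
  rw [if_pos rfl]
  have hcond : ((⟨(k : ℕ) + 1, by omega⟩ : Fin (n + 1)) : ℕ) = (k : ℕ) + 1 := rfl
  rw [if_pos hcond]
  have h2 : ((k : ℕ) : ℝ) < n := by exact_mod_cast hk
  split_ifs <;> linarith

lemma red_step_down (b : Bool) (k : Fin (n + 1)) (hk : 0 < (k : ℕ)) :
    ((b, k) : Bool × Fin (n + 1)) ≠ (b, ⟨(k : ℕ) - 1, by omega⟩)
      ∧ 0 < reducedGen n (b, k) (b, ⟨(k : ℕ) - 1, by omega⟩) := by
  have hne : ((b, k) : Bool × Fin (n + 1)) ≠ (b, ⟨(k : ℕ) - 1, by omega⟩) := by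
    intro h
    have := congrArg Fin.val (Prod.ext_iff.mp h).2
    simp only at this
    omega
  refine ⟨hne, ?_⟩
  unfold reducedGen
  rw [if_neg hne]
  unfold reducedRate
  rw [if_pos rfl]
  have hc1 : ¬ (((⟨(k : ℕ) - 1, by omega⟩ : Fin (n + 1)) : ℕ) = (k : ℕ) + 1) := by
    simp only
    omega
  have hc2 : (k : ℕ) = ((⟨(k : ℕ) - 1, by omega⟩ : Fin (n + 1)) : ℕ) + 1 := by
    simp only
    omega
  rw [if_neg hc1, if_pos hc2]
  have h0 : (0 : ℝ) < ((k : ℕ) : ℝ) := by exact_mod_cast hk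
  split_ifs <;> linarith

abbrev redRel (n : ℕ) : (Bool × Fin (n + 1)) → (Bool × Fin (n + 1)) → Prop :=
  fun a b => a ≠ b ∧ 0 < reducedGen n a b

lemma red_reach_zero (hn : 0 < n) (b : Bool) (k : Fin (n + 1)) :
    Relation.ReflTransGen (redRel n) (b, k) (b, ⟨0, by omega⟩) := by
  have key : ∀ m : ℕ, ∀ k : Fin (n + 1), (k : ℕ) = m →
      Relation.ReflTransGen (redRel n) (b, k) (b, ⟨0, by omega⟩) := by
    intro m
    induction m with
    | zero =>
      intro k hk
      have : k = ⟨0, by omega⟩ := Fin.ext hk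
      rw [this]
    | succ m ih =>
      intro k hk
      have hkpos : 0 < (k : ℕ) := by omega
      have hstep := red_step_down b k hkpos
      have hval : ((⟨(k : ℕ) - 1, by omega⟩ : Fin (n + 1)) : ℕ) = m := by
        simp only
        omega
      exact Relation.ReflTransGen.head hstep (ih _ hval)
  exact key (k : ℕ) k rfl

lemma red_reach_from_zero (hn : 0 < n) (b : Bool) (k : Fin (n + 1)) :
    Relation.ReflTransGen (redRel n) (b, ⟨0, by omega⟩) (b, k) := by
  have key : ∀ m : ℕ, ∀ hm : m ≤ n,
      Relation.ReflTransGen (redRel n) (b, ⟨0, by omega⟩) (b, ⟨m, by omega⟩) := by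
    intro m
    induction m with
    | zero => intro _; exact Relation.ReflTransGen.refl
    | succ m ih =>
      intro hm
      have hprev := ih (by omega)
      have hstep := red_step_up b ⟨m, by omega⟩ (show m < n by omega)
      exact Relation.ReflTransGen.tail hprev hstep
  have := key (k : ℕ) (Fin.is_le k)
  have hk : (⟨(k : ℕ), by omega⟩ : Fin (n + 1)) = k := Fin.ext rfl
  rwa [hk] at this

lemma red_conn (hn : 0 < n) (s u : Bool × Fin (n + 1)) :
    Relation.ReflTransGen (redRel n) s u := by
  obtain ⟨b, k⟩ := s
  obtain ⟨c, m⟩ := u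
  have h1 := red_reach_zero hn b k
  have h3 := red_reach_from_zero hn c m
  have h2 : Relation.ReflTransGen (redRel n) (b, ⟨0, by omega⟩) (c, ⟨0, by omega⟩) := by
    by_cases hbc : b = c
    · rw [hbc]
    · have hc : c = !b := by cases b <;> cases c <;> first | rfl | (exact absurd rfl hbc)
      rw [hc]
      exact Relation.ReflTransGen.single (red_step_flip hn b _)
  exact (h1.trans h2).trans h3

lemma starQ_nonneg (x y : Option (Fin n)) : 0 ≤ starQ n x y := by
  cases x <;> cases y <;> unfold starQ <;> norm_num

lemma voterRate_pos (η : Option (Fin n) → Bool) (x : Option (Fin n)) :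
    0 < voterRate (starQ n) η x := by
  unfold voterRate
  have : (0 : ℝ) ≤ ∑ y ∈ Finset.univ.filter (fun y => y ≠ x),
      starQ n x y * (if η y ≠ η x then 1 else 0) := by
    apply Finset.sum_nonneg
    intro y _
    apply mul_nonneg (starQ_nonneg x y)
    split <;> norm_num
  linarith

lemma voter_conn (η ξ : Option (Fin n) → Bool) :
    Relation.ReflTransGen (fun a b => a ≠ b ∧ 0 < voterGen (starQ n) a b) η ξ := by
  apply hypercube_conn
  intro ζ x
  exact gen_flip_pos _ (fun ζ' x' => (voterRate_pos ζ' x').le) ζ x (voterRate_pos ζ x)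

lemma voterGen_offdiag_nonneg (η ξ : Option (Fin n) → Bool) (h : η ≠ ξ) :
    0 ≤ voterGen (starQ n) η ξ :=
  gen_offdiag_nonneg _ (fun ζ x => (voterRate_pos ζ x).le) η ξ h

lemma mu_symm (μ : (Option (Fin n) → Bool) → ℝ) (hμ : IsStationaryNVM (starQ n) μ)
    (σ : Equiv.Perm (Fin n)) (η : Option (Fin n) → Bool) :
    μ (η ∘ Equiv.optionCongr σ) = μ η := by
  classical
  obtain ⟨hμ0, hμ1, hμ2⟩ := hμ
  set E : (Option (Fin n) → Bool) ≃ (Option (Fin n) → Bool) :=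
    Equiv.arrowCongr (Equiv.optionCongr σ).symm (Equiv.refl Bool) with hE
  have hEapp : ∀ ζ : Option (Fin n) → Bool, E ζ = ζ ∘ Equiv.optionCongr σ := by
    intro ζ
    funext x
    simp [hE, Equiv.arrowCongr]
  have hsum : ∑ ζ, μ (ζ ∘ Equiv.optionCongr σ) = 1 := by
    rw [← hμ1]
    apply Fintype.sum_equiv E
    intro ζ
    rw [hEapp]
  have hstat : ∀ ξ : Option (Fin n) → Bool,
      ∑ ζ, μ (ζ ∘ Equiv.optionCongr σ) * voterGen (starQ n) ζ ξ = 0 := by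
    intro ξ
    have hre : ∑ ζ, μ (ζ ∘ Equiv.optionCongr σ) * voterGen (starQ n) ζ ξ
        = ∑ ζ, μ ζ * voterGen (starQ n) ζ (ξ ∘ Equiv.optionCongr σ) := by
      apply Fintype.sum_equiv E
      intro ζ
      rw [hEapp]
      congr 1
      exact (gen_perm σ ζ ξ).symm
    rw [hre, hμ2 (ξ ∘ Equiv.optionCongr σ)]
  have huniq := stationary_unique (voterGen (starQ n))
    (fun x y h => voterGen_offdiag_nonneg x y h)
    (fun η' => gen_row_sum (voterRate (starQ n)) η')
    (fun η' ξ' => voter_conn η' ξ')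
    (fun ζ => μ (ζ ∘ Equiv.optionCongr σ)) μ hsum hμ1 hstat hμ2
  exact congrFun huniq η

end CPS


namespace CPS
variable {n : ℕ}

lemma card_filter_lt (m : ℕ) (hm : m ≤ n) :
    (Finset.univ.filter (fun i : Fin n => (i : ℕ) < m)).card = m := by
  have himg : Finset.univ.filter (fun i : Fin n => (i : ℕ) < m)
      = Finset.image (Fin.castLE hm) Finset.univ := by
    ext j
    simp only [Finset.mem_filter, Finset.mem_image, Finset.mem_univ, true_and]
    constructor
    · intro hj
      exact ⟨⟨(j : ℕ), hj⟩, Fin.ext rfl⟩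
    · rintro ⟨i, rfl⟩
      exact i.2
  rw [himg, Finset.card_image_of_injective _ (Fin.castLE_injective hm),
    Finset.card_univ, Fintype.card_fin]

def chi (s : Bool × Fin (n + 1)) : Option (Fin n) → Bool :=
  fun x => match x with
    | none => s.1
    | some i => decide ((i : ℕ) < (s.2 : ℕ))

lemma Phi_chi (s : Bool × Fin (n + 1)) : Phi (chi s) = s := by
  apply Prod.ext_iff.mpr
  refine ⟨rfl, Fin.ext ?_⟩
  show cnt (chi s) = (s.2 : ℕ)
  unfold cnt chi
  have hset : (Finset.univ.filter (fun i : Fin n => decide ((i : ℕ) < (s.2 : ℕ)) = true))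
      = Finset.univ.filter (fun i : Fin n => (i : ℕ) < (s.2 : ℕ)) := by
    apply Finset.filter_congr
    intro i _
    simp
  rw [hset]
  exact card_filter_lt _ (by have := Fin.is_le s.2; omega)

lemma Phi_one : Phi (fun _ => true) = ((true, Fin.last n) : Bool × Fin (n + 1)) := by
  apply Prod.ext_iff.mpr
  refine ⟨rfl, Fin.ext ?_⟩
  show cnt (fun _ => true) = n
  unfold cnt
  simp

lemma lump_pointwise (ξ : Option (Fin n) → Bool) (u : Bool × Fin (n + 1)) :
    reducedGen n (Phi ξ) u
      = ∑ ζ, voterGen (starQ n) ξ ζ * (if Phi ζ = u then (1 : ℝ) else 0) := by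
  have hPhi : Phi ξ = (ξ none, (Phi ξ).2) := rfl
  rw [hPhi, reduced_eq_Faux]
  exact (lump_lhs ξ u).symm

lemma lumped_eq_pi (hn : 0 < n) (μ : (Option (Fin n) → Bool) → ℝ)
    (hμ : IsStationaryNVM (starQ n) μ) (π : Bool × Fin (n + 1) → ℝ)
    (hπ : IsStationaryReduced n π) :
    (fun s => ∑ ξ ∈ Finset.univ.filter (fun ξ => Phi ξ = s), μ ξ) = π := by
  classical
  obtain ⟨hμ0, hμ1, hμ2⟩ := hμ
  obtain ⟨hπ0, hπ1, hπ2⟩ := hπ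
  apply stationary_unique (reducedGen n)
    (fun s u h => reducedGen_offdiag_nonneg hn s u h)
    (fun s => reducedGen_row_sum s)
    (fun s u => red_conn hn s u)
  · rw [Finset.sum_fiberwise_of_maps_to (fun ξ _ => Finset.mem_univ (Phi ξ)) μ]
    exact hμ1
  · exact hπ1
  · intro u
    have h1 : ∑ s, (∑ ξ ∈ Finset.univ.filter (fun ξ => Phi ξ = s), μ ξ) * reducedGen n s u
        = ∑ s, ∑ ξ ∈ Finset.univ.filter (fun ξ => Phi ξ = s), μ ξ * reducedGen n (Phi ξ) u := by
      apply Finset.sum_congr rfl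
      intro s _
      rw [Finset.sum_mul]
      apply Finset.sum_congr rfl
      intro ξ hξ
      rw [(Finset.mem_filter.mp hξ).2]
    rw [h1, Finset.sum_fiberwise_of_maps_to (fun ξ _ => Finset.mem_univ (Phi ξ))]
    have h2 : ∀ ξ, μ ξ * reducedGen n (Phi ξ) u
        = ∑ ζ, (μ ξ * voterGen (starQ n) ξ ζ) * (if Phi ζ = u then (1 : ℝ) else 0) := by
      intro ξ
      rw [lump_pointwise, Finset.mul_sum]
      apply Finset.sum_congr rfl
      intro ζ _
      ring
    rw [Finset.sum_congr rfl (fun ξ _ => h2 ξ), Finset.sum_comm]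
    have h3 : ∀ ζ, ∑ ξ, (μ ξ * voterGen (starQ n) ξ ζ) * (if Phi ζ = u then (1 : ℝ) else 0)
        = (∑ ξ, μ ξ * voterGen (starQ n) ξ ζ) * (if Phi ζ = u then (1 : ℝ) else 0) := by
      intro ζ
      rw [Finset.sum_mul]
    rw [Finset.sum_congr rfl (fun ζ _ => h3 ζ)]
    have h4 : ∀ ζ : Option (Fin n) → Bool,
        (∑ ξ, μ ξ * voterGen (starQ n) ξ ζ) * (if Phi ζ = u then (1 : ℝ) else 0) = 0 := by
      intro ζ
      rw [hμ2 ζ, zero_mul]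
    rw [Finset.sum_congr rfl (fun ζ _ => h4 ζ), Finset.sum_const_zero]
  · exact hπ2

lemma reducedP_row (hn : 0 < n) (t : ℝ) (s : Bool × Fin (n + 1)) :
    reducedP n t (Phi (fun _ => true)) s
      = ∑ ξ ∈ Finset.univ.filter (fun ξ => Phi ξ = s),
          voterP (starQ n) t (fun _ => true) ξ := by
  classical
  set L : Matrix (Option (Fin n) → Bool) (Bool × Fin (n + 1)) ℝ :=
    Matrix.of fun ξ u => if Phi ξ = u then (1 : ℝ) else 0 with hLdef
  have hint : (t • voterGen (starQ n)) * L = L * (t • reducedGen n) := by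
    rw [Matrix.smul_mul, Matrix.mul_smul, lump_matrix hn]
  have hexp := exp_intertwine _ _ _ hint
  have h1 := congrFun (congrFun hexp (fun _ => true)) s
  have hLft : (NormedSpace.exp (t • voterGen (starQ n)) * L) (fun _ => true) s
      = ∑ ξ ∈ Finset.univ.filter (fun ξ => Phi ξ = s),
          voterP (starQ n) t (fun _ => true) ξ := by
    rw [Matrix.mul_apply, Finset.sum_filter]
    apply Finset.sum_congr rfl
    intro ξ _
    rw [hLdef]
    simp only [Matrix.of_apply]
    by_cases h : Phi ξ = s
    · rw [if_pos h, if_pos h, mul_one]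
      rfl
    · rw [if_neg h, if_neg h, mul_zero]
  have hRgt : (L * NormedSpace.exp (t • reducedGen n)) (fun _ => true) s
      = reducedP n t (Phi (fun _ => true)) s := by
    rw [Matrix.mul_apply]
    have hterm : ∀ u, L (fun _ => true) u * NormedSpace.exp (t • reducedGen n) u s
        = if u = Phi (fun _ => true)
            then NormedSpace.exp (t • reducedGen n) u s else 0 := by
      intro u
      rw [hLdef]
      simp only [Matrix.of_apply]
      by_cases h : Phi (fun (_ : Option (Fin n)) => true) = u
      · rw [if_pos h, if_pos h.symm, one_mul]
      · rw [if_neg h, if_neg (fun hh => h hh.symm), zero_mul]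
    rw [Finset.sum_congr rfl (fun u _ => hterm u),
      Finset.sum_ite_eq' Finset.univ _ (fun u => NormedSpace.exp (t • reducedGen n) u s),
      if_pos (Finset.mem_univ _)]
    rfl
  rw [hLft, hRgt] at h1
  exact h1.symm

lemma P_const (t : ℝ) (ξ ξ' : Option (Fin n) → Bool) (h : Phi ξ = Phi ξ') :
    voterP (starQ n) t (fun _ => true) ξ' = voterP (starQ n) t (fun _ => true) ξ := by
  obtain ⟨σ, hσ⟩ := exists_perm ξ ξ' h
  have hc : ξ' = ξ ∘ Equiv.optionCongr σ := funext hσ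
  rw [hc, voterP_perm]

lemma mu_const (μ : (Option (Fin n) → Bool) → ℝ) (hμ : IsStationaryNVM (starQ n) μ)
    (ξ ξ' : Option (Fin n) → Bool) (h : Phi ξ = Phi ξ') : μ ξ' = μ ξ := by
  obtain ⟨σ, hσ⟩ := exists_perm ξ ξ' h
  have hc : ξ' = ξ ∘ Equiv.optionCongr σ := funext hσ
  rw [hc, mu_symm μ hμ σ]

end CPS

/-- **Projection identity in the proof of Theorem 2(ii) of Cox–Peres–Steif.** The total
variation distance to stationarity of the noisy voter model on the `n`-star started from all
ones equals that of the reduced chain (center state, number of leaves in state 1) started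
from `(1, n)`. -/
theorem stmt_15 (n : ℕ) (hn : 1 ≤ n) (t : ℝ) (ht : 0 ≤ t)
    (μinf : (Option (Fin n) → Bool) → ℝ) (hμ : IsStationaryNVM (starQ n) μinf)
    (π : Bool × Fin (n + 1) → ℝ) (hπ : IsStationaryReduced n π) :
    tvDist (voterP (starQ n) t (fun _ => true)) μinf
      = tvDist (reducedP n t (true, Fin.last n)) π := by
  classical
  have hn0 : 0 < n := hn
  have hν := CPS.lumped_eq_pi hn0 μinf hμ π hπ
  unfold tvDist
  congr 1
  rw [← Finset.sum_fiberwise_of_maps_to (g := CPS.Phi)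
    (fun ξ _ => Finset.mem_univ (CPS.Phi ξ))
    (fun ξ => |voterP (starQ n) t (fun _ => true) ξ - μinf ξ|)]
  apply Finset.sum_congr rfl
  intro s _
  have hrep : CPS.Phi (CPS.chi s) = s := CPS.Phi_chi s
  have hcon : ∀ ξ ∈ Finset.univ.filter (fun ξ => CPS.Phi ξ = s),
      |voterP (starQ n) t (fun _ => true) ξ - μinf ξ|
      = |voterP (starQ n) t (fun _ => true) (CPS.chi s) - μinf (CPS.chi s)| := by
    intro ξ hξ
    have hphi : CPS.Phi (CPS.chi s) = CPS.Phi ξ := by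
      rw [hrep, (Finset.mem_filter.mp hξ).2]
    rw [CPS.P_const t (CPS.chi s) ξ hphi, CPS.mu_const μinf hμ (CPS.chi s) ξ hphi]
  rw [Finset.sum_congr rfl hcon, Finset.sum_const, nsmul_eq_mul]
  have hPs : reducedP n t (true, Fin.last n) s
      = ((Finset.univ.filter (fun ξ => CPS.Phi ξ = s)).card : ℝ)
        * voterP (starQ n) t (fun _ => true) (CPS.chi s) := by
    rw [← CPS.Phi_one (n := n), CPS.reducedP_row hn0 t s]
    have hcon2 : ∀ ξ ∈ Finset.univ.filter (fun ξ => CPS.Phi ξ = s),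
        voterP (starQ n) t (fun _ => true) ξ
        = voterP (starQ n) t (fun _ => true) (CPS.chi s) := by
      intro ξ hξ
      have hphi : CPS.Phi (CPS.chi s) = CPS.Phi ξ := by
        rw [hrep, (Finset.mem_filter.mp hξ).2]
      exact CPS.P_const t (CPS.chi s) ξ hphi
    rw [Finset.sum_congr rfl hcon2, Finset.sum_const, nsmul_eq_mul]
  have hπs : π s = ((Finset.univ.filter (fun ξ => CPS.Phi ξ = s)).card : ℝ) * μinf (CPS.chi s) := by
    rw [← hν]
    have hcon3 : ∀ ξ ∈ Finset.univ.filter (fun ξ => CPS.Phi ξ = s),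
        μinf ξ = μinf (CPS.chi s) := by
      intro ξ hξ
      have hphi : CPS.Phi (CPS.chi s) = CPS.Phi ξ := by
        rw [hrep, (Finset.mem_filter.mp hξ).2]
      exact CPS.mu_const μinf hμ (CPS.chi s) ξ hphi
    show ∑ ξ ∈ Finset.univ.filter (fun ξ => CPS.Phi ξ = s), μinf ξ = _
    rw [Finset.sum_congr rfl hcon3, Finset.sum_const, nsmul_eq_mul]
  rw [hPs, hπs]
  have hfac : ((Finset.univ.filter (fun ξ => CPS.Phi ξ = s)).card : ℝ)
        * voterP (starQ n) t (fun _ => true) (CPS.chi s)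
      - ((Finset.univ.filter (fun ξ => CPS.Phi ξ = s)).card : ℝ) * μinf (CPS.chi s)
      = ((Finset.univ.filter (fun ξ => CPS.Phi ξ = s)).card : ℝ)
        * (voterP (starQ n) t (fun _ => true) (CPS.chi s) - μinf (CPS.chi s)) := by
    ring
  rw [hfac, abs_mul, Nat.abs_cast]
end
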